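/- arXiv:0710.5309 — 5 statements merged into one kernel-verified Lean document; each statement's English description precedes it below -/
import Mathlib

section
/- Let E = [−2π, −π) ∪ [π, 2π) (the Shannon wavelet set) and let F be any dyadic wavelet set. If D_E^F = D_F^E modulo Lebesgue-null sets, then (E, F) is an interpolation pair, i.e. σ_E^F ∘ σ_E^F = id_ℝ almost everywhere. -/
open MeasureTheory Set
open scoped Real symmDiff

noncomputable section

/-- An a.e. (modulo Lebesgue-null sets) partition of the set `A` by the family `P`. -/
def IsAEPartition {ι : Type*} (P : ι → Set ℝ) (A : Set ℝ) : Prop :=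
  volume (A ∆ (⋃ i, P i)) = 0 ∧ ∀ i j : ι, i ≠ j → volume (P i ∩ P j) = 0

/-- `E ⊆ ℝ` is a dyadic wavelet set: its `2πℤ`-translates and its `2ℤ`-dilates each
partition `ℝ` modulo Lebesgue-null sets. -/
def IsDyadicWaveletSet (E : Set ℝ) : Prop :=
  MeasurableSet E ∧
  (∀ᵐ x : ℝ ∂volume, ∃! n : ℤ, x + 2 * Real.pi * n ∈ E) ∧
  (∀ᵐ x : ℝ ∂volume, ∃! k : ℤ, (2 : ℝ) ^ k * x ∈ E)

/-- `σ` is (a representative of) the interpolation map `σ_E^F` for wavelet sets `E, F`. -/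
def IsInterpolationMap (E F : Set ℝ) (σ : ℝ → ℝ) : Prop :=
  Measurable σ ∧ σ 0 = 0 ∧
  (∀ᵐ s : ℝ ∂volume, s ∈ E → σ s ∈ F ∧ ∃ n : ℤ, σ s - s = 2 * Real.pi * n) ∧
  (∀ n : ℤ, ∀ᵐ s : ℝ ∂volume, (2 : ℝ) ^ (-n) * s ∈ E →
    σ s = (2 : ℝ) ^ n * σ ((2 : ℝ) ^ (-n) * s))

/-- The `2π`-congruence domain of a map `σ`. -/
def CongruenceDomain (σ : ℝ → ℝ) : Set ℝ :=
  {s : ℝ | ∃ n : ℤ, σ s - s = 2 * Real.pi * n}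

/-- `A` is `2π`-translation congruent to `B`. -/
def TransCongruent (A B : Set ℝ) : Prop :=
  ∃ P : ℤ → Set ℝ, (∀ n, MeasurableSet (P n)) ∧ IsAEPartition P A ∧
    IsAEPartition (fun (n : ℤ) => (fun x => x + 2 * Real.pi * (n : ℝ)) '' P n) B

/-- `A` is `2`-dilation congruent to `B`. -/
def DilCongruent (A B : Set ℝ) : Prop :=
  ∃ P : ℤ → Set ℝ, (∀ n, MeasurableSet (P n)) ∧ IsAEPartition P A ∧
    IsAEPartition (fun (n : ℤ) => (fun x => (2 : ℝ) ^ n * x) '' P n) B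


namespace Stmt10Aux
open Real

def Esh : Set ℝ := Ico (-(2 * π)) (-π) ∪ Ico π (2 * π)

lemma esh_bounds {y : ℝ} (hy : y ∈ Esh) : π ≤ |y| ∧ |y| ≤ 2 * π := by
  have hπ := Real.pi_pos
  rcases hy with h | h
  · rcases h with ⟨h1, h2⟩
    rw [abs_of_neg (by linarith)]
    constructor <;> linarith
  · rcases h with ⟨h1, h2⟩
    rw [abs_of_pos (by linarith)]
    constructor <;> linarith

/-- translation uniqueness in the Shannon set -/
lemma esh_translate {x y : ℝ} (hx : x ∈ Esh) (hy : y ∈ Esh) (n : ℤ)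
    (h : y = x + 2 * π * n) : y = x := by
  have hπ := Real.pi_pos
  have key : n = 0 := by
    rcases hx with hx | hx <;> rcases hy with hy | hy <;>
      rcases hx with ⟨hx1, hx2⟩ <;> rcases hy with ⟨hy1, hy2⟩
    · have h1 : ((n : ℝ)) < 1 := by nlinarith
      have h2 : (-1 : ℝ) < n := by nlinarith
      have h1' : n < 1 := by exact_mod_cast h1
      have h2' : (-1:ℤ) < n := by exact_mod_cast h2
      omega
    · -- x negative interval, y positive: y - x ∈ (2π, 4π): n ∈ (1,2): impossible
      have h1 : (1 : ℝ) < n := by nlinarith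
      have h2 : ((n : ℝ)) < 2 := by nlinarith
      have h1' : (1 : ℤ) < n := by exact_mod_cast h1
      have h2' : n < 2 := by exact_mod_cast h2
      omega
    · have h1 : ((n : ℝ)) < -1 := by nlinarith
      have h2 : (-2 : ℝ) < n := by nlinarith
      have h1' : n < -1 := by exact_mod_cast h1
      have h2' : (-2:ℤ) < n := by exact_mod_cast h2
      omega
    · have h1 : ((n : ℝ)) < 1 := by nlinarith
      have h2 : (-1 : ℝ) < n := by nlinarith
      have h1' : n < 1 := by exact_mod_cast h1
      have h2' : (-1:ℤ) < n := by exact_mod_cast h2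
      omega
  rw [key] at h; simpa using h


/-- existence of a dilate landing in the Shannon set -/
lemma exists_dilate {x : ℝ} (hx0 : x ≠ 0) (hxb : ∀ k : ℤ, x ≠ -((2:ℝ) ^ k * π)) :
    ∃ j : ℤ, (2:ℝ) ^ (-j) * x ∈ Esh := by
  have hπ := Real.pi_pos
  have habs : 0 < |x| / π := by positivity
  set k := Int.log 2 (|x| / π) with hk
  have h1 : (2:ℝ) ^ k ≤ |x| / π := by
    have := Int.zpow_log_le_self (b := 2) (R := ℝ) (by norm_num) habs
    exact_mod_cast this
  have h2 : |x| / π < (2:ℝ) ^ (k + 1) := by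
    have := Int.lt_zpow_succ_log_self (b := 2) (R := ℝ) (by norm_num) (|x| / π)
    exact_mod_cast this
  have hkpos : (0:ℝ) < (2:ℝ) ^ k := zpow_pos (by norm_num) _
  have hmk : (2:ℝ) ^ (-k) = ((2:ℝ) ^ k)⁻¹ := zpow_neg 2 k
  have h1' : (2:ℝ) ^ k * π ≤ |x| := by
    rw [le_div_iff₀ hπ] at h1
    linarith
  have h2' : |x| < (2:ℝ) ^ k * (2 * π) := by
    have : (2:ℝ) ^ (k+1) = 2 * (2:ℝ) ^ k := by
      rw [zpow_add₀ (by norm_num : (2:ℝ) ≠ 0)]; ring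
    rw [div_lt_iff₀ hπ, this] at h2; nlinarith
  refine ⟨k, ?_⟩
  have hlow : π ≤ (2:ℝ)^(-k) * |x| := by
    rw [hmk, inv_mul_eq_div, le_div_iff₀ hkpos]; nlinarith
  have hhigh : (2:ℝ)^(-k) * |x| < 2 * π := by
    rw [hmk, inv_mul_eq_div, div_lt_iff₀ hkpos]; nlinarith
  rcases lt_or_gt_of_ne hx0 with hneg | hpos
  · left
    have habs' : |x| = -x := abs_of_neg hneg
    rw [habs'] at hlow hhigh
    constructor
    · nlinarith [zpow_pos (show (0:ℝ) < 2 by norm_num) (-k)]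
    · have hne : (2:ℝ)^(-k) * x ≠ -π := by
        intro h
        have : x = -((2:ℝ)^k * π) := by
          have e : (2:ℝ)^k * ((2:ℝ)^(-k) * x) = x := by
            rw [← mul_assoc, ← zpow_add₀ (by norm_num : (2:ℝ) ≠ 0)]
            simp
          rw [h] at e; rw [← e]; ring
        exact hxb k this
      have hle : (2:ℝ)^(-k) * x ≤ -π := by nlinarith
      exact lt_of_le_of_ne hle hne
  · right
    have habs' : |x| = x := abs_of_pos hpos
    rw [habs'] at hlow hhigh
    exact ⟨hlow, hhigh⟩




lemma eq_zero_of_all_pow_dvd {p : ℤ} (h : ∀ s : ℕ, (2:ℤ) ^ s ∣ p) : p = 0 := by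
  by_contra hp
  have h1 : (2:ℤ) ^ p.natAbs ≤ |p| := by
    have := h p.natAbs
    exact Int.le_of_dvd (abs_pos.mpr hp) ((dvd_abs _ _).mpr this)
  have h2 : (p.natAbs : ℤ) < 2 ^ p.natAbs := by exact_mod_cast (Nat.lt_two_pow_self (n := p.natAbs))
  rw [Int.abs_eq_natAbs] at h1
  omega

lemma int_val {b p : ℤ} (hb : b ≠ 0) (h : ∀ s : ℕ, ((2:ℤ) ^ s ∣ p ↔ (2:ℤ) ^ s ∣ b)) :
    p ≠ 0 ∧ ∃ v : ℕ, (2:ℤ) ^ v ∣ b ∧ ¬ ((2:ℤ) ^ (v+1) ∣ b) ∧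
      (2:ℤ) ^ v ∣ p ∧ ¬ ((2:ℤ) ^ (v+1) ∣ p) := by
  have hex : ∃ s : ℕ, ¬ (2:ℤ) ^ s ∣ b := by
    by_contra hcon
    push_neg at hcon
    exact hb (eq_zero_of_all_pow_dvd hcon)
  have hp : p ≠ 0 := by
    intro hp0
    obtain ⟨s, hs⟩ := hex
    exact hs ((h s).mp (by simp [hp0]))
  classical
  let s₀ := Nat.find hex
  have hs₀ : ¬ (2:ℤ) ^ s₀ ∣ b := Nat.find_spec hex
  have hs₀pos : s₀ ≠ 0 := by
    intro h0
    apply hs₀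
    rw [h0]; simp
  refine ⟨hp, ⟨s₀ - 1, ?_, ?_, ?_, ?_⟩⟩
  · have := Nat.find_min hex (show s₀ - 1 < s₀ by omega)
    simpa using this
  · have : s₀ - 1 + 1 = s₀ := by omega
    rw [this]; exact hs₀
  · exact (h _).mpr (by have := Nat.find_min hex (show s₀ - 1 < s₀ by omega); simpa using this)
  · have : s₀ - 1 + 1 = s₀ := by omega
    rw [this]; exact fun hc => hs₀ ((h s₀).mp hc)

/-- bridge between real 2-adic congruence statements and integer divisibility -/
lemma dvd_iff_real (p : ℤ) (s : ℕ) :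
    ((2:ℤ) ^ s ∣ p) ↔ ∃ q : ℤ, (2:ℝ) ^ (-(s:ℤ)) * (2 * π * p) = 2 * π * q := by
  have hπ := Real.pi_ne_zero
  have h2s : (2:ℝ) ^ ((s:ℤ)) = ((2:ℤ) ^ s : ℤ) := by push_cast [zpow_natCast]; norm_num
  constructor
  · rintro ⟨q, rfl⟩
    refine ⟨q, ?_⟩
    rw [zpow_neg]
    push_cast
    rw [zpow_natCast]
    field_simp
  · rintro ⟨q, hq⟩
    refine ⟨q, ?_⟩
    have h2 : (0:ℝ) < (2:ℝ) ^ (-(s:ℤ)) := zpow_pos (by norm_num) _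
    have : (p : ℝ) = 2 ^ (s:ℕ) * q := by
      have e : (2:ℝ) ^ ((s:ℤ)) * ((2:ℝ) ^ (-(s:ℤ)) * (2 * π * p)) = 2 * π * p := by
        rw [← mul_assoc, ← zpow_add₀ (by norm_num : (2:ℝ) ≠ 0)]; simp
      rw [hq] at e
      have : (2:ℝ) ^ ((s:ℤ)) = (2:ℝ) ^ (s:ℕ) := zpow_natCast 2 s
      rw [this] at e
      have hπpos := Real.pi_pos
      nlinarith [e]
    exact_mod_cast this

/-- the key geometric lemma about the Shannon set -/
lemma geom {t u : ℝ} (b : ℤ) (v : ℕ) (ht : t ∈ Esh) (ht2 : t ≠ -(2 * π))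
    (hu : u = t - 2 * π * b) (hub : |u| < 2 ^ (v+1) * π) :
    (b = 2 ^ v → 0 < t ∧ u < 0) ∧ (b = -(2 ^ v) → t < 0 ∧ 0 < u) := by
  have hπ := Real.pi_pos
  have h2v : (1:ℝ) ≤ 2 ^ v := one_le_pow₀ (by norm_num)
  have h2v1 : (2:ℝ) ^ (v+1) = 2 * 2 ^ v := by ring
  have habs1 : u < 2 ^ (v+1) * π := lt_of_le_of_lt (le_abs_self u) hub
  have habs2 : -(2 ^ (v+1) * π) < u := neg_lt_of_abs_lt hub
  constructor
  · intro hbv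
    have hbR : (b : ℝ) = 2 ^ v := by exact_mod_cast hbv
    rw [hbR] at hu
    rcases ht with h | h
    · exfalso
      rcases h with ⟨h1, h2⟩
      nlinarith
    · rcases h with ⟨h1, h2⟩
      constructor
      · linarith
      · nlinarith
  · intro hbv
    have hbR : (b : ℝ) = -(2 ^ v) := by exact_mod_cast hbv
    rw [hbR] at hu
    rcases ht with h | h
    · rcases h with ⟨h1, h2⟩
      have h1' : -(2*π) < t := lt_of_le_of_ne h1 (Ne.symm ht2)
      constructor
      · linarith
      · nlinarith
    · exfalso
      rcases h with ⟨h1, h2⟩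
      nlinarith


-- pointwise theory
section Pointwise

structure Ctx (σ τ : ℝ → ℝ) (F G : Set ℝ) : Prop where
  closσ : ∀ x ∈ G, σ x ∈ G
  closτ : ∀ x ∈ G, τ x ∈ G
  closd : ∀ x ∈ G, ∀ m : ℤ, (2:ℝ) ^ m * x ∈ G
  hπ : ∀ x ∈ G, ∀ q : ℚ, x ≠ (q : ℝ) * π
  f1 : ∀ x ∈ G, x ∈ Esh → σ x ∈ F ∧ ∃ n : ℤ, σ x - x = 2 * π * n
  f2 : ∀ x ∈ G, ∀ m : ℤ, (2:ℝ) ^ (-m) * x ∈ Esh → σ x = (2:ℝ) ^ m * σ ((2:ℝ) ^ (-m) * x)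
  f3 : ∀ x ∈ G, x ∈ F → τ x ∈ Esh ∧ ∃ n : ℤ, τ x - x = 2 * π * n
  f4 : ∀ x ∈ G, ∀ m : ℤ, (2:ℝ) ^ (-m) * x ∈ F → τ x = (2:ℝ) ^ m * τ ((2:ℝ) ^ (-m) * x)
  f5 : ∀ x ∈ G, ((∃ n : ℤ, σ x - x = 2 * π * n) ↔ (∃ n : ℤ, τ x - x = 2 * π * n))
  f6 : ∀ x ∈ G, ∀ n m : ℤ, x + 2 * π * n ∈ F → x + 2 * π * m ∈ F → n = m
  f7 : ∀ x ∈ G, ∃ k : ℤ, (2:ℝ) ^ k * x ∈ F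

variable {σ τ : ℝ → ℝ} {F G : Set ℝ} (hc : Ctx σ τ F G)

lemma zc1 (j : ℤ) (x : ℝ) : (2:ℝ) ^ j * ((2:ℝ) ^ (-j) * x) = x := by
  rw [← mul_assoc, ← zpow_add₀ (by norm_num : (2:ℝ) ≠ 0)]
  simp

lemma zc2 (i j : ℤ) (x : ℝ) :
    (2:ℝ) ^ (-(i+j)) * ((2:ℝ) ^ i * x) = (2:ℝ) ^ (-j) * x := by
  rw [← mul_assoc, ← zpow_add₀ (by norm_num : (2:ℝ) ≠ 0)]
  congr 2
  ring

include hc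

lemma Ctx.ne_zero {x : ℝ} (hx : x ∈ G) : x ≠ 0 := by
  have := hc.hπ x hx 0
  simpa using this

lemma Ctx.ne_bound {x : ℝ} (hx : x ∈ G) : ∀ k : ℤ, x ≠ -((2:ℝ) ^ k * π) := by
  intro k h
  apply hc.hπ x hx (-((2:ℚ) ^ k))
  rw [h]
  push_cast
  ring

lemma Ctx.ne_neg_two_pi {x : ℝ} (hx : x ∈ G) : x ≠ -(2 * π) := by
  have := hc.ne_bound hx 1
  simpa using this

lemma Ctx.abs_lt {x : ℝ} (hx : x ∈ G) (hE : x ∈ Esh) : |x| < 2 * π := by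
  have hπ := Real.pi_pos
  rcases hE with h | h
  · rcases h with ⟨h1, h2⟩
    have h1' : -(2*π) < x := lt_of_le_of_ne h1 (Ne.symm (hc.ne_neg_two_pi hx))
    rw [abs_of_neg (by linarith)]
    linarith
  · rcases h with ⟨h1, h2⟩
    rw [abs_of_pos (by linarith)]
    exact h2

lemma Ctx.sigma_dilate {x : ℝ} (hx : x ∈ G) (i : ℤ) :
    σ ((2:ℝ) ^ i * x) = (2:ℝ) ^ i * σ x := by
  obtain ⟨j, hw⟩ := exists_dilate (hc.ne_zero hx) (hc.ne_bound hx)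
  have e1 := hc.f2 x hx j hw
  have hx' := hc.closd x hx i
  have hw' : (2:ℝ) ^ (-(i+j)) * ((2:ℝ) ^ i * x) ∈ Esh := by rw [zc2]; exact hw
  have e2 := hc.f2 _ hx' (i+j) hw'
  rw [zc2] at e2
  rw [e2, e1, zpow_add₀ (by norm_num : (2:ℝ) ≠ 0)]
  ring

lemma Ctx.tau_dilate {x : ℝ} (hx : x ∈ G) (i : ℤ) :
    τ ((2:ℝ) ^ i * x) = (2:ℝ) ^ i * τ x := by
  obtain ⟨k, hk⟩ := hc.f7 x hx
  have hk' : (2:ℝ) ^ (-(-k)) * x ∈ F := by rw [neg_neg]; exact hk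
  have e1 := hc.f4 x hx (-k) hk'
  have hx' := hc.closd x hx i
  have hk'' : (2:ℝ) ^ (-(i + -k)) * ((2:ℝ) ^ i * x) ∈ F := by rw [zc2, neg_neg]; exact hk
  have e2 := hc.f4 _ hx' (i + -k) hk''
  rw [zc2, neg_neg] at e2
  rw [e2, e1, zpow_add₀ (by norm_num : (2:ℝ) ≠ 0)]
  ring_nf

lemma Ctx.matching {x : ℝ} (hx : x ∈ G) (i : ℤ) :
    (∃ q : ℤ, (2:ℝ) ^ i * (σ x - x) = 2 * π * q) ↔
    (∃ q : ℤ, (2:ℝ) ^ i * (τ x - x) = 2 * π * q) := by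
  have hy := hc.closd x hx i
  have h5 := hc.f5 _ hy
  have e1 := hc.sigma_dilate hx i
  have e2 := hc.tau_dilate hx i
  rw [e1, e2] at h5
  have r1 : (2:ℝ) ^ i * σ x - (2:ℝ) ^ i * x = (2:ℝ) ^ i * (σ x - x) := by ring
  have r2 : (2:ℝ) ^ i * τ x - (2:ℝ) ^ i * x = (2:ℝ) ^ i * (τ x - x) := by ring
  rw [r1, r2] at h5
  exact h5

lemma Ctx.tau_sigma_id {x : ℝ} (hx : x ∈ G) (hE : x ∈ Esh) : τ (σ x) = x := by
  obtain ⟨hσF, n, hn⟩ := hc.f1 x hx hE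
  have hσG := hc.closσ x hx
  obtain ⟨hτE, c, hcc⟩ := hc.f3 (σ x) hσG hσF
  refine esh_translate hE hτE (n + c) ?_
  push_cast
  linarith [hn, hcc]

lemma Ctx.sigma_tau_id {x : ℝ} (hx : x ∈ G) (hF : x ∈ F) : σ (τ x) = x := by
  obtain ⟨hτE, b, hb⟩ := hc.f3 x hx hF
  have hτG := hc.closτ x hx
  obtain ⟨hσF, n, hn⟩ := hc.f1 (τ x) hτG hτE
  have hmem : x + 2 * π * ((b + n : ℤ) : ℝ) ∈ F := by
    have : x + 2 * π * ((b + n : ℤ) : ℝ) = σ (τ x) := by push_cast; linarith [hn, hb]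
    rw [this]; exact hσF
  have hmem0 : x + 2 * π * ((0 : ℤ) : ℝ) ∈ F := by simpa using hF
  have := hc.f6 x hx (b + n) 0 hmem hmem0
  have hbn : (b : ℝ) + n = 0 := by exact_mod_cast this
  push_cast at hmem
  have hsum : σ (τ x) - x = 2 * π * ((b : ℝ) + n) := by rw [mul_add]; linarith [hn, hb]
  rw [hbn, mul_zero] at hsum
  linarith

end Pointwise
section Pointwise2

variable {σ τ : ℝ → ℝ} {F G : Set ℝ} (hc : Ctx σ τ F G)
include hc

lemma Ctx.L1 {u : ℝ} (hu : u ∈ G) (huF : u ∈ F) (hne : τ u ≠ u) :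
    ∃ (v : ℕ) (b p j n : ℤ),
      τ u - u = 2 * π * b ∧
      σ u - u = 2 * π * p ∧
      (b = 2 ^ v ∨ b = -(2 ^ v)) ∧
      ((2:ℤ) ^ v ∣ p) ∧ ¬ ((2:ℤ) ^ (v+1) ∣ p) ∧
      j ≤ (v : ℤ) ∧
      (2:ℝ) ^ (-j) * u ∈ Esh ∧
      σ ((2:ℝ) ^ (-j) * u) ∈ F ∧
      σ ((2:ℝ) ^ (-j) * u) - (2:ℝ) ^ (-j) * u = 2 * π * n ∧
      (p : ℝ) = (2:ℝ) ^ j * n ∧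
      |u| < 2 ^ (v+1) * π := by
  have hπpos := Real.pi_pos
  have hπne := Real.pi_ne_zero
  -- b
  obtain ⟨hτE, b, hb⟩ := hc.f3 u hu huF
  have hb0 : b ≠ 0 := by
    intro h0
    apply hne
    rw [h0] at hb
    push_cast at hb
    linarith
  -- j, w
  obtain ⟨j, hwE⟩ := exists_dilate (hc.ne_zero hu) (hc.ne_bound hu)
  set w := (2:ℝ) ^ (-j) * u with hw_def
  have hwG : w ∈ G := hc.closd u hu (-j)
  obtain ⟨hu₁F, n, hn⟩ := hc.f1 w hwG hwE
  -- σ u - u = 2π (2^j n)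
  have e1 := hc.f2 u hu j hwE
  have hju : (2:ℝ) ^ j * w = u := zc1 j u
  have hσu : σ u - u = 2 * π * ((2:ℝ) ^ j * n) := by
    rw [e1, ← hw_def]
    have : σ w = w + 2 * π * n := by linarith [hn]
    rw [this, mul_add, hju]
    ring
  -- p
  obtain ⟨p, hp⟩ : ∃ q : ℤ, σ u - u = 2 * π * q := by
    have := (hc.matching hu 0).mpr ⟨b, by simpa using hb⟩
    simpa using this
  have hpn : (p : ℝ) = (2:ℝ) ^ j * n := by
    have h0 : 2 * π * ((p:ℝ)) = 2 * π * ((2:ℝ) ^ j * n) := by rw [← hp, ← hσu]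
    exact mul_left_cancel₀ (by positivity : (2:ℝ) * π ≠ 0) h0
  -- valuation matching
  have hmatch : ∀ s : ℕ, ((2:ℤ) ^ s ∣ p ↔ (2:ℤ) ^ s ∣ b) := by
    intro s
    rw [dvd_iff_real p s, dvd_iff_real b s, ← hp, ← hb]
    exact hc.matching hu (-(s:ℤ))
  obtain ⟨hp0, v, hvb, hvb1, hvp, hvp1⟩ := int_val hb0 hmatch
  -- j ≤ v
  have hn0 : n ≠ 0 := by
    intro h0
    apply hp0
    rw [h0] at hpn
    push_cast at hpn
    simp at hpn
    exact_mod_cast hpn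
  have hjv : j ≤ (v : ℤ) := by
    by_contra hcon
    push_neg at hcon
    have hj0 : 0 ≤ j := by omega
    have hcast : p = 2 ^ j.toNat * n := by
      have : (2:ℝ) ^ j = (2:ℝ) ^ j.toNat := by
        rw [← zpow_natCast]
        congr 1
        omega
      rw [this] at hpn
      exact_mod_cast hpn
    apply hvp1
    rw [hcast]
    exact Dvd.dvd.mul_right (pow_dvd_pow 2 (by omega)) n
  -- |u| bound
  have hwabs : |w| < 2 * π := hc.abs_lt hwG hwE
  have h2j : (0:ℝ) < (2:ℝ) ^ j := zpow_pos (by norm_num) _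
  have huabs : |u| < 2 ^ (v+1) * π := by
    have : |u| = (2:ℝ) ^ j * |w| := by
      rw [← hju, abs_mul, abs_of_pos h2j]
    have hle : (2:ℝ) ^ j ≤ (2:ℝ) ^ (v:ℤ) := zpow_le_zpow_right₀ (by norm_num) hjv
    have hnat : (2:ℝ) ^ ((v:ℕ):ℤ) = (2:ℝ) ^ (v:ℕ) := zpow_natCast 2 v
    rw [hnat] at hle
    have h2v1 : (2:ℝ) ^ (v+1) = 2 * 2 ^ v := by ring
    rw [this, h2v1]
    nlinarith [abs_nonneg w]
  -- |b| = 2^v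
  have hτabs : |τ u| < 2 * π := hc.abs_lt (hc.closτ u hu) hτE
  have hbabs : |(b:ℝ)| < 1 + 2 ^ v := by
    have h1 : 2 * π * |(b:ℝ)| = |τ u - u| := by
      rw [hb, abs_mul]
      rw [abs_of_pos (by positivity : (0:ℝ) < 2 * π)]
    have h2 : |τ u - u| ≤ |τ u| + |u| := abs_sub _ _
    have h3 : 2 * π * |(b:ℝ)| < 2 * π + 2 ^ (v+1) * π := by
      rw [h1]; calc |τ u - u| ≤ |τ u| + |u| := h2
        _ < 2 * π + 2 ^ (v+1) * π := by linarith
    have h2v1 : (2:ℝ) ^ (v+1) = 2 * 2 ^ v := by ring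
    nlinarith
  have hbZ : |b| ≤ 2 ^ v := by
    have h1 : ((|b| : ℤ) : ℝ) < 1 + 2 ^ v := by rw [Int.cast_abs]; exact hbabs
    have h2 : |b| < 1 + 2 ^ v := by exact_mod_cast h1
    omega
  have hbge : (2:ℤ) ^ v ≤ |b| :=
    Int.le_of_dvd (abs_pos.mpr hb0) ((dvd_abs _ _).mpr hvb)
  have hbeq : |b| = 2 ^ v := le_antisymm hbZ hbge
  have hbor : b = 2 ^ v ∨ b = -(2 ^ v) := abs_eq (by positivity) |>.mp hbeq
  exact ⟨v, b, p, j, n, hb, hp, hbor, hvp, hvp1, hjv, hwE, hu₁F, hn, hpn, huabs⟩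

end Pointwise2
section Pointwise3

lemma exp_eq {p : ℤ} {v : ℕ} {e : ℤ} (h1 : (2:ℤ) ^ v ∣ p) (h2 : ¬ ((2:ℤ) ^ (v+1) ∣ p))
    (h3 : |(p:ℝ)| = (2:ℝ) ^ e) : e = (v : ℤ) := by
  have hp0 : p ≠ 0 := by
    intro h0
    rw [h0] at h3
    simp at h3
    exact absurd h3.symm (ne_of_gt (zpow_pos (by norm_num) e))
  have hge : (2:ℤ) ^ v ≤ |p| := Int.le_of_dvd (abs_pos.mpr hp0) ((dvd_abs _ _).mpr h1)
  have hgeR : (2:ℝ) ^ ((v:ℕ):ℤ) ≤ (2:ℝ) ^ e := by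
    rw [zpow_natCast]
    rw [← h3, ← Int.cast_abs]
    exact_mod_cast hge
  have hve : (v : ℤ) ≤ e := by
    have := (zpow_le_zpow_iff_right₀ (by norm_num : (1:ℝ) < 2)).mp hgeR
    exact this
  by_contra hne
  have hlt : (v : ℤ) + 1 ≤ e := by omega
  apply h2
  have he0 : 0 ≤ e := by omega
  have hcast : |p| = 2 ^ e.toNat := by
    have : (2:ℝ) ^ e = (2:ℝ) ^ e.toNat := by
      rw [← zpow_natCast]
      congr 1
      omega
    rw [this, ← Int.cast_abs] at h3
    exact_mod_cast h3
  have : (2:ℤ) ^ (v+1) ∣ |p| := by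
    rw [hcast]
    exact pow_dvd_pow 2 (by omega)
  exact (dvd_abs _ _).mp this

variable {σ τ : ℝ → ℝ} {F G : Set ℝ} (hc : Ctx σ τ F G)
include hc

lemma Ctx.sigma_eq_tau {u : ℝ} (hu : u ∈ G) (huF : u ∈ F) : σ u = τ u := by
  have hπpos := Real.pi_pos
  by_cases hne : τ u = u
  · -- trivial case
    obtain ⟨p, hp⟩ : ∃ q : ℤ, σ u - u = 2 * π * q := by
      have := (hc.matching hu 0).mpr ⟨0, by simp [hne]⟩
      simpa using this
    have hall : ∀ s : ℕ, (2:ℤ) ^ s ∣ p := by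
      intro s
      rw [dvd_iff_real p s, ← hp]
      refine (hc.matching hu (-(s:ℤ))).mpr ⟨0, by simp [hne]⟩
    have hp0 : p = 0 := eq_zero_of_all_pow_dvd hall
    rw [hp0] at hp
    push_cast at hp
    rw [hne]
    linarith
  · obtain ⟨v, b, p, j, n, hb, hp, hbor, hvp, hvp1, hjv, hwE, hu₁F, hn, hpn, huabs⟩ :=
      hc.L1 hu huF hne
    set w := (2:ℝ) ^ (-j) * u with hw_def
    have hwG : w ∈ G := hc.closd u hu (-j)
    set u₁ := σ w with hu₁_def
    have hu₁G : u₁ ∈ G := hc.closσ w hwG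
    have hτu₁ : τ u₁ = w := hc.tau_sigma_id hwG hwE
    have hn0 : n ≠ 0 := by
      intro h0
      apply hvp1
      have : (p:ℝ) = 0 := by rw [hpn, h0]; push_cast; ring
      have : p = 0 := by exact_mod_cast this
      simp [this]
    have hne₁ : τ u₁ ≠ u₁ := by
      rw [hτu₁]
      intro h0
      apply hn0
      have : 2 * π * (n:ℝ) = 0 := by rw [← hn, ← h0]; ring
      have hπne : (2:ℝ) * π ≠ 0 := by positivity
      have : (n:ℝ) = 0 := by
        rcases mul_eq_zero.mp this with h | h
        · exact absurd h hπne
        · exact h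
      exact_mod_cast this
    obtain ⟨v₁, b₁, p₁, j₁, n₁, hb₁, _, hbor₁, _, _, _, _, _, _, _, hub₁⟩ :=
      hc.L1 hu₁G hu₁F hne₁
    -- b₁ = -n
    have hb₁n : (b₁ : ℝ) = -(n:ℝ) := by
      have h1 : τ u₁ - u₁ = -(2 * π * n) := by rw [hτu₁]; linarith [hn]
      have h2 : 2 * π * (b₁:ℝ) = 2 * π * (-(n:ℝ)) := by rw [← hb₁, h1]; ring
      exact mul_left_cancel₀ (by positivity : (2:ℝ) * π ≠ 0) h2
    have hb₁nZ : b₁ = -n := by exact_mod_cast hb₁n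
    -- geometry
    have htE : τ u ∈ Esh := by
      obtain ⟨hτE, _⟩ := hc.f3 u hu huF
      exact hτE
    have htG : τ u ∈ G := hc.closτ u hu
    have ht2 : τ u ≠ -(2 * π) := hc.ne_neg_two_pi htG
    have hueq : u = τ u - 2 * π * b := by linarith [hb]
    have g1 := geom b v htE ht2 hueq huabs
    have hw2 : w ≠ -(2 * π) := hc.ne_neg_two_pi hwG
    have hu₁eq : u₁ = w - 2 * π * b₁ := by
      have : u₁ = w + 2 * π * n := by linarith [hn]
      rw [this, hb₁nZ]; push_cast; ring
    have g2 := geom b₁ v₁ hwE hw2 hu₁eq hub₁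
    have h2j : (0:ℝ) < (2:ℝ) ^ (-j) := zpow_pos (by norm_num) _
    -- sign analysis
    rcases hbor with hbv | hbv
    · -- b = 2^v : u < 0, so w < 0, so b₁ = -(2^v₁), n = 2^v₁
      obtain ⟨htpos, huneg⟩ := g1.1 hbv
      have hwneg : w < 0 := by
        rw [hw_def]
        exact mul_neg_of_pos_of_neg h2j huneg
      have hb₁v : b₁ = -(2 ^ v₁) := by
        rcases hbor₁ with h | h
        · exfalso
          obtain ⟨hwpos, _⟩ := g2.1 h
          linarith
        · exact h
      have hnv : n = 2 ^ v₁ := by omega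
      have habs : |(p:ℝ)| = (2:ℝ) ^ (j + (v₁:ℤ)) := by
        rw [hpn, hnv]
        push_cast
        rw [abs_mul, abs_of_pos (zpow_pos (by norm_num : (0:ℝ) < 2) j),
          abs_of_pos (by positivity : (0:ℝ) < (2:ℝ) ^ (v₁:ℕ))]
        rw [zpow_add₀ (by norm_num : (2:ℝ) ≠ 0), zpow_natCast]
      have hexp : j + (v₁:ℤ) = (v:ℤ) := exp_eq hvp hvp1 habs
      have hpb : (p:ℝ) = (b:ℝ) := by
        rw [hpn, hnv, hbv]
        push_cast
        rw [← zpow_natCast (2:ℝ) v₁, ← zpow_add₀ (by norm_num : (2:ℝ) ≠ 0), hexp,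
          zpow_natCast]
      have : p = b := by exact_mod_cast hpb
      rw [this] at hp
      linarith [hp, hb]
    · -- b = -(2^v) : u > 0, so w > 0, so b₁ = 2^v₁, n = -(2^v₁)
      obtain ⟨htneg, hupos⟩ := g1.2 hbv
      have hwpos : 0 < w := by
        rw [hw_def]
        exact mul_pos h2j hupos
      have hb₁v : b₁ = 2 ^ v₁ := by
        rcases hbor₁ with h | h
        · exact h
        · exfalso
          obtain ⟨hwneg, _⟩ := g2.2 h
          linarith
      have hnv : n = -(2 ^ v₁) := by omega
      have habs : |(p:ℝ)| = (2:ℝ) ^ (j + (v₁:ℤ)) := by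
        rw [hpn, hnv]
        push_cast
        rw [abs_mul]
        rw [abs_of_pos (zpow_pos (by norm_num : (0:ℝ) < 2) j), abs_neg,
          abs_of_pos (by positivity : (0:ℝ) < (2:ℝ) ^ (v₁:ℕ))]
        rw [zpow_add₀ (by norm_num : (2:ℝ) ≠ 0), zpow_natCast]
      have hexp : j + (v₁:ℤ) = (v:ℤ) := exp_eq hvp hvp1 habs
      have hmul : (2:ℝ) ^ j * (2:ℝ) ^ (v₁:ℕ) = (2:ℝ) ^ (v:ℕ) := by
        rw [← zpow_natCast (2:ℝ) v₁, ← zpow_add₀ (by norm_num : (2:ℝ) ≠ 0), hexp,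
          zpow_natCast]
      have hpb : (p:ℝ) = (b:ℝ) := by
        rw [hpn, hnv, hbv]
        push_cast
        rw [mul_neg, hmul]
      have : p = b := by exact_mod_cast hpb
      rw [this] at hp
      linarith [hp, hb]

lemma Ctx.sigma_sigma_id {x : ℝ} (hx : x ∈ G) : σ (σ x) = x := by
  obtain ⟨k, hkF⟩ := hc.f7 x hx
  set u := (2:ℝ) ^ k * x with hu_def
  have huG : u ∈ G := hc.closd x hx k
  have hst : σ u = τ u := hc.sigma_eq_tau huG hkF
  have hσσu : σ (σ u) = u := by
    rw [hst]
    exact hc.sigma_tau_id huG hkF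
  have hx_eq : (2:ℝ) ^ (-k) * u = x := by
    rw [hu_def, ← mul_assoc, ← zpow_add₀ (by norm_num : (2:ℝ) ≠ 0)]
    simp
  have e1 : σ x = (2:ℝ) ^ (-k) * σ u := by
    rw [← hx_eq]
    exact hc.sigma_dilate huG (-k)
  have e2 : σ ((2:ℝ) ^ (-k) * σ u) = (2:ℝ) ^ (-k) * σ (σ u) :=
    hc.sigma_dilate (hc.closσ u huG) (-k)
  rw [e1, e2, hσσu, hx_eq]

end Pointwise3
section MeasurePart

lemma ne_zero_of_pi {x : ℝ} (h : ∀ q : ℚ, x ≠ (q:ℝ) * π) : x ≠ 0 := by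
  have := h 0
  simpa using this

lemma ne_bound_of_pi {x : ℝ} (h : ∀ q : ℚ, x ≠ (q:ℝ) * π) :
    ∀ k : ℤ, x ≠ -((2:ℝ) ^ k * π) := by
  intro k hk
  apply h (-((2:ℚ) ^ k))
  rw [hk]
  push_cast
  ring

lemma nullDil {c : ℝ} (hc : c ≠ 0) {N : Set ℝ} (hN : volume N = 0) :
    volume ((fun x => c * x) ⁻¹' N) = 0 := by
  rw [Real.volume_preimage_mul_left hc, hN]
  simp

lemma nullTrans (c : ℝ) {N : Set ℝ} (hN : volume N = 0) :
    volume ((fun x => x + c) ⁻¹' N) = 0 := by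
  rw [measure_preimage_add_right]
  exact hN

lemma aeDil {c : ℝ} (hc : c ≠ 0) {Q : ℝ → Prop} (h : ∀ᵐ y : ℝ, Q y) :
    ∀ᵐ x : ℝ, Q (c * x) := by
  rw [MeasureTheory.ae_iff] at h ⊢
  have heq : {x : ℝ | ¬ Q (c * x)} = (fun x => c * x) ⁻¹' {y | ¬ Q y} := rfl
  rw [heq]
  exact nullDil hc h

def BSeq (σ τ : ℝ → ℝ) (B0 : Set ℝ) : ℕ → Set ℝ
  | 0 => B0
  | (i+1) => BSeq σ τ B0 i ∪ σ ⁻¹' (BSeq σ τ B0 i) ∪ τ ⁻¹' (BSeq σ τ B0 i) ∪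
      ⋃ m : ℤ, (fun x => (2:ℝ) ^ m * x) ⁻¹' (BSeq σ τ B0 i)

lemma BSeq_null {σ τ : ℝ → ℝ} {B0 : Set ℝ} (hB0 : volume B0 = 0)
    (hσn : ∀ N : Set ℝ, volume N = 0 → volume (σ ⁻¹' N) = 0)
    (hτn : ∀ N : Set ℝ, volume N = 0 → volume (τ ⁻¹' N) = 0) :
    ∀ i, volume (BSeq σ τ B0 i) = 0 := by
  intro i
  induction i with
  | zero => exact hB0
  | succ i ih =>
    refine measure_union_null (measure_union_null (measure_union_null ih (hσn _ ih)) (hτn _ ih)) ?_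
    exact measure_iUnion_null fun m =>
      nullDil (ne_of_gt (zpow_pos (by norm_num : (0:ℝ) < 2) m)) ih

end MeasurePart
end Stmt10Aux


open Stmt10Aux in
/-- Proposition 6 of the paper.  If `E = [−2π, −π) ∪ [π, 2π)` is the
Shannon wavelet set and `F` is any dyadic wavelet set with `D_E^F = D_F^E` modulo
null sets, then `(E, F)` is an interpolation pair. -/
theorem stmt_10 (F : Set ℝ) (hF : IsDyadicWaveletSet F)
    (σ τ : ℝ → ℝ)
    (hσ : IsInterpolationMap (Ico (-(2 * π)) (-π) ∪ Ico π (2 * π)) F σ)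
    (hτ : IsInterpolationMap F (Ico (-(2 * π)) (-π) ∪ Ico π (2 * π)) τ)
    (hdom : volume ((CongruenceDomain σ) ∆ (CongruenceDomain τ)) = 0) :
    ∀ᵐ s : ℝ ∂volume, σ (σ s) = s := by
  classical
  obtain ⟨hFm, hFtrans, hFdil⟩ := hF
  obtain ⟨hσm, hσ0, hσ3, hσ4⟩ := hσ
  obtain ⟨hτm, hτ0, hτ3, hτ4⟩ := hτ
  have h2ne : ∀ m : ℤ, (2:ℝ) ^ m ≠ 0 := fun m =>
    ne_of_gt (zpow_pos (by norm_num : (0:ℝ) < 2) m)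
  -- basic a.e. facts
  have hc2 : ∀ᵐ x : ℝ ∂volume, ∀ m : ℤ, (2:ℝ) ^ (-m) * x ∈ Esh →
      σ x = (2:ℝ) ^ m * σ ((2:ℝ) ^ (-m) * x) := ae_all_iff.mpr hσ4
  have hc4 : ∀ᵐ x : ℝ ∂volume, ∀ m : ℤ, (2:ℝ) ^ (-m) * x ∈ F →
      τ x = (2:ℝ) ^ m * τ ((2:ℝ) ^ (-m) * x) := ae_all_iff.mpr hτ4
  have hc8 : ∀ᵐ x : ℝ ∂volume, ∀ q : ℚ, x ≠ (q:ℝ) * π := by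
    have hcnt : (⋃ q : ℚ, {((q:ℝ) * π)} : Set ℝ).Countable :=
      countable_iUnion fun q => countable_singleton _
    have h0 : volume (⋃ q : ℚ, {((q:ℝ) * π)} : Set ℝ) = 0 := hcnt.measure_zero volume
    rw [measure_eq_zero_iff_ae_notMem] at h0
    filter_upwards [h0] with x hx q hq
    exact hx (mem_iUnion.mpr ⟨q, by simp [hq]⟩)
  have hdom' : ∀ᵐ x : ℝ ∂volume,
      ((∃ n : ℤ, σ x - x = 2 * π * n) ↔ (∃ n : ℤ, τ x - x = 2 * π * n)) := by
    rw [measure_eq_zero_iff_ae_notMem] at hdom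
    filter_upwards [hdom] with x hx
    simp only [Set.mem_symmDiff, CongruenceDomain, Set.mem_setOf_eq] at hx
    tauto
  have hc6 : ∀ᵐ x : ℝ ∂volume, ∀ n m : ℤ,
      x + 2 * π * n ∈ F → x + 2 * π * m ∈ F → n = m := by
    filter_upwards [hFtrans] with x hx n m h1 h2
    obtain ⟨y, _, hy⟩ := hx
    exact (hy n h1).trans (hy m h2).symm
  have hc7 : ∀ᵐ x : ℝ ∂volume, ∃ k : ℤ, (2:ℝ) ^ k * x ∈ F :=
    hFdil.mono fun x h => h.exists
  -- dilated versions
  have hσ3d : ∀ᵐ x : ℝ ∂volume, ∀ m : ℤ, ((2:ℝ) ^ m * x ∈ Esh →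
      σ ((2:ℝ) ^ m * x) ∈ F ∧ ∃ n : ℤ, σ ((2:ℝ) ^ m * x) - (2:ℝ) ^ m * x = 2 * π * n) :=
    ae_all_iff.mpr fun m => aeDil (h2ne m) hσ3
  have hτ3d : ∀ᵐ x : ℝ ∂volume, ∀ m : ℤ, ((2:ℝ) ^ m * x ∈ F →
      τ ((2:ℝ) ^ m * x) ∈ Esh ∧ ∃ n : ℤ, τ ((2:ℝ) ^ m * x) - (2:ℝ) ^ m * x = 2 * π * n) :=
    ae_all_iff.mpr fun m => aeDil (h2ne m) hτ3
  -- null preimage lemmas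
  have hAσ : ∀ᵐ x : ℝ ∂volume, ∃ m q : ℤ, σ x = x + 2 * π * ((2:ℝ) ^ m * q) := by
    filter_upwards [hσ3d, hc2, hc8] with x h3 h2 h8
    obtain ⟨j, hj⟩ := exists_dilate (ne_zero_of_pi h8) (ne_bound_of_pi h8)
    obtain ⟨-, n, hn⟩ := h3 (-j) hj
    refine ⟨j, n, ?_⟩
    rw [h2 j hj]
    have hz : (2:ℝ) ^ j * ((2:ℝ) ^ (-j) * x) = x := zc1 j x
    have hσw : σ ((2:ℝ) ^ (-j) * x) = (2:ℝ) ^ (-j) * x + 2 * π * n := by linarith [hn]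
    rw [hσw, mul_add, hz]
    ring
  have hAτ : ∀ᵐ x : ℝ ∂volume, ∃ m q : ℤ, τ x = x + 2 * π * ((2:ℝ) ^ m * q) := by
    filter_upwards [hτ3d, hc4, hc7] with x h3 h4 h7
    obtain ⟨k, hk⟩ := h7
    obtain ⟨-, n, hn⟩ := h3 k hk
    have hk' : (2:ℝ) ^ (-(-k)) * x ∈ F := by rw [neg_neg]; exact hk
    have e := h4 (-k) hk'
    rw [neg_neg] at e
    refine ⟨-k, n, ?_⟩
    rw [e]
    have hz : (2:ℝ) ^ (-k) * ((2:ℝ) ^ k * x) = x := by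
      rw [← mul_assoc, ← zpow_add₀ (by norm_num : (2:ℝ) ≠ 0)]
      simp
    have hτu : τ ((2:ℝ) ^ k * x) = (2:ℝ) ^ k * x + 2 * π * n := by linarith [hn]
    rw [hτu, mul_add, hz]
    ring
  have nullσ : ∀ N : Set ℝ, volume N = 0 → volume (σ ⁻¹' N) = 0 := by
    intro N hN
    have hA : volume {x : ℝ | ¬ ∃ m q : ℤ, σ x = x + 2 * π * ((2:ℝ) ^ m * q)} = 0 :=
      MeasureTheory.ae_iff.mp hAσ
    have hsub : σ ⁻¹' N ⊆ {x : ℝ | ¬ ∃ m q : ℤ, σ x = x + 2 * π * ((2:ℝ) ^ m * q)} ∪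
        ⋃ mq : ℤ × ℤ, (fun x => x + 2 * π * ((2:ℝ) ^ mq.1 * mq.2)) ⁻¹' N := by
      intro x hx
      by_cases hxA : ∃ m q : ℤ, σ x = x + 2 * π * ((2:ℝ) ^ m * q)
      · right
        obtain ⟨m, q, h⟩ := hxA
        refine mem_iUnion.mpr ⟨(m, q), ?_⟩
        simp only [mem_preimage]
        rw [← h]
        exact hx
      · exact Or.inl hxA
    exact measure_mono_null hsub
      (measure_union_null hA (measure_iUnion_null fun mq => nullTrans _ hN))
  have nullτ : ∀ N : Set ℝ, volume N = 0 → volume (τ ⁻¹' N) = 0 := by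
    intro N hN
    have hA : volume {x : ℝ | ¬ ∃ m q : ℤ, τ x = x + 2 * π * ((2:ℝ) ^ m * q)} = 0 :=
      MeasureTheory.ae_iff.mp hAτ
    have hsub : τ ⁻¹' N ⊆ {x : ℝ | ¬ ∃ m q : ℤ, τ x = x + 2 * π * ((2:ℝ) ^ m * q)} ∪
        ⋃ mq : ℤ × ℤ, (fun x => x + 2 * π * ((2:ℝ) ^ mq.1 * mq.2)) ⁻¹' N := by
      intro x hx
      by_cases hxA : ∃ m q : ℤ, τ x = x + 2 * π * ((2:ℝ) ^ m * q)
      · right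
        obtain ⟨m, q, h⟩ := hxA
        refine mem_iUnion.mpr ⟨(m, q), ?_⟩
        simp only [mem_preimage]
        rw [← h]
        exact hx
      · exact Or.inl hxA
    exact measure_mono_null hsub
      (measure_union_null hA (measure_iUnion_null fun mq => nullTrans _ hN))
  -- the good set
  set PP : ℝ → Prop := fun x =>
    (x ∈ Esh → σ x ∈ F ∧ ∃ n : ℤ, σ x - x = 2 * π * n) ∧
    (∀ m : ℤ, (2:ℝ) ^ (-m) * x ∈ Esh → σ x = (2:ℝ) ^ m * σ ((2:ℝ) ^ (-m) * x)) ∧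
    (x ∈ F → τ x ∈ Esh ∧ ∃ n : ℤ, τ x - x = 2 * π * n) ∧
    (∀ m : ℤ, (2:ℝ) ^ (-m) * x ∈ F → τ x = (2:ℝ) ^ m * τ ((2:ℝ) ^ (-m) * x)) ∧
    ((∃ n : ℤ, σ x - x = 2 * π * n) ↔ (∃ n : ℤ, τ x - x = 2 * π * n)) ∧
    (∀ n m : ℤ, x + 2 * π * n ∈ F → x + 2 * π * m ∈ F → n = m) ∧
    (∃ k : ℤ, (2:ℝ) ^ k * x ∈ F) ∧
    (∀ q : ℚ, x ≠ (q:ℝ) * π) with hPPdef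
  have hP0 : ∀ᵐ x : ℝ ∂volume, PP x := by
    filter_upwards [hσ3, hc2, hτ3, hc4, hdom', hc6, hc7, hc8] with x h1 h2 h3 h4 h5 h6 h7 h8
    exact ⟨h1, h2, h3, h4, h5, h6, h7, h8⟩
  have hB0 : volume {x : ℝ | ¬ PP x} = 0 := MeasureTheory.ae_iff.mp hP0
  set B0 : Set ℝ := {x : ℝ | ¬ PP x} with hB0def
  set G : Set ℝ := (⋃ i, BSeq σ τ B0 i)ᶜ with hGdef
  have hBnull : ∀ i, volume (BSeq σ τ B0 i) = 0 := BSeq_null hB0 nullσ nullτ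
  have hGc : volume Gᶜ = 0 := by
    rw [hGdef, compl_compl]
    exact measure_iUnion_null hBnull
  have hGmem : ∀ x, x ∈ G ↔ ∀ i, x ∉ BSeq σ τ B0 i := by
    intro x
    simp [hGdef, mem_iUnion]
  have hGP : ∀ x ∈ G, PP x := by
    intro x hx
    have := (hGmem x).mp hx 0
    simpa [BSeq, hB0def] using not_not.mp (by simpa [BSeq, hB0def] using this)
  have hGσ : ∀ x ∈ G, σ x ∈ G := by
    intro x hx
    rw [hGmem]
    intro i hi
    exact (hGmem x).mp hx (i+1) (by
      show x ∈ BSeq σ τ B0 i ∪ σ ⁻¹' (BSeq σ τ B0 i) ∪ τ ⁻¹' (BSeq σ τ B0 i) ∪ _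
      exact Or.inl (Or.inl (Or.inr hi)))
  have hGτ : ∀ x ∈ G, τ x ∈ G := by
    intro x hx
    rw [hGmem]
    intro i hi
    exact (hGmem x).mp hx (i+1) (by
      show x ∈ BSeq σ τ B0 i ∪ σ ⁻¹' (BSeq σ τ B0 i) ∪ τ ⁻¹' (BSeq σ τ B0 i) ∪ _
      exact Or.inl (Or.inr hi))
  have hGd : ∀ x ∈ G, ∀ m : ℤ, (2:ℝ) ^ m * x ∈ G := by
    intro x hx m
    rw [hGmem]
    intro i hi
    exact (hGmem x).mp hx (i+1) (by
      show x ∈ BSeq σ τ B0 i ∪ σ ⁻¹' (BSeq σ τ B0 i) ∪ τ ⁻¹' (BSeq σ τ B0 i) ∪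
        ⋃ m : ℤ, (fun x => (2:ℝ) ^ m * x) ⁻¹' (BSeq σ τ B0 i)
      exact Or.inr (mem_iUnion.mpr ⟨m, hi⟩))
  -- build the context
  have hctx : Ctx σ τ F G :=
    { closσ := hGσ
      closτ := hGτ
      closd := hGd
      hπ := fun x hx => (hGP x hx).2.2.2.2.2.2.2
      f1 := fun x hx => (hGP x hx).1
      f2 := fun x hx => (hGP x hx).2.1
      f3 := fun x hx => (hGP x hx).2.2.1
      f4 := fun x hx => (hGP x hx).2.2.2.1
      f5 := fun x hx => (hGP x hx).2.2.2.2.1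
      f6 := fun x hx => (hGP x hx).2.2.2.2.2.1
      f7 := fun x hx => (hGP x hx).2.2.2.2.2.2.1 }
  rw [MeasureTheory.ae_iff]
  refine measure_mono_null ?_ hGc
  intro x hx
  by_contra hxG
  exact hx (hctx.sigma_sigma_id (not_not.mp hxG))
end
end

section
/- For each integer n ≥ 1, let G_n = [((2^n−1)/2^n)π, ((2^{n+1}−1)/2^{n+1})π) + (2^{n+2}−2)π, and let F₀ = [π, 2π) ∖ ⋃_{n≥1} 2^{-(n+1)} G_n. Then there exists a measurable set G₀ ⊆ ([0, π/2) + 2π) ∪ (1/4)F₀ that is 2π-translation congruent to [0, π/2) and 2-dilation congruent to F₀, and for any such G₀ the set W = (−⋃_{n≥0} G_n) ∪ (⋃_{n≥0} G_n) is a dyadic wavelet set satisfying W = −W; in particular there exists an unbounded symmetric dyadic wavelet set (for every M > 0 the set W ∖ [−M, M] has positive Lebesgue measure). -/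
open MeasureTheory Set
open scoped Real symmDiff

noncomputable section

/-- `G_n = [((2^n−1)/2^n)π, ((2^{n+1}−1)/2^{n+1})π) + (2^{n+2}−2)π`, for `n ≥ 1`. -/
def Gpiece (n : ℕ) : Set ℝ :=
  Ico ((((2 : ℝ) ^ n - 1) / (2 : ℝ) ^ n) * π + ((2 : ℝ) ^ (n + 2) - 2) * π)
     ((((2 : ℝ) ^ (n + 1) - 1) / (2 : ℝ) ^ (n + 1)) * π + ((2 : ℝ) ^ (n + 2) - 2) * π)

/-- `F₀ = [π, 2π) ∖ ⋃_{n ≥ 1} 2^{−(n+1)} G_n`. -/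
def Fzero : Set ℝ :=
  Ico π (2 * π) \ ⋃ n : ℕ, (fun x => ((2 : ℝ) ^ ((n : ℕ) + 2))⁻¹ * x) '' Gpiece (n + 1)

/-- The properties required of the piece `G₀`: it is a measurable subset of
`([0, π/2) + 2π) ∪ (1/4)F₀` that is `2π`-translation congruent to `[0, π/2)` and
`2`-dilation congruent to `F₀`. -/
def GoodGzero (G₀ : Set ℝ) : Prop :=
  MeasurableSet G₀ ∧
  G₀ ⊆ ((fun x => x + 2 * π) '' Ico 0 (π / 2)) ∪ ((fun x => (4 : ℝ)⁻¹ * x) '' Fzero) ∧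
  TransCongruent G₀ (Ico 0 (π / 2)) ∧
  DilCongruent G₀ Fzero

/-! ## Auxiliary development -/

namespace S11

/-! ### Generalities on null sets and a.e. partitions -/

lemma vol_neg (s : Set ℝ) : volume (-s) = volume s := Measure.measure_neg volume s

lemma symmDiff_null_iff {s t : Set ℝ} :
    volume (s ∆ t) = 0 ↔ volume (s \ t) = 0 ∧ volume (t \ s) = 0 := by
  rw [Set.symmDiff_def]
  constructor
  · intro h
    exact ⟨measure_mono_null Set.subset_union_left h,
      measure_mono_null Set.subset_union_right h⟩
  · rintro ⟨h1, h2⟩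
    exact measure_union_null h1 h2

lemma _root_.IsAEPartition.cover {ι : Type*} {P : ι → Set ℝ} {A : Set ℝ} (h : IsAEPartition P A) :
    volume (A \ ⋃ i, P i) = 0 := by
  obtain ⟨h1, _⟩ := h
  exact (symmDiff_null_iff.1 h1).1

lemma _root_.IsAEPartition.excess {ι : Type*} {P : ι → Set ℝ} {A : Set ℝ} (h : IsAEPartition P A) :
    volume ((⋃ i, P i) \ A) = 0 := by
  obtain ⟨h1, _⟩ := h
  exact (symmDiff_null_iff.1 h1).2

lemma _root_.IsAEPartition.congr_fam {ι : Type*} {P Q : ι → Set ℝ} {A : Set ℝ}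
    (h : ∀ i, P i = Q i) (hp : IsAEPartition P A) : IsAEPartition Q A := by
  rwa [show Q = P from (funext h).symm]

lemma _root_.IsAEPartition.congr_target {ι : Type*} {P : ι → Set ℝ} {A B : Set ℝ}
    (hAB : A = B) (hp : IsAEPartition P A) : IsAEPartition P B := hAB ▸ hp

lemma _root_.IsAEPartition.union {P P' : ℤ → Set ℝ} {A A' : Set ℝ}
    (h : IsAEPartition P A) (h' : IsAEPartition P' A') (hd : volume (A ∩ A') = 0) :
    IsAEPartition (fun n => P n ∪ P' n) (A ∪ A') := by
  have nPA : volume ((⋃ n, P n) \ A) = 0 := h.excess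
  have nP'A' : volume ((⋃ n, P' n) \ A') = 0 := h'.excess
  have cPA : volume (A \ ⋃ n, P n) = 0 := h.cover
  have cP'A' : volume (A' \ ⋃ n, P' n) = 0 := h'.cover
  obtain ⟨_, h2⟩ := h
  obtain ⟨_, h2'⟩ := h'
  constructor
  · rw [symmDiff_null_iff]
    constructor
    · refine measure_mono_null ?_ (measure_union_null cPA cP'A')
      rintro x ⟨hx1, hx2⟩
      rw [Set.mem_iUnion] at hx2
      push_neg at hx2
      rcases hx1 with hA | hA'
      · exact Or.inl ⟨hA, by
          rw [Set.mem_iUnion]; push_neg; intro n; exact fun hc => hx2 n (Or.inl hc)⟩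
      · exact Or.inr ⟨hA', by
          rw [Set.mem_iUnion]; push_neg; intro n; exact fun hc => hx2 n (Or.inr hc)⟩
    · refine measure_mono_null ?_ (measure_union_null nPA nP'A')
      rintro x ⟨hx1, hx2⟩
      rw [Set.mem_iUnion] at hx1
      obtain ⟨n, hn⟩ := hx1
      rcases hn with hn | hn
      · exact Or.inl ⟨Set.mem_iUnion.2 ⟨n, hn⟩, fun hc => hx2 (Or.inl hc)⟩
      · exact Or.inr ⟨Set.mem_iUnion.2 ⟨n, hn⟩, fun hc => hx2 (Or.inr hc)⟩
  · intro i j hij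
    have cross : ∀ a b : ℤ, volume (P a ∩ P' b) = 0 := by
      intro a b
      refine measure_mono_null ?_
        (measure_union_null (measure_union_null nPA nP'A') hd)
      rintro x ⟨hxa, hxb⟩
      by_cases hA : x ∈ A
      · by_cases hA' : x ∈ A'
        · exact Or.inr ⟨hA, hA'⟩
        · exact Or.inl (Or.inr ⟨Set.mem_iUnion.2 ⟨b, hxb⟩, hA'⟩)
      · exact Or.inl (Or.inl ⟨Set.mem_iUnion.2 ⟨a, hxa⟩, hA⟩)
    have h4 : volume (P' i ∩ P j) = 0 := by rw [Set.inter_comm]; exact cross j i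
    refine measure_mono_null ?_
      (measure_union_null (measure_union_null (measure_union_null
        (h2 i j hij) (h2' i j hij)) (cross i j)) h4)
    rintro x ⟨hx1, hx2⟩
    rcases hx1 with h | h <;> rcases hx2 with h' | h'
    · exact Or.inl (Or.inl (Or.inl ⟨h, h'⟩))
    · exact Or.inl (Or.inr ⟨h, h'⟩)
    · exact Or.inr ⟨h, h'⟩
    · exact Or.inl (Or.inl (Or.inr ⟨h, h'⟩))

lemma isAEPartition_pair {a b : ℤ} (hab : a ≠ b) {S T A : Set ℝ} (hA : S ∪ T = A)
    (hST : volume (S ∩ T) = 0) :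
    IsAEPartition (fun m : ℤ => if m = a then S else if m = b then T else ∅) A := by
  have hTS : volume (T ∩ S) = 0 := by rw [Set.inter_comm]; exact hST
  constructor
  · have hU : (⋃ m : ℤ, (if m = a then S else if m = b then T else ∅)) = S ∪ T := by
      apply Set.Subset.antisymm
      · intro x hx
        obtain ⟨m, hm⟩ := Set.mem_iUnion.1 hx
        split_ifs at hm with h1 h2
        · exact Or.inl hm
        · exact Or.inr hm
        · exact absurd hm (Set.notMem_empty x)
      · intro x hx
        rcases hx with h | h
        · exact Set.mem_iUnion.2 ⟨a, by simp [h]⟩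
        · exact Set.mem_iUnion.2 ⟨b, by simp [hab.symm, h]⟩
    rw [hU, hA, symmDiff_self]
    simp
  · intro i j hij
    by_cases hia : i = a <;> by_cases hib : i = b <;>
      by_cases hja : j = a <;> by_cases hjb : j = b <;>
      simp_all [hST, hTS]

lemma isAEPartition_encode (c : ℕ → ℤ) (hc : Function.Injective c) (S : ℕ → Set ℝ)
    (hdisj : ∀ i j : ℕ, i ≠ j → volume (S i ∩ S j) = 0) :
    IsAEPartition (fun m : ℤ => ⋃ n : ℕ, if m = c n then S n else ∅) (⋃ n, S n) := by
  constructor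
  · have hU : (⋃ m : ℤ, ⋃ n : ℕ, if m = c n then S n else ∅) = ⋃ n, S n := by
      apply Set.Subset.antisymm
      · intro x hx
        obtain ⟨m, hm⟩ := Set.mem_iUnion.1 hx
        obtain ⟨n, hn⟩ := Set.mem_iUnion.1 hm
        split_ifs at hn with h
        · exact Set.mem_iUnion.2 ⟨n, hn⟩
        · exact absurd hn (Set.notMem_empty x)
      · intro x hx
        obtain ⟨n, hn⟩ := Set.mem_iUnion.1 hx
        exact Set.mem_iUnion.2 ⟨c n, Set.mem_iUnion.2 ⟨n, by simp [hn]⟩⟩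
    rw [hU, symmDiff_self]
    simp
  · intro i j hij
    refine measure_mono_null (t := ⋃ p : ℕ × ℕ, if p.1 = p.2 then ∅ else S p.1 ∩ S p.2)
      ?_ (measure_iUnion_null ?_)
    · rintro x ⟨hxi, hxj⟩
      obtain ⟨n, hn⟩ := Set.mem_iUnion.1 hxi
      obtain ⟨n', hn'⟩ := Set.mem_iUnion.1 hxj
      split_ifs at hn with h
      · split_ifs at hn' with h'
        · have hne : n ≠ n' := by
            rintro rfl
            exact hij (h.trans h'.symm)
          exact Set.mem_iUnion.2 ⟨(n, n'), by simp [hne, hn, hn']⟩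
        · exact absurd hn' (Set.notMem_empty x)
      · exact absurd hn (Set.notMem_empty x)
    · intro p
      by_cases hp : p.1 = p.2
      · simp [hp]
      · simpa [hp] using hdisj p.1 p.2 hp

/-! ### Generic congruence via a family of maps -/

def CongVia (f : ℤ → ℝ → ℝ) (A B : Set ℝ) : Prop :=
  ∃ P : ℤ → Set ℝ, (∀ n, MeasurableSet (P n)) ∧ IsAEPartition P A ∧
    IsAEPartition (fun n : ℤ => f n '' P n) B

lemma transCongruent_iff {A B : Set ℝ} :
    TransCongruent A B ↔ CongVia (fun n x => x + 2 * π * n) A B := Iff.rfl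

lemma dilCongruent_iff {A B : Set ℝ} :
    DilCongruent A B ↔ CongVia (fun n x => (2 : ℝ) ^ n * x) A B := Iff.rfl

lemma CongVia.target_congr {f : ℤ → ℝ → ℝ} {A B B' : Set ℝ}
    (h : CongVia f A B) (hBB' : B = B') : CongVia f A B' := hBB' ▸ h

lemma CongVia.union {f : ℤ → ℝ → ℝ} {A A' B B' : Set ℝ}
    (h : CongVia f A B) (h' : CongVia f A' B')
    (hA : volume (A ∩ A') = 0) (hB : volume (B ∩ B') = 0) :
    CongVia f (A ∪ A') (B ∪ B') := by
  obtain ⟨P, hPm, hPA, hPB⟩ := h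
  obtain ⟨P', hP'm, hP'A, hP'B⟩ := h'
  refine ⟨fun n => P n ∪ P' n, fun n => (hPm n).union (hP'm n), hPA.union hP'A hA, ?_⟩
  exact IsAEPartition.congr_fam (fun n => (Set.image_union (f n) (P n) (P' n)).symm)
    (hPB.union hP'B hB)

lemma _root_.IsAEPartition.reindex_neg {P : ℤ → Set ℝ} {A : Set ℝ} (g : ℤ ≃ ℤ)
    (h : IsAEPartition P A) : IsAEPartition (fun m => -(P (g.symm m))) (-A) := by
  obtain ⟨h1, h2⟩ := h
  constructor
  · have hU : (⋃ m : ℤ, -(P (g.symm m))) = -(⋃ n, P n) := by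
      ext x
      simp only [Set.mem_iUnion, Set.mem_neg]
      exact ⟨fun ⟨m, hm⟩ => ⟨g.symm m, hm⟩, fun ⟨n, hn⟩ => ⟨g n, by simpa using hn⟩⟩
    rw [hU]
    have hsd : (-A) ∆ (-(⋃ n, P n)) = -(A ∆ (⋃ n, P n)) := by
      ext x
      simp only [Set.mem_symmDiff, Set.mem_neg]
    rw [hsd, vol_neg]
    exact h1
  · intro i j hij
    have : (-(P (g.symm i))) ∩ (-(P (g.symm j))) = -(P (g.symm i) ∩ P (g.symm j)) := by
      ext x; simp [Set.mem_neg]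
    rw [this, vol_neg]
    refine h2 _ _ (fun hh => hij ?_)
    rw [← g.apply_symm_apply i, ← g.apply_symm_apply j, hh]

lemma CongVia.neg {f : ℤ → ℝ → ℝ} {A B : Set ℝ} (g : ℤ ≃ ℤ)
    (hfg : ∀ (n : ℤ) (x : ℝ), f (g n) (-x) = -f n x)
    (h : CongVia f A B) : CongVia f (-A) (-B) := by
  obtain ⟨P, hPm, hPA, hPB⟩ := h
  refine ⟨fun m => -(P (g.symm m)), fun m => (hPm _).neg, hPA.reindex_neg g, ?_⟩
  have himg : ∀ m : ℤ,
      -((fun n : ℤ => f n '' P n) (g.symm m)) = f m '' (-(P (g.symm m))) := by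
    intro m
    ext y
    simp only [Set.mem_image, Set.mem_neg]
    constructor
    · rintro ⟨x, hx, hxy⟩
      refine ⟨-x, by simpa using hx, ?_⟩
      have h0 := hfg (g.symm m) x
      rw [Equiv.apply_symm_apply] at h0
      rw [h0, hxy, neg_neg]
    · rintro ⟨x, hx, rfl⟩
      refine ⟨-x, hx, ?_⟩
      have h0 := hfg (g.symm m) (-x)
      rw [Equiv.apply_symm_apply, neg_neg] at h0
      rw [h0, neg_neg]
  exact IsAEPartition.congr_fam himg (hPB.reindex_neg g)

/-! ### From congruence to a fundamental domain to the a.e. tiling property -/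

lemma ae_existsUnique_of_congruent
    (f : ℤ → ℝ → ℝ)
    (hf0 : ∀ x, f 0 x = x)
    (hfadd : ∀ (m n : ℤ) (x : ℝ), f m (f n x) = f (m + n) x)
    (hfnull : ∀ (n : ℤ) (s : Set ℝ), volume s = 0 → volume (f n ⁻¹' s) = 0)
    (T : Set ℝ)
    (hTu : ∀ (x : ℝ) (n m : ℤ), f n x ∈ T → f m x ∈ T → n = m)
    (hTe : volume {x : ℝ | ∀ n : ℤ, f n x ∉ T} = 0)
    {W : Set ℝ} (h : CongVia f W T) :
    ∀ᵐ x : ℝ ∂volume, ∃! n : ℤ, f n x ∈ W := by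
  obtain ⟨P, hPm, hPA, hPB⟩ := h
  have hinv : ∀ (n : ℤ) (x : ℝ), f (-n) (f n x) = x := by
    intro n x
    rw [hfadd, neg_add_cancel, hf0]
  -- null sets
  have hN1 : volume (W \ ⋃ n, P n) = 0 := hPA.cover
  have hN2 : volume ((⋃ n, P n) \ W) = 0 := hPA.excess
  have hN3 : volume (T \ ⋃ n, (fun k : ℤ => f k '' P k) n) = 0 := hPB.cover
  have hN4 : volume ((⋃ n, (fun k : ℤ => f k '' P k) n) \ T) = 0 := hPB.excess
  obtain ⟨_, hPBpair⟩ := hPB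
  -- pairwise uniqueness
  have pairnull : ∀ n m : ℤ, n ≠ m → volume (f n ⁻¹' W ∩ f m ⁻¹' W) = 0 := by
    intro n m hnm
    have pairterm : ∀ p : ℤ × ℤ, volume (f n ⁻¹' P p.1 ∩ f m ⁻¹' P p.2) = 0 := by
      rintro ⟨i, j⟩
      by_cases hcase : i + n = j + m
      · have hij : i ≠ j := by
          rintro rfl
          exact hnm (by omega)
        refine measure_mono_null ?_ (hfnull (i + n) _ (hPBpair i j hij))
        rintro x ⟨hxi, hxj⟩
        constructor
        · show f (i + n) x ∈ f i '' P i
          rw [← hfadd]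
          exact Set.mem_image_of_mem _ hxi
        · show f (i + n) x ∈ f j '' P j
          rw [hcase, ← hfadd]
          exact Set.mem_image_of_mem _ hxj
      · refine measure_mono_null ?_
          (measure_union_null (hfnull (i + n) _ hN4) (hfnull (j + m) _ hN4))
        rintro x ⟨hxi, hxj⟩
        have h1 : f (i + n) x ∈ (⋃ k, (fun k : ℤ => f k '' P k) k) := by
          refine Set.mem_iUnion.2 ⟨i, ?_⟩
          show f (i + n) x ∈ f i '' P i
          rw [← hfadd]
          exact Set.mem_image_of_mem _ hxi
        have h2 : f (j + m) x ∈ (⋃ k, (fun k : ℤ => f k '' P k) k) := by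
          refine Set.mem_iUnion.2 ⟨j, ?_⟩
          show f (j + m) x ∈ f j '' P j
          rw [← hfadd]
          exact Set.mem_image_of_mem _ hxj
        by_cases hT1 : f (i + n) x ∈ T
        · by_cases hT2 : f (j + m) x ∈ T
          · exact absurd (hTu x _ _ hT1 hT2) hcase
          · exact Or.inr ⟨h2, hT2⟩
        · exact Or.inl ⟨h1, hT1⟩
    refine measure_mono_null ?_
      (measure_union_null (measure_iUnion_null pairterm)
        (measure_union_null (hfnull n _ hN1) (hfnull m _ hN1)))
    rintro x ⟨hxn, hxm⟩
    by_cases h1 : f n x ∈ ⋃ k, P k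
    · by_cases h2 : f m x ∈ ⋃ k, P k
      · obtain ⟨i, hi⟩ := Set.mem_iUnion.1 h1
        obtain ⟨j, hj⟩ := Set.mem_iUnion.1 h2
        exact Or.inl (Set.mem_iUnion.2 ⟨(i, j), ⟨hi, hj⟩⟩)
      · exact Or.inr (Or.inr ⟨hxm, h2⟩)
    · exact Or.inr (Or.inl ⟨hxn, h1⟩)
  -- existence
  have exnull : volume {x : ℝ | ∀ n : ℤ, f n x ∉ W} = 0 := by
    refine measure_mono_null ?_
      (measure_union_null hTe (measure_iUnion_null (fun n =>
        measure_union_null (hfnull n _ hN3)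
          (measure_iUnion_null (fun i => hfnull n _ (hfnull (-i) _ hN2))))))
    intro x hx
    simp only [Set.mem_setOf_eq] at hx
    by_cases hZ : ∀ n : ℤ, f n x ∉ T
    · exact Or.inl hZ
    · push_neg at hZ
      obtain ⟨n, hn⟩ := hZ
      refine Or.inr (Set.mem_iUnion.2 ⟨n, ?_⟩)
      by_cases hI : f n x ∈ ⋃ k, (fun k : ℤ => f k '' P k) k
      · obtain ⟨i, hi⟩ := Set.mem_iUnion.1 hI
        obtain ⟨z, hz, hze⟩ := hi
        have hzx : f (-i) (f n x) = z := by rw [← hze, hinv]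
        have hzW : z ∉ W := by
          intro hzW
          have : f (-i + n) x = z := by rw [← hfadd, hzx]
          exact hx (-i + n) (this ▸ hzW)
        refine Or.inr (Set.mem_iUnion.2 ⟨i, ?_⟩)
        show f (-i) (f n x) ∈ (⋃ k, P k) \ W
        rw [hzx]
        exact ⟨Set.mem_iUnion.2 ⟨i, hz⟩, hzW⟩
      · exact Or.inl ⟨hn, hI⟩
  -- assemble
  rw [ae_iff]
  refine measure_mono_null ?_
    (measure_union_null exnull (measure_iUnion_null
      (s := fun p : ℤ × ℤ => if p.1 = p.2 then ∅ else f p.1 ⁻¹' W ∩ f p.2 ⁻¹' W)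
      (fun p => ?_)))
  · intro x hx
    simp only [Set.mem_setOf_eq] at hx
    by_cases hex : ∃ n : ℤ, f n x ∈ W
    · obtain ⟨n, hn⟩ := hex
      have : ¬∀ m : ℤ, f m x ∈ W → m = n := fun hu => hx ⟨n, hn, hu⟩
      push_neg at this
      obtain ⟨m, hm, hmn⟩ := this
      refine Or.inr (Set.mem_iUnion.2 ⟨(m, n), ?_⟩)
      have hne : (m, n).1 ≠ (m, n).2 := hmn
      rw [if_neg hne]
      exact ⟨hm, hn⟩
    · push_neg at hex
      exact Or.inl hex
  · by_cases hp : p.1 = p.2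
    · simp [hp]
    · simpa [hp] using pairnull p.1 p.2 hp

/-! ### The translation system -/

lemma tau_zero (x : ℝ) : (fun (n : ℤ) (x : ℝ) => x + 2 * π * n) 0 x = x := by
  simp

lemma tau_add (m n : ℤ) (x : ℝ) :
    (fun (n : ℤ) (x : ℝ) => x + 2 * π * n) m
      ((fun (n : ℤ) (x : ℝ) => x + 2 * π * n) n x)
      = (fun (n : ℤ) (x : ℝ) => x + 2 * π * n) (m + n) x := by
  push_cast
  ring

lemma tau_null (n : ℤ) (s : Set ℝ) (hs : volume s = 0) :
    volume ((fun (n : ℤ) (x : ℝ) => x + 2 * π * n) n ⁻¹' s) = 0 := by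
  have : volume ((fun x : ℝ => x + 2 * π * n) ⁻¹' s) = volume s :=
    measure_preimage_add_right volume (2 * π * n) s
  rw [show ((fun (n : ℤ) (x : ℝ) => x + 2 * π * n) n ⁻¹' s)
      = (fun x : ℝ => x + 2 * π * n) ⁻¹' s from rfl, this, hs]

lemma trans_unique (x : ℝ) (n m : ℤ) (h1 : x + 2 * π * n ∈ Ioo (-π) π)
    (h2 : x + 2 * π * m ∈ Ioo (-π) π) : n = m := by
  obtain ⟨a1, a2⟩ := h1
  obtain ⟨b1, b2⟩ := h2
  have hπ := Real.pi_pos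
  have hlt : ((n - m : ℤ) : ℝ) < 1 := by push_cast; nlinarith
  have hgt : (-1 : ℝ) < ((n - m : ℤ) : ℝ) := by push_cast; nlinarith
  have h1' : (n - m : ℤ) < 1 := by exact_mod_cast hlt
  have h2' : (-1 : ℤ) < n - m := by exact_mod_cast hgt
  omega

lemma trans_exists : volume {x : ℝ | ∀ n : ℤ, x + 2 * π * n ∉ Ioo (-π) π} = 0 := by
  refine measure_mono_null (t := ⋃ m : ℤ, {π - 2 * π * m}) ?_
    (measure_iUnion_null fun m => measure_singleton _)
  intro x hx
  simp only [Set.mem_setOf_eq] at hx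
  obtain ⟨m, hm, _⟩ := existsUnique_add_zsmul_mem_Ioc Real.two_pi_pos x (-π)
  rw [zsmul_eq_mul] at hm
  have hm' : x + 2 * π * m ∈ Ioc (-π) π := by
    obtain ⟨c1, c2⟩ := hm
    constructor
    · nlinarith
    · nlinarith
  by_cases hcase : x + 2 * π * m = π
  · refine Set.mem_iUnion.2 ⟨m, ?_⟩
    simp only [Set.mem_singleton_iff]
    linarith
  · exact absurd ⟨hm'.1, lt_of_le_of_ne hm'.2 hcase⟩ (hx m)

/-! ### The dilation system -/

lemma delta_zero (x : ℝ) : (fun (n : ℤ) (x : ℝ) => (2 : ℝ) ^ n * x) 0 x = x := by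
  simp

lemma delta_add (m n : ℤ) (x : ℝ) :
    (fun (n : ℤ) (x : ℝ) => (2 : ℝ) ^ n * x) m
      ((fun (n : ℤ) (x : ℝ) => (2 : ℝ) ^ n * x) n x)
      = (fun (n : ℤ) (x : ℝ) => (2 : ℝ) ^ n * x) (m + n) x := by
  show (2 : ℝ) ^ m * ((2 : ℝ) ^ n * x) = (2 : ℝ) ^ (m + n) * x
  rw [zpow_add₀ (two_ne_zero), ← mul_assoc]

lemma delta_null (n : ℤ) (s : Set ℝ) (hs : volume s = 0) :
    volume ((fun (n : ℤ) (x : ℝ) => (2 : ℝ) ^ n * x) n ⁻¹' s) = 0 := by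
  have h2 : ((2 : ℝ) ^ n) ≠ 0 := zpow_ne_zero n two_ne_zero
  rw [show ((fun (n : ℤ) (x : ℝ) => (2 : ℝ) ^ n * x) n ⁻¹' s)
      = ((2 : ℝ) ^ n * ·) ⁻¹' s from rfl,
    Real.volume_preimage_mul_left h2, hs, mul_zero]

def Dfund : Set ℝ := Ioc (-(2 * π)) (-π) ∪ Ico π (2 * π)

lemma dil_abs (k : ℤ) (x : ℝ) (hk : (2 : ℝ) ^ k * x ∈ Dfund) :
    π ≤ (2 : ℝ) ^ k * |x| ∧ (2 : ℝ) ^ k * |x| < 2 * π := by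
  have hpos : (0 : ℝ) < (2 : ℝ) ^ k := zpow_pos two_pos k
  have hπ := Real.pi_pos
  rcases hk with ⟨c1, c2⟩ | ⟨c1, c2⟩
  · have hxneg : x < 0 := by
      by_contra hcon
      push_neg at hcon
      nlinarith [mul_nonneg hpos.le hcon]
    rw [abs_of_neg hxneg]
    constructor <;> nlinarith
  · have hxpos : 0 < x := by
      by_contra hcon
      push_neg at hcon
      nlinarith [mul_nonpos_of_nonneg_of_nonpos hpos.le hcon]
    rw [abs_of_pos hxpos]
    exact ⟨c1, c2⟩

lemma dil_unique (x : ℝ) (n m : ℤ) (h1 : (2 : ℝ) ^ n * x ∈ Dfund)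
    (h2 : (2 : ℝ) ^ m * x ∈ Dfund) : n = m := by
  obtain ⟨p1, p2⟩ := dil_abs n x h1
  obtain ⟨q1, q2⟩ := dil_abs m x h2
  have hπ := Real.pi_pos
  have hxabs : 0 < |x| := by
    by_contra hcon
    push_neg at hcon
    have h0 : |x| = 0 := le_antisymm hcon (abs_nonneg x)
    rw [h0, mul_zero] at p1
    linarith
  have key : ∀ a b : ℤ, (2 : ℝ) ^ a * |x| < 2 * π → π ≤ (2 : ℝ) ^ b * |x| → a < b + 1 := by
    intro a b ha hb
    have hlt : (2 : ℝ) ^ a * |x| < (2 : ℝ) ^ (b + 1) * |x| := by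
      rw [zpow_add₀ two_ne_zero, zpow_one]
      nlinarith
    have : (2 : ℝ) ^ a < (2 : ℝ) ^ (b + 1) := lt_of_mul_lt_mul_right hlt hxabs.le
    exact (zpow_lt_zpow_iff_right₀ one_lt_two).1 this
  have hnm := key n m p2 q1
  have hmn := key m n q2 p1
  omega

lemma dil_exists : volume {x : ℝ | ∀ n : ℤ, (2 : ℝ) ^ n * x ∉ Dfund} = 0 := by
  refine measure_mono_null (t := {(0 : ℝ)}) ?_ (measure_singleton _)
  intro x hx
  simp only [Set.mem_setOf_eq] at hx
  simp only [Set.mem_singleton_iff]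
  by_contra hx0
  have hπ := Real.pi_pos
  have habs : 0 < |x| := abs_pos.2 hx0
  obtain ⟨k, hk1, hk2⟩ := exists_mem_Ico_zpow (div_pos habs hπ) (one_lt_two (α := ℝ))
  rw [le_div_iff₀ hπ] at hk1
  rw [div_lt_iff₀ hπ] at hk2
  have hinvpos : (0 : ℝ) < (2 : ℝ) ^ (-k) := zpow_pos two_pos (-k)
  have hc : (2 : ℝ) ^ (-k) * (2 : ℝ) ^ k = 1 := by
    rw [← zpow_add₀ two_ne_zero, neg_add_cancel, zpow_zero]
  have he : (2 : ℝ) ^ (-k) * (2 : ℝ) ^ (k + 1) = 2 := by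
    rw [← zpow_add₀ two_ne_zero]
    norm_num
  have h1 : π ≤ (2 : ℝ) ^ (-k) * |x| := by
    nlinarith [mul_le_mul_of_nonneg_left hk1 hinvpos.le]
  have h2 : (2 : ℝ) ^ (-k) * |x| < 2 * π := by
    nlinarith [mul_lt_mul_of_pos_left hk2 hinvpos]
  rcases lt_trichotomy x 0 with hneg | hzero | hpos
  · refine hx (-k) (Or.inl ?_)
    rw [abs_of_neg hneg] at h1 h2
    constructor <;> nlinarith
  · exact hx0 hzero
  · refine hx (-k) (Or.inr ?_)
    rw [abs_of_pos hpos] at h1 h2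
    exact ⟨h1, h2⟩

/-! ### Arithmetic helpers -/

lemma two_pow_le_two_pow {a b : ℕ} (h : a ≤ b) : (2 : ℝ) ^ a ≤ 2 ^ b := by
  exact_mod_cast Nat.pow_le_pow_right (by norm_num) h

lemma one_le_two_pow (a : ℕ) : (1 : ℝ) ≤ 2 ^ a := by
  exact_mod_cast Nat.one_le_pow a 2 (by norm_num)

lemma inv_two_pow_le {a b : ℕ} (h : a ≤ b) : ((2 : ℝ) ^ b)⁻¹ ≤ ((2 : ℝ) ^ a)⁻¹ :=
  inv_anti₀ (by positivity) (two_pow_le_two_pow h)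

lemma inv_two_pow_pos (a : ℕ) : (0 : ℝ) < ((2 : ℝ) ^ a)⁻¹ := by positivity

lemma div_form (k : ℕ) : ((2 : ℝ) ^ k - 1) / (2 : ℝ) ^ k = 1 - ((2 : ℝ) ^ k)⁻¹ := by
  have h : ((2 : ℝ) ^ k) ≠ 0 := by positivity
  field_simp

lemma Ico_disjoint {a b c d : ℝ} (h : b ≤ c) : Ico a b ∩ Ico c d = ∅ := by
  apply Set.eq_empty_iff_forall_notMem.2
  rintro x ⟨⟨_, h1⟩, h2, _⟩
  linarith

/-! ### The pieces `G_{n+1}` -/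

def gl (n : ℕ) : ℝ := (((2 : ℝ) ^ (n + 1) - 1) / (2 : ℝ) ^ (n + 1)) * π
  + ((2 : ℝ) ^ (n + 3) - 2) * π

def gr (n : ℕ) : ℝ := (((2 : ℝ) ^ (n + 2) - 1) / (2 : ℝ) ^ (n + 2)) * π
  + ((2 : ℝ) ^ (n + 3) - 2) * π

lemma Gpiece_succ (n : ℕ) : Gpiece (n + 1) = Ico (gl n) (gr n) := rfl

lemma gl_lt_gr (n : ℕ) : gl n < gr n := by
  unfold gl gr
  rw [div_form, div_form]
  have h1 : ((2 : ℝ) ^ (n + 2))⁻¹ < ((2 : ℝ) ^ (n + 1))⁻¹ := by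
    apply inv_strictAnti₀ (by positivity)
    have : (2 : ℝ) ^ (n + 2) = 2 ^ (n + 1) * 2 := by ring
    nlinarith [one_le_two_pow (n + 1)]
  nlinarith [Real.pi_pos]

lemma gl_lower (n : ℕ) : ((2 : ℝ) ^ (n + 3) - 2) * π ≤ gl n := by
  unfold gl
  have h0 : (0 : ℝ) ≤ (((2 : ℝ) ^ (n + 1) - 1) / (2 : ℝ) ^ (n + 1)) * π := by
    apply mul_nonneg _ Real.pi_pos.le
    apply div_nonneg _ (by positivity)
    nlinarith [one_le_two_pow (n + 1)]
  linarith

lemma gr_upper (n : ℕ) : gr n ≤ ((2 : ℝ) ^ (n + 3) - 1) * π := by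
  unfold gr
  have h0 : (((2 : ℝ) ^ (n + 2) - 1) / (2 : ℝ) ^ (n + 2)) * π ≤ 1 * π := by
    apply mul_le_mul_of_nonneg_right _ Real.pi_pos.le
    rw [div_le_one (by positivity)]
    nlinarith [one_le_two_pow (n + 2)]
  linarith

lemma gr_le_gl {i j : ℕ} (h : i < j) : gr i ≤ gl j := by
  have h1 := gr_upper i
  have h2 := gl_lower j
  have h3 : (2 : ℝ) ^ (i + 3) + 1 ≤ (2 : ℝ) ^ (j + 3) := by
    have h4 : (2 : ℝ) ^ (i + 4) ≤ 2 ^ (j + 3) := two_pow_le_two_pow (by omega)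
    have h5 : (1 : ℝ) ≤ 2 ^ (i + 3) := one_le_two_pow (i + 3)
    have h6 : (2 : ℝ) ^ (i + 4) = 2 * 2 ^ (i + 3) := by ring
    linarith
  nlinarith [Real.pi_pos]

lemma Gpiece_disjoint (i j : ℕ) (hij : i ≠ j) : Gpiece (i + 1) ∩ Gpiece (j + 1) = ∅ := by
  rcases lt_or_gt_of_ne hij with h | h
  · rw [Gpiece_succ, Gpiece_succ]
    exact Ico_disjoint (gr_le_gl h)
  · rw [Gpiece_succ, Gpiece_succ, Set.inter_comm]
    exact Ico_disjoint (gr_le_gl h)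

lemma Gpiece_measurable (n : ℕ) : MeasurableSet (Gpiece (n + 1)) := by
  rw [Gpiece_succ]; exact measurableSet_Ico

/-! ### Translated pieces -/

def code (n : ℕ) : ℤ := 1 - 2 ^ (n + 2)

lemma code_inj : Function.Injective code := by
  intro a b h
  unfold code at h
  have h2 : (2 : ℤ) ^ (a + 2) = 2 ^ (b + 2) := by omega
  have h3 : a + 2 = b + 2 := by
    have := fun (h : a + 2 < b + 2) => pow_lt_pow_right₀ (show (1:ℤ) < 2 by norm_num) h
    have := fun (h : b + 2 < a + 2) => pow_lt_pow_right₀ (show (1:ℤ) < 2 by norm_num) h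
    rcases lt_trichotomy (a + 2) (b + 2) with hl | he | hg
    · exact absurd h2 (ne_of_lt (pow_lt_pow_right₀ (by norm_num) hl))
    · exact he
    · exact absurd h2.symm (ne_of_lt (pow_lt_pow_right₀ (by norm_num) hg))
  omega

def trIco (n : ℕ) : Set ℝ :=
  Ico ((((2 : ℝ) ^ (n + 1) - 1) / (2 : ℝ) ^ (n + 1)) * π)
      ((((2 : ℝ) ^ (n + 2) - 1) / (2 : ℝ) ^ (n + 2)) * π)

lemma trans_image (n : ℕ) :
    (fun x => x + 2 * π * ((code n : ℤ) : ℝ)) '' Gpiece (n + 1) = trIco n := by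
  rw [Gpiece_succ, Set.image_add_const_Ico]
  have hc : ((code n : ℤ) : ℝ) = 1 - 2 ^ (n + 2) := by
    unfold code
    push_cast
    ring
  rw [hc]
  unfold gl gr trIco
  congr 1 <;> ring

lemma trIco_disjoint (i j : ℕ) (hij : i ≠ j) : trIco i ∩ trIco j = ∅ := by
  have key : ∀ {a b : ℕ}, a < b →
      (((2 : ℝ) ^ (a + 2) - 1) / (2 : ℝ) ^ (a + 2)) * π
        ≤ (((2 : ℝ) ^ (b + 1) - 1) / (2 : ℝ) ^ (b + 1)) * π := by
    intro a b hab
    apply mul_le_mul_of_nonneg_right _ Real.pi_pos.le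
    rw [div_form, div_form]
    have := inv_two_pow_le (show a + 2 ≤ b + 1 by omega)
    linarith
  unfold trIco
  rcases lt_or_gt_of_ne hij with h | h
  · exact Ico_disjoint (key h)
  · rw [Set.inter_comm]
    exact Ico_disjoint (key h)

lemma trIco_cover : (⋃ n : ℕ, trIco n) = Ico (π / 2) π := by
  have hπ := Real.pi_pos
  apply Set.Subset.antisymm
  · refine Set.iUnion_subset fun n => ?_
    unfold trIco
    intro x hx
    obtain ⟨h1, h2⟩ := hx
    constructor
    · have hlow : π / 2 ≤ (((2 : ℝ) ^ (n + 1) - 1) / (2 : ℝ) ^ (n + 1)) * π := by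
        rw [div_form]
        have : ((2 : ℝ) ^ (n + 1))⁻¹ ≤ ((2 : ℝ) ^ 1)⁻¹ := inv_two_pow_le (by omega)
        have h21 : ((2 : ℝ) ^ 1)⁻¹ = 1 / 2 := by norm_num
        nlinarith
      linarith
    · have hup : (((2 : ℝ) ^ (n + 2) - 1) / (2 : ℝ) ^ (n + 2)) * π ≤ π := by
        rw [div_form]
        nlinarith [inv_two_pow_pos (n + 2)]
      linarith
  · rintro x ⟨hx1, hx2⟩
    set y : ℝ := 1 - x / π with hy
    have hy1 : 0 < y := by
      have : x / π < 1 := (div_lt_one hπ).2 hx2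
      simp only [hy]
      linarith
    have hy2 : y ≤ 1 / 2 := by
      have : 1 / 2 ≤ x / π := by
        rw [le_div_iff₀ hπ]
        linarith
      simp only [hy]
      linarith
    have hyx : y * π = π - x := by
      rw [hy, sub_mul, one_mul, div_mul_cancel₀ x hπ.ne']
    obtain ⟨k, hk1, hk2⟩ := exists_mem_Ioc_zpow hy1 (one_lt_two (α := ℝ))
    -- hk1 : 2^k < y, hk2 : y ≤ 2^(k+1)
    have hk3 : k ≤ -2 := by
      by_contra hcon
      push_neg at hcon
      have h5 : (2 : ℝ) ^ (-1 : ℤ) ≤ (2 : ℝ) ^ k := zpow_le_zpow_right₀ one_le_two (by omega)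
      have h6 : ((2 : ℝ)) ^ (-1 : ℤ) = 1 / 2 := by norm_num
      rw [h6] at h5
      exact absurd (lt_of_lt_of_le (lt_of_le_of_lt h5 hk1) hy2) (lt_irrefl _)
    set n : ℕ := (-k - 2).toNat with hn
    have hnk : (n : ℤ) = -k - 2 := Int.toNat_of_nonneg (by omega)
    refine Set.mem_iUnion.2 ⟨n, ?_, ?_⟩
    · rw [div_form]
      have e1 : ((2 : ℝ) ^ (n + 1))⁻¹ = 2 ^ (k + 1) := by
        rw [← zpow_natCast (2 : ℝ) (n + 1), ← zpow_neg]
        congr 1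
        push_cast [hnk]
        ring
      rw [e1]
      have := mul_le_mul_of_nonneg_right hk2 hπ.le
      rw [hyx] at this
      linarith
    · rw [div_form]
      have e2 : ((2 : ℝ) ^ (n + 2))⁻¹ = 2 ^ k := by
        rw [← zpow_natCast (2 : ℝ) (n + 2), ← zpow_neg]
        congr 1
        push_cast [hnk]
        ring
      rw [e2]
      have := mul_lt_mul_of_pos_right hk1 hπ
      rw [hyx] at this
      linarith

/-! ### Dilated pieces -/

def dcode (n : ℕ) : ℤ := -(n : ℤ) - 2

lemma dcode_inj : Function.Injective dcode := by
  intro a b h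
  unfold dcode at h
  omega

lemma zpow_dcode (n : ℕ) : (2 : ℝ) ^ (dcode n) = ((2 : ℝ) ^ (n + 2))⁻¹ := by
  have h1 : dcode n = -(((n + 2 : ℕ) : ℤ)) := by
    unfold dcode
    push_cast
    ring
  rw [h1, zpow_neg, zpow_natCast]

def UUp (n : ℕ) : Set ℝ := (fun x => ((2 : ℝ) ^ ((n : ℕ) + 2))⁻¹ * x) '' Gpiece (n + 1)

def UU : Set ℝ := ⋃ n : ℕ, UUp n

lemma Fzero_eq : Fzero = Ico π (2 * π) \ UU := rfl

lemma UUp_eq (n : ℕ) :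
    UUp n = Ico ((2 - ((2 : ℝ) ^ (n + 2))⁻¹ - ((2 : ℝ) ^ (2 * n + 3))⁻¹) * π)
               ((2 - ((2 : ℝ) ^ (n + 2))⁻¹ - ((2 : ℝ) ^ (2 * n + 4))⁻¹) * π) := by
  unfold UUp
  rw [Gpiece_succ]
  have hpos : (0 : ℝ) < ((2 : ℝ) ^ (n + 2))⁻¹ := inv_two_pow_pos (n + 2)
  have ha0 : (0 : ℝ) < (2 : ℝ) ^ n := by positivity
  have e1 : (2 : ℝ) ^ (n + 1) = 2 * (2 : ℝ) ^ n := by ring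
  have e2 : (2 : ℝ) ^ (n + 2) = 4 * (2 : ℝ) ^ n := by ring
  have e3 : (2 : ℝ) ^ (n + 3) = 8 * (2 : ℝ) ^ n := by ring
  have e4 : (2 : ℝ) ^ (2 * n + 3) = 8 * ((2 : ℝ) ^ n) ^ 2 := by
    rw [two_mul, pow_add, pow_add]
    ring
  have e5 : (2 : ℝ) ^ (2 * n + 4) = 16 * ((2 : ℝ) ^ n) ^ 2 := by
    rw [two_mul, pow_add, pow_add]
    ring
  have hlo : ((2 : ℝ) ^ (n + 2))⁻¹ * gl n
      = (2 - ((2 : ℝ) ^ (n + 2))⁻¹ - ((2 : ℝ) ^ (2 * n + 3))⁻¹) * π := by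
    unfold gl
    rw [e1, e2, e3, e4]
    field_simp
    ring
  have hhi : ((2 : ℝ) ^ (n + 2))⁻¹ * gr n
      = (2 - ((2 : ℝ) ^ (n + 2))⁻¹ - ((2 : ℝ) ^ (2 * n + 4))⁻¹) * π := by
    unfold gr
    rw [e2, e3, e5]
    field_simp
    ring
  rw [show (fun x => ((2 : ℝ) ^ ((n : ℕ) + 2))⁻¹ * x) '' Ico (gl n) (gr n)
      = Ico (((2 : ℝ) ^ (n + 2))⁻¹ * gl n) (((2 : ℝ) ^ (n + 2))⁻¹ * gr n) from by
    simpa using Set.image_mul_left_Ico hpos (gl n) (gr n), hlo, hhi]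

lemma UUp_subset (n : ℕ) : UUp n ⊆ Ico (13 / 8 * π) (2 * π) := by
  rw [UUp_eq]
  have hπ := Real.pi_pos
  have e1 : ((2 : ℝ) ^ (n + 2))⁻¹ ≤ ((2 : ℝ) ^ 2)⁻¹ := inv_two_pow_le (by omega)
  have e2 : ((2 : ℝ) ^ (2 * n + 3))⁻¹ ≤ ((2 : ℝ) ^ 3)⁻¹ := inv_two_pow_le (by omega)
  have e3 := inv_two_pow_pos (n + 2)
  have e4 := inv_two_pow_pos (2 * n + 4)
  apply Set.Ico_subset_Ico
  · have h4 : ((2 : ℝ) ^ 2)⁻¹ = 1 / 4 := by norm_num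
    have h8 : ((2 : ℝ) ^ 3)⁻¹ = 1 / 8 := by norm_num
    nlinarith
  · nlinarith

lemma UU_subset : UU ⊆ Ico (13 / 8 * π) (2 * π) := Set.iUnion_subset UUp_subset

lemma UUp_disjoint (i j : ℕ) (hij : i ≠ j) : UUp i ∩ UUp j = ∅ := by
  have key : ∀ {a b : ℕ}, a < b →
      (2 - ((2 : ℝ) ^ (a + 2))⁻¹ - ((2 : ℝ) ^ (2 * a + 4))⁻¹) * π
        ≤ (2 - ((2 : ℝ) ^ (b + 2))⁻¹ - ((2 : ℝ) ^ (2 * b + 3))⁻¹) * π := by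
    intro a b hab
    apply mul_le_mul_of_nonneg_right _ Real.pi_pos.le
    have e1 : ((2 : ℝ) ^ (b + 2))⁻¹ ≤ ((2 : ℝ) ^ (a + 3))⁻¹ := inv_two_pow_le (by omega)
    have e2 : ((2 : ℝ) ^ (2 * b + 3))⁻¹ ≤ ((2 : ℝ) ^ (2 * a + 5))⁻¹ := inv_two_pow_le (by omega)
    have e3 : ((2 : ℝ) ^ (a + 3))⁻¹ = ((2 : ℝ) ^ (a + 2))⁻¹ * 2⁻¹ := by
      rw [pow_succ, mul_inv]
    have e4 : ((2 : ℝ) ^ (2 * a + 5))⁻¹ = ((2 : ℝ) ^ (2 * a + 4))⁻¹ * 2⁻¹ := by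
      rw [pow_succ, mul_inv]
    have e5 := inv_two_pow_pos (a + 2)
    have e6 := inv_two_pow_pos (2 * a + 4)
    nlinarith
  rcases lt_or_gt_of_ne hij with h | h
  · rw [UUp_eq, UUp_eq]
    exact Ico_disjoint (key h)
  · rw [UUp_eq, UUp_eq, Set.inter_comm]
    exact Ico_disjoint (key h)

lemma UUp_measurable (n : ℕ) : MeasurableSet (UUp n) := by
  rw [UUp_eq]; exact measurableSet_Ico

lemma UU_measurable : MeasurableSet UU := MeasurableSet.iUnion UUp_measurable

lemma Fzero_measurable : MeasurableSet Fzero := by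
  rw [Fzero_eq]
  exact measurableSet_Ico.diff UU_measurable

lemma UU_subset_Ico : UU ⊆ Ico π (2 * π) := by
  have hπ := Real.pi_pos
  refine UU_subset.trans (Set.Ico_subset_Ico ?_ le_rfl)
  nlinarith

lemma Fzero_union_UU : Fzero ∪ UU = Ico π (2 * π) := by
  rw [Fzero_eq, Set.diff_union_self]
  exact Set.union_eq_self_of_subset_right UU_subset_Ico

lemma Fzero_inter_UU : Fzero ∩ UU = ∅ := by
  rw [Fzero_eq]
  exact Set.diff_inter_self

lemma Fzero_subset : Fzero ⊆ Ico π (2 * π) := by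
  rw [Fzero_eq]
  exact Set.diff_subset

/-! ### The set `GU = ⋃ G_{n+1}` and its congruences -/

def GU : Set ℝ := ⋃ n : ℕ, Gpiece (n + 1)

lemma GU_measurable : MeasurableSet GU := MeasurableSet.iUnion Gpiece_measurable

lemma GU_trans : CongVia (fun (n : ℤ) (x : ℝ) => x + 2 * π * n) GU (Ico (π / 2) π) := by
  refine ⟨fun m => ⋃ n : ℕ, if m = code n then Gpiece (n + 1) else ∅, ?_, ?_, ?_⟩
  · intro m
    refine MeasurableSet.iUnion fun n => ?_
    split_ifs
    · exact Gpiece_measurable n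
    · exact MeasurableSet.empty
  · exact isAEPartition_encode code code_inj _
      (fun i j h => by rw [Gpiece_disjoint i j h]; simp)
  · have hfam : ∀ m : ℤ,
        (⋃ n : ℕ, if m = code n then trIco n else ∅)
          = (fun x => x + 2 * π * (m : ℝ)) '' (⋃ n : ℕ, if m = code n then Gpiece (n + 1) else ∅) := by
      intro m
      rw [Set.image_iUnion]
      apply Set.iUnion_congr
      intro n
      split_ifs with h
      · rw [h, trans_image n]
      · rw [Set.image_empty]
    refine IsAEPartition.congr_fam hfam ?_
    exact (isAEPartition_encode code code_inj trIco
      (fun i j h => by rw [trIco_disjoint i j h]; simp)).congr_target trIco_cover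

lemma GU_dil : CongVia (fun (n : ℤ) (x : ℝ) => (2 : ℝ) ^ n * x) GU UU := by
  refine ⟨fun m => ⋃ n : ℕ, if m = dcode n then Gpiece (n + 1) else ∅, ?_, ?_, ?_⟩
  · intro m
    refine MeasurableSet.iUnion fun n => ?_
    split_ifs
    · exact Gpiece_measurable n
    · exact MeasurableSet.empty
  · exact isAEPartition_encode dcode dcode_inj _
      (fun i j h => by rw [Gpiece_disjoint i j h]; simp)
  · have hfam : ∀ m : ℤ,
        (⋃ n : ℕ, if m = dcode n then UUp n else ∅)
          = (fun x => (2 : ℝ) ^ m * x) '' (⋃ n : ℕ, if m = dcode n then Gpiece (n + 1) else ∅) := by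
      intro m
      rw [Set.image_iUnion]
      apply Set.iUnion_congr
      intro n
      split_ifs with h
      · rw [h]
        unfold UUp
        have : (fun x => (2 : ℝ) ^ (dcode n) * x) = fun x => ((2 : ℝ) ^ ((n : ℕ) + 2))⁻¹ * x := by
          funext x
          rw [zpow_dcode]
        rw [this]
      · rw [Set.image_empty]
    refine IsAEPartition.congr_fam hfam ?_
    exact isAEPartition_encode dcode dcode_inj UUp
      (fun i j h => by rw [UUp_disjoint i j h]; simp)

/-! ### Properties of a good `G₀` -/

lemma good_bounds {G₀ : Set ℝ} (h : GoodGzero G₀) :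
    ∀ x ∈ G₀, (0 < x ∧ x < 3 * π) := by
  intro x hx
  have hπ := Real.pi_pos
  rcases h.2.1 hx with ⟨y, ⟨hy1, hy2⟩, rfl⟩ | ⟨y, hy, rfl⟩
  · dsimp only
    constructor <;> nlinarith
  · have := Fzero_subset hy
    obtain ⟨h1, h2⟩ := this
    dsimp only
    constructor <;> nlinarith

lemma GU_big : ∀ x ∈ GU, 6 * π ≤ x := by
  intro x hx
  have hπ := Real.pi_pos
  obtain ⟨n, hn⟩ := Set.mem_iUnion.1 hx
  rw [Gpiece_succ] at hn
  have h1 := hn.1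
  have h2 := gl_lower n
  have h3 : (8 : ℝ) ≤ 2 ^ (n + 3) := by
    have := two_pow_le_two_pow (show 3 ≤ n + 3 by omega)
    norm_num at this
    linarith
  nlinarith

lemma GU_pos : ∀ x ∈ GU, 0 < x := by
  intro x hx
  have := GU_big x hx
  nlinarith [Real.pi_pos]

/-! ### The set `E = G₀ ∪ GU` and `W = -E ∪ E` -/

section WithGzero

variable {G₀ : Set ℝ} (hG : GoodGzero G₀)

include hG

lemma G0_GU_disjoint : G₀ ∩ GU = ∅ := by
  ext x
  simp only [Set.mem_inter_iff, Set.mem_empty_iff_false, iff_false, not_and]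
  intro h1 h2
  have := (good_bounds hG x h1).2
  have := GU_big x h2
  nlinarith [Real.pi_pos]

lemma E_pos : ∀ x ∈ G₀ ∪ GU, 0 < x := by
  rintro x (hx | hx)
  · exact (good_bounds hG x hx).1
  · exact GU_pos x hx

lemma negE_E_disjoint : (-(G₀ ∪ GU)) ∩ (G₀ ∪ GU) = ∅ := by
  ext x
  simp only [Set.mem_inter_iff, Set.mem_empty_iff_false, iff_false, not_and, Set.mem_neg]
  intro h1 h2
  have := E_pos hG _ h1
  have := E_pos hG _ h2
  linarith

lemma E_trans : CongVia (fun (n : ℤ) (x : ℝ) => x + 2 * π * n) (G₀ ∪ GU) (Ico 0 π) := by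
  have h1 : CongVia (fun (n : ℤ) (x : ℝ) => x + 2 * π * n) G₀ (Ico 0 (π / 2)) :=
    transCongruent_iff.1 hG.2.2.1
  have h2 := GU_trans
  have h3 := h1.union h2 (by rw [G0_GU_disjoint hG]; simp)
    (by rw [Ico_disjoint (le_refl (π / 2))]; simp)
  refine h3.target_congr ?_
  exact Set.Ico_union_Ico_eq_Ico (by linarith [Real.pi_pos]) (by linarith [Real.pi_pos])

lemma E_dil : CongVia (fun (n : ℤ) (x : ℝ) => (2 : ℝ) ^ n * x) (G₀ ∪ GU) (Ico π (2 * π)) := by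
  have h1 : CongVia (fun (n : ℤ) (x : ℝ) => (2 : ℝ) ^ n * x) G₀ Fzero :=
    dilCongruent_iff.1 hG.2.2.2
  have h3 := h1.union GU_dil (by rw [G0_GU_disjoint hG]; simp)
    (by rw [Fzero_inter_UU]; simp)
  exact h3.target_congr Fzero_union_UU

lemma W_trans :
    CongVia (fun (n : ℤ) (x : ℝ) => x + 2 * π * n)
      (-(G₀ ∪ GU) ∪ (G₀ ∪ GU)) (Ioo (-π) π) := by
  have hE := E_trans hG
  have hneg : CongVia (fun (n : ℤ) (x : ℝ) => x + 2 * π * n) (-(G₀ ∪ GU)) (-(Ico 0 π)) := by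
    refine hE.neg (Equiv.neg ℤ) ?_
    intro n x
    simp only [Equiv.neg_apply]
    push_cast
    ring
  have hnegIco : -(Ico (0 : ℝ) π) = Ioc (-π) 0 := by
    rw [Set.neg_Ico]
    norm_num
  rw [hnegIco] at hneg
  have hU := hneg.union hE (by rw [negE_E_disjoint hG]; simp)
    (by
      refine measure_mono_null (t := {(0 : ℝ)}) ?_ (measure_singleton _)
      rintro x ⟨⟨_, h1⟩, h2, _⟩
      simp only [Set.mem_singleton_iff]
      linarith)
  refine hU.target_congr ?_
  ext x
  simp only [Set.mem_union, Set.mem_Ioc, Set.mem_Ico, Set.mem_Ioo]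
  constructor
  · rintro (⟨h1, h2⟩ | ⟨h1, h2⟩)
    · exact ⟨h1, by linarith [Real.pi_pos]⟩
    · exact ⟨by linarith [Real.pi_pos], h2⟩
  · rintro ⟨h1, h2⟩
    rcases le_or_gt x 0 with h | h
    · exact Or.inl ⟨h1, h⟩
    · exact Or.inr ⟨h.le, h2⟩

lemma W_dil :
    CongVia (fun (n : ℤ) (x : ℝ) => (2 : ℝ) ^ n * x)
      (-(G₀ ∪ GU) ∪ (G₀ ∪ GU)) Dfund := by
  have hE := E_dil hG
  have hneg : CongVia (fun (n : ℤ) (x : ℝ) => (2 : ℝ) ^ n * x)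
      (-(G₀ ∪ GU)) (-(Ico π (2 * π))) := by
    refine hE.neg (Equiv.refl ℤ) ?_
    intro n x
    simp only [Equiv.refl_apply]
    ring
  have hnegIco : -(Ico π (2 * π)) = Ioc (-(2 * π)) (-π) := Set.neg_Ico π (2 * π)
  rw [hnegIco] at hneg
  refine hneg.union hE (by rw [negE_E_disjoint hG]; simp) ?_
  refine measure_mono_null (t := (∅ : Set ℝ)) ?_ (by simp)
  rintro x ⟨⟨_, h1⟩, h2, _⟩
  exact absurd (le_trans h2 h1) (not_le.2 (by linarith [Real.pi_pos]))

lemma W_measurable : MeasurableSet (-(G₀ ∪ GU) ∪ (G₀ ∪ GU)) :=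
  ((hG.1.union GU_measurable).neg).union (hG.1.union GU_measurable)

end WithGzero

/-! ### Construction of a good `G₀` -/

def qk : ℕ → Set ℝ
  | 0 => Ico 0 (π / 4) ∪ (fun x => (4 : ℝ)⁻¹ * x) '' UU
  | (k + 1) => (fun x => π / 4 + x / 8) '' qk k

def qs : Set ℝ := ⋃ k, qk k

def Gz : Set ℝ := (Ico 0 (π / 2) \ qs) ∪ (fun x => x + 2 * π) '' qs

lemma image_shrink_eq (s : Set ℝ) :
    (fun x => π / 4 + x / 8) '' s = (fun x => 8 * (x - π / 4)) ⁻¹' s := by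
  ext y
  constructor
  · rintro ⟨x, hx, rfl⟩
    have h : 8 * (π / 4 + x / 8 - π / 4) = x := by ring
    show 8 * (π / 4 + x / 8 - π / 4) ∈ s
    rw [h]
    exact hx
  · intro hy
    exact ⟨8 * (y - π / 4), hy, by ring⟩

lemma image_quarter_eq (s : Set ℝ) :
    (fun x => (4 : ℝ)⁻¹ * x) '' s = (fun x => (4 : ℝ) * x) ⁻¹' s := by
  ext y
  constructor
  · rintro ⟨x, hx, rfl⟩
    have h : (4 : ℝ) * ((4 : ℝ)⁻¹ * x) = x := by
      rw [← mul_assoc]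
      norm_num
    show (4 : ℝ) * ((4 : ℝ)⁻¹ * x) ∈ s
    rw [h]
    exact hx
  · intro hy
    refine ⟨4 * y, hy, ?_⟩
    show (4 : ℝ)⁻¹ * (4 * y) = y
    rw [← mul_assoc]
    norm_num

lemma image_shift_eq (c : ℝ) (s : Set ℝ) :
    (fun x => x + c) '' s = (fun x => x - c) ⁻¹' s := by
  ext y
  constructor
  · rintro ⟨x, hx, rfl⟩
    simpa [Set.mem_preimage] using hx
  · intro hy
    exact ⟨y - c, hy, by ring⟩

lemma qk_measurable (k : ℕ) : MeasurableSet (qk k) := by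
  induction k with
  | zero =>
    show MeasurableSet (Ico 0 (π / 4) ∪ (fun x => (4 : ℝ)⁻¹ * x) '' UU)
    refine measurableSet_Ico.union ?_
    rw [image_quarter_eq]
    exact UU_measurable.preimage (measurable_id.const_mul 4)
  | succ k ih =>
    show MeasurableSet ((fun x => π / 4 + x / 8) '' qk k)
    rw [image_shrink_eq]
    exact ih.preimage (((measurable_id.sub_const (π / 4)).const_mul 8))

lemma qs_measurable : MeasurableSet qs := MeasurableSet.iUnion qk_measurable

lemma qk_subset (k : ℕ) : qk k ⊆ Ico 0 (π / 2) := by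
  have hπ := Real.pi_pos
  induction k with
  | zero =>
    rintro x (⟨h1, h2⟩ | ⟨y, hy, rfl⟩)
    · exact ⟨h1, by linarith⟩
    · obtain ⟨hy1, hy2⟩ := UU_subset hy
      constructor <;> nlinarith
  | succ k ih =>
    rintro x ⟨y, hy, rfl⟩
    obtain ⟨h1, h2⟩ := ih hy
    constructor <;> [nlinarith; nlinarith]

lemma qs_subset : qs ⊆ Ico 0 (π / 2) := Set.iUnion_subset qk_subset

lemma star :
    (fun x => (4 : ℝ) * x) '' qs
      = (Ico 0 π ∪ UU) ∪ (fun x => π + x / 2) '' qs := by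
  have h0 : (fun x => (4 : ℝ) * x) '' qk 0 = Ico 0 π ∪ UU := by
    show (fun x => (4 : ℝ) * x) '' (Ico 0 (π / 4) ∪ (fun x => (4 : ℝ)⁻¹ * x) '' UU)
      = Ico 0 π ∪ UU
    rw [Set.image_union]
    congr 1
    · have := Set.image_mul_left_Ico (show (0 : ℝ) < 4 by norm_num) 0 (π / 4)
      rw [show (fun x => (4 : ℝ) * x) '' Ico 0 (π / 4) = Ico (4 * 0) (4 * (π / 4)) from
        by simpa using this]
      congr 1 <;> ring
    · rw [← Set.image_comp,
        show ((fun x => (4 : ℝ) * x) ∘ fun x => (4 : ℝ)⁻¹ * x) = id from funext fun x => by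
          show (4 : ℝ) * ((4 : ℝ)⁻¹ * x) = x
          rw [← mul_assoc]
          norm_num,
        Set.image_id]
  have hs : ∀ k, (fun x => (4 : ℝ) * x) '' qk (k + 1) = (fun x => π + x / 2) '' qk k := by
    intro k
    show (fun x => (4 : ℝ) * x) '' ((fun x => π / 4 + x / 8) '' qk k) = _
    rw [← Set.image_comp,
      show ((fun x => (4 : ℝ) * x) ∘ fun x => π / 4 + x / 8) = fun x => π + x / 2 from
        funext fun x => by
          show (4 : ℝ) * (π / 4 + x / 8) = π + x / 2
          ring]
  apply Set.Subset.antisymm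
  · rw [show qs = ⋃ k, qk k from rfl, Set.image_iUnion]
    refine Set.iUnion_subset fun k => ?_
    cases k with
    | zero =>
      rw [h0]
      exact Set.subset_union_left
    | succ k =>
      rw [hs k]
      exact (Set.image_mono (Set.subset_iUnion qk k)).trans Set.subset_union_right
  · refine Set.union_subset ?_ ?_
    · rw [← h0]
      exact Set.image_mono (Set.subset_iUnion qk 0)
    · rw [show qs = ⋃ k, qk k from rfl, Set.image_iUnion, Set.image_iUnion]
      refine Set.iUnion_subset fun k => ?_
      rw [← hs k]
      exact Set.subset_iUnion (fun j => (fun x => (4 : ℝ) * x) '' qk j) (k + 1)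

lemma four_inj : Function.Injective (fun x : ℝ => 4 * x) := fun a b h => by
  have : (4 : ℝ) * a = 4 * b := h
  linarith

lemma mem_qs_of {x : ℝ} (hx : x ∈ Ico 0 (π / 2))
    (h4 : 4 * x ∈ Ico 0 π ∪ UU) : x ∈ qs := by
  have h1 : (4 : ℝ) * x ∈ (fun x => (4 : ℝ) * x) '' qs := by
    rw [star]
    exact Or.inl h4
  obtain ⟨y, hy, he⟩ := h1
  have : y = x := four_inj he
  rwa [← this]

lemma Ph_subset_Fzero : (fun x => π + x / 2) '' qs ⊆ Fzero := by
  rintro x ⟨y, hy, rfl⟩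
  obtain ⟨h1, h2⟩ := qs_subset hy
  have hπ := Real.pi_pos
  rw [Fzero_eq]
  constructor
  · constructor <;> nlinarith
  · intro hc
    obtain ⟨hc1, _⟩ := UU_subset hc
    nlinarith

lemma Gz_parts_disjoint : (Ico 0 (π / 2) \ qs) ∩ ((fun x => x + 2 * π) '' qs) = ∅ := by
  ext x
  simp only [Set.mem_inter_iff, Set.mem_empty_iff_false, iff_false, not_and]
  rintro ⟨⟨_, h1⟩, _⟩ ⟨y, hy, rfl⟩
  have := (qs_subset hy).1
  nlinarith [Real.pi_pos]

lemma good_Gz : GoodGzero Gz := by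
  have hπ := Real.pi_pos
  refine ⟨?_, ?_, ?_, ?_⟩
  · -- measurable
    refine (measurableSet_Ico.diff qs_measurable).union ?_
    rw [image_shift_eq]
    exact qs_measurable.preimage (measurable_id.sub_const (2 * π))
  · -- subset
    rintro x (⟨hx, hq⟩ | ⟨y, hy, rfl⟩)
    · right
      have hx4 : 4 * x ∈ Fzero := by
        have h1 : 4 * x ∉ Ico 0 π := fun hc => hq (mem_qs_of hx (Or.inl hc))
        have h2 : 4 * x ∉ UU := fun hc => hq (mem_qs_of hx (Or.inr hc))
        obtain ⟨hx0, hx1⟩ := hx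
        have hge : π ≤ 4 * x := by
          by_contra hcon
          push_neg at hcon
          exact h1 ⟨by linarith, hcon⟩
        rw [Fzero_eq]
        exact ⟨⟨hge, by linarith⟩, h2⟩
      refine ⟨4 * x, hx4, ?_⟩
      show (4 : ℝ)⁻¹ * (4 * x) = x
      rw [← mul_assoc]
      norm_num
    · left
      exact ⟨y, qs_subset hy, rfl⟩
  · -- TransCongruent
    rw [transCongruent_iff]
    refine ⟨fun m => if m = 0 then Ico 0 (π / 2) \ qs
      else if m = -1 then (fun x => x + 2 * π) '' qs else ∅, ?_, ?_, ?_⟩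
    · intro m
      dsimp only
      split_ifs
      · exact measurableSet_Ico.diff qs_measurable
      · rw [image_shift_eq]
        exact qs_measurable.preimage (measurable_id.sub_const (2 * π))
      · exact MeasurableSet.empty
    · refine isAEPartition_pair (by decide) rfl ?_
      rw [Gz_parts_disjoint]
      simp
    · have h00 : (fun x : ℝ => x + 2 * π * ((0 : ℤ) : ℝ)) '' (Ico 0 (π / 2) \ qs)
          = Ico 0 (π / 2) \ qs := by
        rw [show (fun x : ℝ => x + 2 * π * ((0 : ℤ) : ℝ)) = id from funext fun x => by
          show x + 2 * π * ((0 : ℤ) : ℝ) = x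
          push_cast
          ring, Set.image_id]
      have hm1 : (fun x : ℝ => x + 2 * π * ((-1 : ℤ) : ℝ)) '' ((fun x => x + 2 * π) '' qs)
          = qs := by
        rw [← Set.image_comp,
          show ((fun x : ℝ => x + 2 * π * ((-1 : ℤ) : ℝ)) ∘ fun x => x + 2 * π) = id from
            funext fun x => by
              show x + 2 * π + 2 * π * ((-1 : ℤ) : ℝ) = x
              push_cast
              ring, Set.image_id]
      refine IsAEPartition.congr_fam (fun m => ?_)
        (isAEPartition_pair (a := (0 : ℤ)) (b := -1) (by decide)
          (Set.diff_union_of_subset qs_subset)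
          (by rw [Set.diff_inter_self]; simp))
      by_cases h0 : m = 0
      · subst h0
        simp only [if_pos rfl]
        exact h00.symm
      · by_cases h1 : m = -1
        · subst h1
          simp only [if_neg h0, if_pos rfl, if_neg (by decide : (-1 : ℤ) ≠ 0)]
          exact hm1.symm
        · simp only [if_neg h0, if_neg h1]
          rw [Set.image_empty]
  · -- DilCongruent
    rw [dilCongruent_iff]
    refine ⟨fun m => if m = 2 then Ico 0 (π / 2) \ qs
      else if m = -1 then (fun x => x + 2 * π) '' qs else ∅, ?_, ?_, ?_⟩
    · intro m
      dsimp only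
      split_ifs
      · exact measurableSet_Ico.diff qs_measurable
      · rw [image_shift_eq]
        exact qs_measurable.preimage (measurable_id.sub_const (2 * π))
      · exact MeasurableSet.empty
    · refine isAEPartition_pair (by decide) rfl ?_
      rw [Gz_parts_disjoint]
      simp
    · have h2img : (fun x : ℝ => (2 : ℝ) ^ (2 : ℤ) * x) '' (Ico 0 (π / 2) \ qs)
          = Fzero \ (fun x => π + x / 2) '' qs := by
        have h4 : (fun x : ℝ => (2 : ℝ) ^ (2 : ℤ) * x) = fun x : ℝ => (4 : ℝ) * x := by
          funext x
          norm_num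
        rw [h4, Set.image_diff four_inj, star]
        have hIm : (fun x : ℝ => (4 : ℝ) * x) '' Ico 0 (π / 2) = Ico 0 (2 * π) := by
          have := Set.image_mul_left_Ico (show (0 : ℝ) < 4 by norm_num) 0 (π / 2)
          rw [show (fun x => (4 : ℝ) * x) '' Ico 0 (π / 2) = Ico (4 * 0) (4 * (π / 2)) from
            by simpa using this]
          congr 1 <;> ring
        rw [hIm, Fzero_eq]
        ext x
        simp only [Set.mem_diff, Set.mem_union, Set.mem_Ico, not_or]
        constructor
        · rintro ⟨⟨h1, h2⟩, h3⟩
          obtain ⟨⟨h4', h5⟩, h6⟩ := h3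
          push_neg at h4'
          exact ⟨⟨⟨h4' h1, h2⟩, h5⟩, h6⟩
        · rintro ⟨⟨⟨h1, h2⟩, h3⟩, h4⟩
          refine ⟨⟨by linarith, h2⟩, ⟨?_, h3⟩, h4⟩
          push_neg
          intro _
          linarith
      have hm1 : (fun x : ℝ => (2 : ℝ) ^ (-1 : ℤ) * x) '' ((fun x => x + 2 * π) '' qs)
          = (fun x => π + x / 2) '' qs := by
        rw [← Set.image_comp,
          show ((fun x : ℝ => (2 : ℝ) ^ (-1 : ℤ) * x) ∘ fun x => x + 2 * π)
              = fun x => π + x / 2 from funext fun x => by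
            show (2 : ℝ) ^ (-1 : ℤ) * (x + 2 * π) = π + x / 2
            rw [zpow_neg, zpow_one]
            ring]
      refine IsAEPartition.congr_fam (fun m => ?_)
        (isAEPartition_pair (a := (2 : ℤ)) (b := -1) (by decide)
          (Set.diff_union_of_subset Ph_subset_Fzero)
          (by rw [Set.diff_inter_self]; simp))
      by_cases h0 : m = 2
      · subst h0
        simp only [if_pos rfl]
        exact h2img.symm
      · by_cases h1 : m = -1
        · subst h1
          simp only [if_neg h0, if_pos rfl, if_neg (by decide : (-1 : ℤ) ≠ 2)]
          exact hm1.symm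
        · simp only [if_neg h0, if_neg h1]
          rw [Set.image_empty]

/-! ### Set negation helpers -/

lemma negneg (s : Set ℝ) : - -s = s := by
  ext x
  simp [Set.mem_neg]

lemma negunion (s t : Set ℝ) : -(s ∪ t) = -s ∪ -t := by
  ext x
  simp [Set.mem_neg]

end S11

open S11

/-- Example 7 of the paper.  There exists a set `G₀` as above, and
for any such `G₀` the symmetric set `W = (−⋃_{n≥0} G_n) ∪ (⋃_{n≥0} G_n)` is a dyadic
wavelet set with `W = −W`; in particular there exists an unbounded symmetric dyadic
wavelet set. -/
theorem stmt_11 :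
    (∃ G₀ : Set ℝ, GoodGzero G₀) ∧
    (∀ G₀ : Set ℝ, GoodGzero G₀ →
      IsDyadicWaveletSet
        (-(G₀ ∪ ⋃ n : ℕ, Gpiece (n + 1)) ∪ (G₀ ∪ ⋃ n : ℕ, Gpiece (n + 1))) ∧
      (-(G₀ ∪ ⋃ n : ℕ, Gpiece (n + 1)) ∪ (G₀ ∪ ⋃ n : ℕ, Gpiece (n + 1)))
        = -(-(G₀ ∪ ⋃ n : ℕ, Gpiece (n + 1)) ∪ (G₀ ∪ ⋃ n : ℕ, Gpiece (n + 1))) ∧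
      ∀ M : ℝ, 0 < M →
        0 < volume ((-(G₀ ∪ ⋃ n : ℕ, Gpiece (n + 1)) ∪ (G₀ ∪ ⋃ n : ℕ, Gpiece (n + 1)))
          \ Icc (-M) M)) := by
  constructor
  · exact ⟨Gz, good_Gz⟩
  · intro G₀ hG
    have hGU : (⋃ n : ℕ, Gpiece (n + 1)) = GU := rfl
    rw [hGU]
    refine ⟨⟨?_, ?_, ?_⟩, ?_, ?_⟩
    · exact W_measurable hG
    · exact ae_existsUnique_of_congruent _ tau_zero tau_add tau_null
        (Ioo (-π) π) trans_unique trans_exists (W_trans hG)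
    · exact ae_existsUnique_of_congruent _ delta_zero delta_add delta_null
        Dfund dil_unique dil_exists (W_dil hG)
    · ext x
      simp only [Set.mem_union, Set.mem_neg, neg_neg]
      tauto
    · intro M hM
      obtain ⟨n, hn⟩ := pow_unbounded_of_one_lt M (one_lt_two (α := ℝ))
      have hsub : Gpiece (n + 1) ⊆ (-(G₀ ∪ GU) ∪ (G₀ ∪ GU)) \ Icc (-M) M := by
        intro x hx
        refine ⟨Or.inr (Or.inr (Set.mem_iUnion.2 ⟨n, hx⟩)), ?_⟩
        intro hc
        rw [Gpiece_succ] at hx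
        have h1 := hx.1
        have h2 := gl_lower n
        have h3 : (2 : ℝ) ^ n ≤ 2 ^ (n + 3) - 2 := by
          have h4 : (2 : ℝ) ^ (n + 3) = 8 * 2 ^ n := by ring
          have h5 := one_le_two_pow n
          nlinarith
        have hπ : (1 : ℝ) ≤ π := by nlinarith [Real.pi_gt_three]
        have h6 : (0 : ℝ) ≤ 2 ^ (n + 3) - 2 := by
          nlinarith [one_le_two_pow n]
        have hMx : M < x := by
          calc M < 2 ^ n := hn
          _ ≤ 2 ^ (n + 3) - 2 := h3
          _ = (2 ^ (n + 3) - 2) * 1 := by ring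
          _ ≤ (2 ^ (n + 3) - 2) * π := by nlinarith
          _ ≤ gl n := h2
          _ ≤ x := h1
        exact absurd hc.2 (not_le.2 hMx)
      calc (0 : ENNReal) < volume (Gpiece (n + 1)) := by
            rw [Gpiece_succ, Real.volume_Ico]
            exact ENNReal.ofReal_pos.2 (sub_pos.2 (gl_lt_gr n))
      _ ≤ _ := measure_mono hsub
end
end

section
/- Let E = [−2π, −π) ∪ [π, 2π) and let G be a dyadic wavelet set with G ⊆ 2E ∪ E ∪ (1/2)E = [−4π, −π/2) ∪ [π/2, 4π). If G ∩ [3π, 4π) has positive Lebesgue measure, then (E, G) is not an interpolation pair; in fact, for a.e. s ∈ (G ∩ [3π, 4π)) − 2π one has (σ_E^G)²(s) = s + 2π + 4kπ for some integer k (depending on s), so (σ_E^G)²(s) ≠ s. -/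
open MeasureTheory Set
open scoped Real symmDiff

noncomputable section

lemma ae_affine_stmt12 {a b : ℝ} (ha : a ≠ 0) {P : ℝ → Prop}
    (h : ∀ᵐ t : ℝ ∂volume, P t) : ∀ᵐ s : ℝ ∂volume, P (a * s + b) := by
  rw [ae_iff] at h ⊢
  have hset : {s : ℝ | ¬ P (a * s + b)} = (a * ·) ⁻¹' ((b + ·) ⁻¹' {t | ¬ P t}) := by
    ext s; simp [add_comm]
  rw [hset, Real.volume_preimage_mul_left ha, measure_preimage_add, h, mul_zero]

/-- from Example 8 of the paper.  Let `E = [−2π, −π) ∪ [π, 2π)` and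
let `G` be a dyadic wavelet set with `G ⊆ 2E ∪ E ∪ (1/2)E = [−4π, −π/2) ∪ [π/2, 4π)`.
If `G ∩ [3π, 4π)` has positive measure, then for a.e. `s ∈ (G ∩ [3π, 4π)) − 2π` one
has `(σ_E^G)²(s) = s + 2π + 4kπ` for some integer `k`, so `(σ_E^G)²(s) ≠ s`; in
particular `(E, G)` is not an interpolation pair. -/
theorem stmt_12 (G : Set ℝ) (hG : IsDyadicWaveletSet G)
    (hGsub : G ⊆ Ico (-(4 * π)) (-(π / 2)) ∪ Ico (π / 2) (4 * π))
    (hpos : 0 < volume (G ∩ Ico (3 * π) (4 * π)))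
    (σ : ℝ → ℝ)
    (hσ : IsInterpolationMap (Ico (-(2 * π)) (-π) ∪ Ico π (2 * π)) G σ) :
    (∀ᵐ s : ℝ ∂volume, s ∈ (fun x => x - 2 * π) '' (G ∩ Ico (3 * π) (4 * π)) →
      (∃ k : ℤ, σ (σ s) = s + 2 * π + 4 * (k : ℝ) * π) ∧ σ (σ s) ≠ s) ∧
    ¬ (∀ᵐ s : ℝ ∂volume, σ (σ s) = s) := by
  obtain ⟨-, hG2, -⟩ := hG
  obtain ⟨-, -, h1, h4⟩ := hσ
  have h3 := h4 1
  have hπ : (0:ℝ) < π := Real.pi_pos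
  have e2 : ((2:ℝ) ^ (-(1:ℤ))) = 1/2 := by norm_num
  have e2' : ((2:ℝ) ^ (1:ℤ)) = 2 := by norm_num
  -- pull back h3 along s ↦ 1*s + 2π
  have h3' : ∀ᵐ s : ℝ ∂volume,
      ((2:ℝ) ^ (-(1:ℤ)) * (s + 2*π) ∈ (Ico (-(2 * π)) (-π) ∪ Ico π (2 * π)) →
        σ (s + 2*π) = (2:ℝ) ^ (1:ℤ) * σ ((2:ℝ) ^ (-(1:ℤ)) * (s + 2*π))) := by
    have := ae_affine_stmt12 (a := 1) (b := 2*π) one_ne_zero h3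
    simpa using this
  -- pull back h1 along s ↦ (1/2)*s + π
  have h1' : ∀ᵐ s : ℝ ∂volume,
      ((1/2) * s + π ∈ (Ico (-(2 * π)) (-π) ∪ Ico π (2 * π)) →
        σ ((1/2) * s + π) ∈ G ∧ ∃ n : ℤ, σ ((1/2) * s + π) - ((1/2) * s + π) = 2 * Real.pi * n) :=
    ae_affine_stmt12 (a := 1/2) (b := π) (by norm_num) h1
  have main : ∀ᵐ s : ℝ ∂volume, s ∈ (fun x => x - 2 * π) '' (G ∩ Ico (3 * π) (4 * π)) →
      (∃ k : ℤ, σ (σ s) = s + 2 * π + 4 * (k : ℝ) * π) ∧ σ (σ s) ≠ s := by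
    filter_upwards [h1, hG2, h3', h1'] with s hs1 hs2 hs3 hs1' hmem
    obtain ⟨x, ⟨hxG, hx3, hx4⟩, hxs⟩ := hmem
    have hx : x = s + 2*π := by simp at hxs; linarith
    subst hx
    have hsπ : π ≤ s := by linarith
    have hs2π : s < 2*π := by linarith
    have hsE : s ∈ (Ico (-(2 * π)) (-π) ∪ Ico π (2 * π)) := Or.inr ⟨hsπ, hs2π⟩
    obtain ⟨hσsG, n₁, hn₁⟩ := hs1 hsE
    obtain ⟨n, hn, hnu⟩ := hs2
    have hv1 : n₁ = n := hnu n₁ (show s + 2 * Real.pi * (n₁:ℝ) ∈ G by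
      rw [show s + 2 * Real.pi * (n₁:ℝ) = σ s by linarith]; exact hσsG)
    have hv2 : (1:ℤ) = n := hnu 1 (show s + 2 * Real.pi * ((1:ℤ):ℝ) ∈ G by
      rw [show s + 2 * Real.pi * ((1:ℤ):ℝ) = s + 2*π by push_cast; ring]; exact hxG)
    have hσs : σ s = s + 2*π := by
      have : n₁ = 1 := hv1.trans hv2.symm
      rw [this] at hn₁; push_cast at hn₁; linarith
    -- dilation step
    have hhalf : (2:ℝ) ^ (-(1:ℤ)) * (s + 2*π) = (1/2)*s + π := by rw [e2]; ring
    have hmemE : (1/2)*s + π ∈ (Ico (-(2 * π)) (-π) ∪ Ico π (2 * π)) :=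
      Or.inr ⟨by linarith, by linarith⟩
    have hdil : σ (s + 2*π) = 2 * σ ((1/2)*s + π) := by
      have := hs3 (by rw [hhalf]; exact hmemE)
      rw [hhalf, e2'] at this; exact this
    obtain ⟨-, m, hm⟩ := hs1' hmemE
    have hval : σ (σ s) = s + 2*π + 4*(m:ℝ)*π := by
      rw [hσs, hdil]
      have : σ ((1/2)*s + π) = (1/2)*s + π + 2*π*m := by linarith
      rw [this]; ring
    refine ⟨⟨m, hval⟩, ?_⟩
    rw [hval]
    intro hcon
    have : (4:ℝ)*(m:ℝ) = -2 := by
      have := mul_left_cancel₀ (ne_of_gt hπ) (show π * (4*(m:ℝ)) = π * (-2) by linarith)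
      linarith
    have : (4*m : ℤ) = -2 := by exact_mod_cast this
    omega
  refine ⟨main, fun hae => ?_⟩
  have h0 : ∀ᵐ s : ℝ ∂volume, s ∉ (fun x => x - 2 * π) '' (G ∩ Ico (3 * π) (4 * π)) := by
    filter_upwards [main, hae] with s hA hB hmem
    exact (hA hmem).2 hB
  rw [ae_iff] at h0
  simp only [not_not] at h0
  have himg : (fun x => x - 2 * π) '' (G ∩ Ico (3 * π) (4 * π))
      = ((2*π) + ·) ⁻¹' (G ∩ Ico (3 * π) (4 * π)) := by
    ext y
    simp only [Set.mem_image, Set.mem_preimage]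
    constructor
    · rintro ⟨z, hz, rfl⟩; rwa [show 2*π + (z - 2*π) = z by ring]
    · intro hy; exact ⟨2*π + y, hy, by ring⟩
  rw [Set.setOf_mem_eq, himg, measure_preimage_add] at h0
  exact absurd h0 (ne_of_gt hpos)
end
end

section
/- Let E = [−2π, −π) ∪ [π, 2π) and let G be a dyadic wavelet set with G ⊆ (E − 2π) ∪ E ∪ (E + 2π) = [−4π, −3π) ∪ [−2π, 2π) ∪ [3π, 4π). If G ∩ [−π, π) has positive Lebesgue measure, then (E, G) is not an interpolation pair; in fact, if G ∩ [0, π) has positive measure then for a.e. s ∈ (G ∩ [0, π)) − 2π one has (σ_E^G)²(s) = s + 2π + 2^{-k}·2nπ for some integer k > 0 and some n ∈ {−1, 0, 1}, so (σ_E^G)²(s) ≠ s. -/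
open MeasureTheory Set
open scoped Real symmDiff

noncomputable section

/- ---------------- auxiliary lemmas ---------------- -/

lemma aux_two_m_lt {m : ℤ} (a : ℤ) (h : 2 * π * (m : ℝ) < π * a) : 2 * m < a := by
  have h2 : π * (2 * (m : ℝ)) < π * (a : ℝ) := by linarith
  have h3 := (mul_lt_mul_iff_right₀ Real.pi_pos).mp h2
  exact_mod_cast h3

lemma aux_two_m_gt {m : ℤ} (a : ℤ) (h : π * a < 2 * π * (m : ℝ)) : a < 2 * m := by
  have h2 : π * (a : ℝ) < π * (2 * (m : ℝ)) := by linarith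
  have h3 := (mul_lt_mul_iff_right₀ Real.pi_pos).mp h2
  exact_mod_cast h3

lemma aux_dyadic_pos (x : ℝ) (h0 : 0 < x) (h1 : x < π) :
    ∃ k : ℤ, 0 < k ∧ π ≤ (2 : ℝ) ^ k * x ∧ (2 : ℝ) ^ k * x < 2 * π := by
  classical
  have hex : ∃ n : ℕ, π ≤ (2 : ℝ) ^ n * x := by
    obtain ⟨n, hn⟩ := pow_unbounded_of_one_lt (π / x) (by norm_num : (1 : ℝ) < 2)
    refine ⟨n, ?_⟩
    rw [div_lt_iff₀ h0] at hn
    nlinarith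
  set k := Nat.find hex with hkdef
  have hk := Nat.find_spec hex
  rw [← hkdef] at hk
  have hk0 : k ≠ 0 := by
    intro h
    rw [h] at hk
    simp at hk
    linarith
  have hkm : ¬ π ≤ (2 : ℝ) ^ (k - 1) * x :=
    Nat.find_min hex (Nat.sub_lt (Nat.pos_of_ne_zero hk0) one_pos)
  push_neg at hkm
  have hstep : (2 : ℝ) ^ k = 2 * (2 : ℝ) ^ (k - 1) := by
    rw [← pow_succ']
    congr 1
    omega
  refine ⟨(k : ℤ), by exact_mod_cast Nat.pos_of_ne_zero hk0, ?_, ?_⟩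
  · rw [zpow_natCast]; exact hk
  · rw [zpow_natCast, hstep, mul_assoc]; linarith

lemma aux_dyadic_neg (x : ℝ) (h0 : -π ≤ x) (h1 : x < 0) :
    ∃ k : ℤ, 0 < k ∧ -(2 * π) ≤ (2 : ℝ) ^ k * x ∧ (2 : ℝ) ^ k * x < -π := by
  classical
  have hx0 : 0 < -x := by linarith
  have hex : ∃ n : ℕ, π < (2 : ℝ) ^ n * (-x) := by
    obtain ⟨n, hn⟩ := pow_unbounded_of_one_lt (π / (-x)) (by norm_num : (1 : ℝ) < 2)
    refine ⟨n, ?_⟩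
    rw [div_lt_iff₀ hx0] at hn
    nlinarith
  set k := Nat.find hex with hkdef
  have hk := Nat.find_spec hex
  rw [← hkdef] at hk
  have hk0 : k ≠ 0 := by
    intro h
    rw [h] at hk
    simp at hk
    linarith
  have hkm : ¬ π < (2 : ℝ) ^ (k - 1) * (-x) :=
    Nat.find_min hex (Nat.sub_lt (Nat.pos_of_ne_zero hk0) one_pos)
  push_neg at hkm
  have hstep : (2 : ℝ) ^ k = 2 * (2 : ℝ) ^ (k - 1) := by
    rw [← pow_succ']
    congr 1
    omega
  refine ⟨(k : ℤ), by exact_mod_cast Nat.pos_of_ne_zero hk0, ?_, ?_⟩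
  · rw [zpow_natCast]
    have : (2 : ℝ) ^ k * (-x) ≤ 2 * π := by rw [hstep, mul_assoc]; linarith
    linarith
  · rw [zpow_natCast]
    have : π < (2 : ℝ) ^ k * (-x) := hk
    linarith

/-- Core pointwise lemma: if `g ∈ [-π, π) \ {0}` and the interpolation relations hold at the
relevant dilates of `g`, then `σ g = g + 2^{-k}·2nπ` with `k ≥ 1` and `n ∈ {-1,0,1}`. -/
lemma aux_core (G : Set ℝ)
    (hGsub : G ⊆ Ico (-(4 * π)) (-(3 * π)) ∪ Ico (-(2 * π)) (2 * π) ∪ Ico (3 * π) (4 * π))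
    (σ : ℝ → ℝ) (g : ℝ) (hg1 : -π ≤ g) (hg2 : g < π) (hg0 : g ≠ 0)
    (hdil : ∀ k : ℤ, (2 : ℝ) ^ k * g ∈ Ico (-(2 * π)) (-π) ∪ Ico π (2 * π) →
      σ g = (2 : ℝ) ^ (-k) * σ ((2 : ℝ) ^ k * g))
    (hEG : ∀ k : ℤ, (2 : ℝ) ^ k * g ∈ Ico (-(2 * π)) (-π) ∪ Ico π (2 * π) →
      σ ((2 : ℝ) ^ k * g) ∈ G ∧ ∃ n : ℤ, σ ((2 : ℝ) ^ k * g) - (2 : ℝ) ^ k * g = 2 * π * n) :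
    ∃ k : ℤ, 0 < k ∧ ∃ n : ℤ, (n = -1 ∨ n = 0 ∨ n = 1) ∧
      σ g = g + (2 : ℝ) ^ (-k) * (2 * (n : ℝ) * π) := by
  have hπ := Real.pi_pos
  have hmain : ∃ k : ℤ, 0 < k ∧ (2 : ℝ) ^ k * g ∈ Ico (-(2 * π)) (-π) ∪ Ico π (2 * π) := by
    rcases lt_or_gt_of_ne hg0 with hneg | hpos
    · obtain ⟨k, hk, hl, hu⟩ := aux_dyadic_neg g hg1 hneg
      exact ⟨k, hk, Or.inl ⟨hl, hu⟩⟩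
    · obtain ⟨k, hk, hl, hu⟩ := aux_dyadic_pos g hpos hg2
      exact ⟨k, hk, Or.inr ⟨hl, hu⟩⟩
  obtain ⟨k, hk, hmem⟩ := hmain
  obtain ⟨huG, m, hm⟩ := hEG k hmem
  have hσg := hdil k hmem
  set t := (2 : ℝ) ^ k * g with ht
  set u := σ t with hu
  have hrange : m = -1 ∨ m = 0 ∨ m = 1 := by
    rcases hGsub huG with (h1 | h1) | h1 <;> rcases hmem with h2 | h2
    · -- u ∈ [-4π,-3π), t ∈ [-2π,-π) : m = -1
      have ha := aux_two_m_lt (-1) (by push_cast; linarith [h1.2, h2.1, hm])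
      have hb := aux_two_m_gt (-3) (by push_cast; linarith [h1.1, h2.2, hm])
      omega
    · -- u ∈ [-4π,-3π), t ∈ [π,2π) : impossible
      have ha := aux_two_m_lt (-4) (by push_cast; linarith [h1.2, h2.1, hm])
      have hb := aux_two_m_gt (-6) (by push_cast; linarith [h1.1, h2.2, hm])
      omega
    · -- u ∈ [-2π,2π), t ∈ [-2π,-π) : m ∈ {0,1}
      have ha := aux_two_m_lt 4 (by push_cast; linarith [h1.2, h2.1, hm])
      have hb := aux_two_m_gt (-1) (by push_cast; linarith [h1.1, h2.2, hm])
      omega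
    · -- u ∈ [-2π,2π), t ∈ [π,2π) : m ∈ {-1,0}
      have ha := aux_two_m_lt 1 (by push_cast; linarith [h1.2, h2.1, hm])
      have hb := aux_two_m_gt (-4) (by push_cast; linarith [h1.1, h2.2, hm])
      omega
    · -- u ∈ [3π,4π), t ∈ [-2π,-π) : impossible
      have ha := aux_two_m_lt 6 (by push_cast; linarith [h1.2, h2.1, hm])
      have hb := aux_two_m_gt 4 (by push_cast; linarith [h1.1, h2.2, hm])
      omega
    · -- u ∈ [3π,4π), t ∈ [π,2π) : m = 1
      have ha := aux_two_m_lt 3 (by push_cast; linarith [h1.2, h2.1, hm])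
      have hb := aux_two_m_gt 1 (by push_cast; linarith [h1.1, h2.2, hm])
      omega
  refine ⟨k, hk, m, hrange, ?_⟩
  have hzz : (2 : ℝ) ^ (-k) * (2 : ℝ) ^ k = 1 := by
    rw [← zpow_add₀ (by norm_num : (2 : ℝ) ≠ 0)]
    simp
  have hut : u = t + 2 * π * m := by linarith
  calc σ g = (2 : ℝ) ^ (-k) * u := hσg
    _ = (2 : ℝ) ^ (-k) * ((2 : ℝ) ^ k * g + 2 * π * m) := by rw [hut]
    _ = ((2 : ℝ) ^ (-k) * (2 : ℝ) ^ k) * g + (2 : ℝ) ^ (-k) * (2 * (m : ℝ) * π) := by ring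
    _ = g + (2 : ℝ) ^ (-k) * (2 * (m : ℝ) * π) := by rw [hzz, one_mul]

lemma aux_qmp_affine (a b : ℝ) (ha : a ≠ 0) :
    Measure.QuasiMeasurePreserving (fun x : ℝ => a * (x + b)) volume volume := by
  refine ⟨by fun_prop, ?_⟩
  have hcomp : (fun x : ℝ => a * (x + b)) = (fun x : ℝ => a * x) ∘ (fun x : ℝ => x + b) := rfl
  rw [hcomp, ← Measure.map_map (measurable_const_mul a) (measurable_add_const b),
    (measurePreserving_add_right volume b).map_eq, Real.map_volume_mul_left ha]
  exact Measure.smul_absolutelyContinuous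

/-- from Example 9 of the paper.  Let `E = [−2π, −π) ∪ [π, 2π)` and
let `G` be a dyadic wavelet set with
`G ⊆ (E − 2π) ∪ E ∪ (E + 2π) = [−4π, −3π) ∪ [−2π, 2π) ∪ [3π, 4π)`.  If `G ∩ [−π, π)`
has positive measure then `(E, G)` is not an interpolation pair; in fact, if
`G ∩ [0, π)` has positive measure, then for a.e. `s ∈ (G ∩ [0, π)) − 2π` one has
`(σ_E^G)²(s) = s + 2π + 2^{−k}·2nπ` for some integer `k > 0` and some
`n ∈ {−1, 0, 1}`, so `(σ_E^G)²(s) ≠ s`. -/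
theorem stmt_14 (G : Set ℝ) (hG : IsDyadicWaveletSet G)
    (hGsub : G ⊆ Ico (-(4 * π)) (-(3 * π)) ∪ Ico (-(2 * π)) (2 * π) ∪ Ico (3 * π) (4 * π))
    (σ : ℝ → ℝ)
    (hσ : IsInterpolationMap (Ico (-(2 * π)) (-π) ∪ Ico π (2 * π)) G σ) :
    (0 < volume (G ∩ Ico (-π) π) → ¬ (∀ᵐ s : ℝ ∂volume, σ (σ s) = s)) ∧
    (0 < volume (G ∩ Ico 0 π) →
      ∀ᵐ s : ℝ ∂volume, s ∈ (fun x => x - 2 * π) '' (G ∩ Ico 0 π) →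
        (∃ k : ℤ, 0 < k ∧ ∃ n : ℤ, (n = -1 ∨ n = 0 ∨ n = 1) ∧
          σ (σ s) = s + 2 * π + (2 : ℝ) ^ (-k) * (2 * (n : ℝ) * π)) ∧
        σ (σ s) ≠ s) := by
  have hπ := Real.pi_pos
  obtain ⟨hGm, hGt, -⟩ := hG
  obtain ⟨hσm, hσ0, hEG, hDil⟩ := hσ
  set E : Set ℝ := Ico (-(2 * π)) (-π) ∪ Ico π (2 * π) with hE
  -- dilation relation with positive exponent on the inside
  have hDil' : ∀ k : ℤ, ∀ᵐ s : ℝ ∂volume, (2 : ℝ) ^ k * s ∈ E →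
      σ s = (2 : ℝ) ^ (-k) * σ ((2 : ℝ) ^ k * s) := by
    intro k
    have := hDil (-k)
    simpa [neg_neg] using this
  -- transported a.e. facts, for a shift by b
  have hA3 : ∀ b : ℝ, ∀ᵐ s : ℝ ∂volume, ∀ k : ℤ, (2 : ℝ) ^ k * (s + b) ∈ E →
      σ (s + b) = (2 : ℝ) ^ (-k) * σ ((2 : ℝ) ^ k * (s + b)) := by
    intro b
    rw [MeasureTheory.ae_all_iff]
    intro k
    exact (measurePreserving_add_right volume b).quasiMeasurePreserving.ae (hDil' k)
  have hA4 : ∀ b : ℝ, ∀ᵐ s : ℝ ∂volume, ∀ k : ℤ, (2 : ℝ) ^ k * (s + b) ∈ E →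
      σ ((2 : ℝ) ^ k * (s + b)) ∈ G ∧
        ∃ n : ℤ, σ ((2 : ℝ) ^ k * (s + b)) - (2 : ℝ) ^ k * (s + b) = 2 * π * n := by
    intro b
    rw [MeasureTheory.ae_all_iff]
    intro k
    exact (aux_qmp_affine ((2 : ℝ) ^ k) b (by positivity)).ae hEG
  -- Part 2 (unconditional form): a.e. statement on (G ∩ [0,π)) - 2π
  have hpart2 : ∀ᵐ s : ℝ ∂volume, s ∈ (fun x => x - 2 * π) '' (G ∩ Ico 0 π) →
      (∃ k : ℤ, 0 < k ∧ ∃ n : ℤ, (n = -1 ∨ n = 0 ∨ n = 1) ∧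
        σ (σ s) = s + 2 * π + (2 : ℝ) ^ (-k) * (2 * (n : ℝ) * π)) ∧
      σ (σ s) ≠ s := by
    have hA5 : ∀ᵐ s : ℝ ∂volume, s ≠ -(2 * π) := by
      rw [MeasureTheory.ae_iff]
      have : {s : ℝ | ¬ s ≠ -(2 * π)} = {-(2 * π)} := by ext x; simp
      rw [this]
      exact measure_singleton _
    filter_upwards [hGt, hEG, hA3 (2 * π), hA4 (2 * π), hA5] with s h1 h2 h3 h4 h5 hmem
    obtain ⟨g, hgG, hgeq⟩ := hmem
    simp only [] at hgeq
    obtain ⟨hgG', hg0, hgπ⟩ : g ∈ G ∧ 0 ≤ g ∧ g < π := ⟨hgG.1, hgG.2.1, hgG.2.2⟩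
    have hgs : g = s + 2 * π := by linarith [hgeq]
    have hgne : g ≠ 0 := by
      intro h
      exact h5 (by linarith)
    have hgpos : 0 < g := lt_of_le_of_ne hg0 (Ne.symm hgne)
    -- s ∈ E
    have hsE : s ∈ E := Or.inl ⟨by linarith, by linarith⟩
    obtain ⟨hσsG, n₀, hn₀⟩ := h2 hsE
    -- σ s = g by uniqueness of the translate of s landing in G
    have hpred1 : s + 2 * π * ((1 : ℤ) : ℝ) ∈ G := by
      push_cast
      rw [show s + 2 * π * 1 = g by linarith]
      exact hgG'
    have hpredn : s + 2 * π * (n₀ : ℝ) ∈ G := by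
      rw [show s + 2 * π * (n₀ : ℝ) = σ s by linarith]
      exact hσsG
    obtain ⟨nstar, -, huniq⟩ := h1
    have hn1 : n₀ = 1 := (huniq n₀ hpredn).trans (huniq 1 hpred1).symm
    have hσs : σ s = g := by
      rw [hn1] at hn₀
      push_cast at hn₀
      linarith
    -- apply core lemma at g = s + 2π
    rw [hgs] at hgpos hgπ
    have hcore := aux_core G hGsub σ (s + 2 * π) (by linarith) hgπ (by linarith)
      (fun k hk => h3 k hk) (fun k hk => h4 k hk)
    obtain ⟨k, hk, n, hn, hσσ⟩ := hcore
    have hform : σ (σ s) = s + 2 * π + (2 : ℝ) ^ (-k) * (2 * (n : ℝ) * π) := by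
      rw [hσs, hgs, hσσ]
    refine ⟨⟨k, hk, n, hn, hform⟩, ?_⟩
    -- σ (σ s) ≠ s
    intro heq
    rw [hform] at heq
    have h0 : 2 * π + (2 : ℝ) ^ (-k) * (2 * (n : ℝ) * π) = 0 := by linarith
    have h2k : (2 : ℝ) ≤ (2 : ℝ) ^ k := by
      have := zpow_le_zpow_right₀ (by norm_num : (1 : ℝ) ≤ 2) hk
      simpa using this
    have hzz : (2 : ℝ) ^ k * (2 : ℝ) ^ (-k) = 1 := by
      rw [← zpow_add₀ (by norm_num : (2 : ℝ) ≠ 0)]; simp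
    have h4' : 2 * (n : ℝ) * π = (2 : ℝ) ^ k * (-(2 * π)) := by
      have hx := congrArg (fun x => (2 : ℝ) ^ k * x)
        (show (2 : ℝ) ^ (-k) * (2 * (n : ℝ) * π) = -(2 * π) by linarith)
      simp only [← mul_assoc, hzz, one_mul] at hx
      exact hx
    have hmul : 2 * (2 * π) ≤ (2 : ℝ) ^ k * (2 * π) :=
      mul_le_mul_of_nonneg_right h2k (by positivity)
    rcases hn with rfl | rfl | rfl <;> push_cast at h4' <;> nlinarith
  refine ⟨?_, fun _ => hpart2⟩
  -- Part 1
  intro hpos hid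
  -- analogous a.e. statement for G ∩ [-π, 0)
  have hpart2' : ∀ᵐ s : ℝ ∂volume, s + -(2 * π) ∈ G ∩ Ico (-π) 0 → σ (σ s) ≠ s := by
    filter_upwards [hGt, hEG, hA3 (-(2 * π)), hA4 (-(2 * π))] with s h1 h2 h3 h4 hmem
    obtain ⟨hgG', hg1, hg2⟩ : s + -(2 * π) ∈ G ∧ -π ≤ s + -(2 * π) ∧ s + -(2 * π) < 0 :=
      ⟨hmem.1, hmem.2.1, hmem.2.2⟩
    set g : ℝ := s + -(2 * π) with hgdef
    have hsE : s ∈ E := Or.inr ⟨by linarith, by linarith⟩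
    obtain ⟨hσsG, n₀, hn₀⟩ := h2 hsE
    have hpred1 : s + 2 * π * ((-1 : ℤ) : ℝ) ∈ G := by
      push_cast
      rw [show s + 2 * π * (-1) = g by rw [hgdef]; ring]
      exact hgG'
    have hpredn : s + 2 * π * (n₀ : ℝ) ∈ G := by
      rw [show s + 2 * π * (n₀ : ℝ) = σ s by linarith]
      exact hσsG
    obtain ⟨nstar, -, huniq⟩ := h1
    have hn1 : n₀ = -1 := (huniq n₀ hpredn).trans (huniq (-1) hpred1).symm
    have hσs : σ s = g := by
      rw [hn1] at hn₀
      push_cast at hn₀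
      rw [hgdef]
      linarith
    have hcore := aux_core G hGsub σ g hg1 (by linarith) (by linarith)
      (fun k hk => h3 k hk) (fun k hk => h4 k hk)
    obtain ⟨k, hk, n, hn, hσσ⟩ := hcore
    intro heq
    rw [hσs, hσσ, hgdef] at heq
    have h0 : (2 : ℝ) ^ (-k) * (2 * (n : ℝ) * π) = 2 * π := by linarith
    have h2k : (2 : ℝ) ≤ (2 : ℝ) ^ k := by
      have := zpow_le_zpow_right₀ (by norm_num : (1 : ℝ) ≤ 2) hk
      simpa using this
    have hzz : (2 : ℝ) ^ k * (2 : ℝ) ^ (-k) = 1 := by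
      rw [← zpow_add₀ (by norm_num : (2 : ℝ) ≠ 0)]; simp
    have h4' : 2 * (n : ℝ) * π = (2 : ℝ) ^ k * 2 * π := by
      have hx := congrArg (fun x => (2 : ℝ) ^ k * x) h0
      simp only [← mul_assoc, hzz, one_mul] at hx
      exact hx
    have hmul : 2 * (2 * π) ≤ (2 : ℝ) ^ k * (2 * π) :=
      mul_le_mul_of_nonneg_right h2k (by positivity)
    rcases hn with rfl | rfl | rfl <;> push_cast at h4' <;> nlinarith
  -- split the positive-measure hypothesis
  have hsplit : 0 < volume (G ∩ Ico (-π) 0) ∨ 0 < volume (G ∩ Ico 0 π) := by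
    by_contra hcon
    push_neg at hcon
    obtain ⟨ha, hb⟩ := hcon
    have ha0 : volume (G ∩ Ico (-π) 0) = 0 := le_antisymm ha bot_le
    have hb0 : volume (G ∩ Ico 0 π) = 0 := le_antisymm hb bot_le
    have hsub : G ∩ Ico (-π) π ⊆ (G ∩ Ico (-π) 0) ∪ (G ∩ Ico 0 π) := by
      intro x hx
      rcases lt_or_ge x 0 with h | h
      · exact Or.inl ⟨hx.1, hx.2.1, h⟩
      · exact Or.inr ⟨hx.1, h, hx.2.2⟩
    have := (measure_mono (μ := volume) hsub).trans (measure_union_le (μ := volume) _ _)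
    rw [ha0, hb0] at this
    simp at this
    rw [this] at hpos
    exact lt_irrefl _ hpos
  rcases hsplit with hcase | hcase
  · -- negative side
    have hae : ∀ᵐ s : ℝ ∂volume, s + -(2 * π) ∉ G ∩ Ico (-π) 0 := by
      filter_upwards [hpart2', hid] with s h1 h2 hmem
      exact h1 hmem h2
    have hnull : volume ((fun x : ℝ => x + -(2 * π)) ⁻¹' (G ∩ Ico (-π) 0)) = 0 := by
      have h := hae
      rw [MeasureTheory.ae_iff] at h
      simpa [Set.preimage] using h
    rw [measure_preimage_add_right] at hnull
    rw [hnull] at hcase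
    exact lt_irrefl _ hcase
  · -- positive side
    have himg : (fun x : ℝ => x - 2 * π) '' (G ∩ Ico 0 π) =
        (fun x : ℝ => x + 2 * π) ⁻¹' (G ∩ Ico 0 π) := by
      ext x
      constructor
      · rintro ⟨y, hy, rfl⟩
        simpa [sub_add_cancel] using hy
      · intro hx
        exact ⟨x + 2 * π, hx, by ring⟩
    have hae : ∀ᵐ s : ℝ ∂volume, s ∉ (fun x : ℝ => x - 2 * π) '' (G ∩ Ico 0 π) := by
      filter_upwards [hpart2, hid] with s h1 h2 hmem
      exact (h1 hmem).2 h2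
    have hnull : volume ((fun x : ℝ => x - 2 * π) '' (G ∩ Ico 0 π)) = 0 := by
      have h := hae
      rw [MeasureTheory.ae_iff] at h
      simpa only [not_not, Set.setOf_mem_eq] using h
    rw [himg, measure_preimage_add_right] at hnull
    rw [hnull] at hcase
    exact lt_irrefl _ hcase
end
end

section
/- For integers l, m, n ≥ 1, define G₊(l, m) = ((2^l/(2^{l+m}−1))π, 2^{1−m}π) ∪ [2^lπ, 2^lπ + (2^l/(2^{l+m}−1))π) and G₋(m, n) = [−2^{m+n}π + 2^nπ − ((2^{m+n}−2^n)/(2^{m+n}−1))π, −2^{m+n}π + 2^nπ) ∪ [−2π + 2^{1−m}π, −((2^{m+n}−2^n)/(2^{m+n}−1))π). Then G₊(l, m) is 2π-translation congruent to [0, 2^{1−m}π) and 2-dilation congruent to [π, 2π); G₋(m, n) is 2π-translation congruent to [−2π + 2^{1−m}π, 0) and 2-dilation congruent to [−2π + 2^{1−m}π, −π + 2^{-m}π); and consequently G₋(m, n) ∪ G₊(l, m) is a dyadic wavelet set (these are the wavelet sets K_{l,m,n} of Fang–Wang). -/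
open MeasureTheory Set
open scoped Real symmDiff

noncomputable section

/-- `G₊(l, m) = ((2^l/(2^{l+m}−1))π, 2^{1−m}π) ∪ [2^lπ, 2^lπ + (2^l/(2^{l+m}−1))π)`. -/
def Gplus (l m : ℤ) : Set ℝ :=
  Ioo (((2 : ℝ) ^ l / ((2 : ℝ) ^ (l + m) - 1)) * π) ((2 : ℝ) ^ (1 - m) * π) ∪
    Ico ((2 : ℝ) ^ l * π) ((2 : ℝ) ^ l * π + ((2 : ℝ) ^ l / ((2 : ℝ) ^ (l + m) - 1)) * π)

/-- `G₋(m, n) = [−2^{m+n}π + 2^nπ − ((2^{m+n}−2^n)/(2^{m+n}−1))π, −2^{m+n}π + 2^nπ)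
∪ [−2π + 2^{1−m}π, −((2^{m+n}−2^n)/(2^{m+n}−1))π)`. -/
def Gminus (m n : ℤ) : Set ℝ :=
  Ico (-(2 : ℝ) ^ (m + n) * π + (2 : ℝ) ^ n * π -
        (((2 : ℝ) ^ (m + n) - (2 : ℝ) ^ n) / ((2 : ℝ) ^ (m + n) - 1)) * π)
      (-(2 : ℝ) ^ (m + n) * π + (2 : ℝ) ^ n * π) ∪
    Ico (-(2 * π) + (2 : ℝ) ^ (1 - m) * π)
      (-((((2 : ℝ) ^ (m + n) - (2 : ℝ) ^ n) / ((2 : ℝ) ^ (m + n) - 1)) * π))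

lemma symmdiff_null_of {B U : Set ℝ} (p : ℝ) (h1 : U ⊆ B) (h2 : B \ U ⊆ {p}) :
    volume (B ∆ U) = 0 := by
  have hsub : B ∆ U ⊆ {p} := by
    rw [Set.symmDiff_def]
    rintro x (⟨hxB, hxU⟩ | ⟨hxU, hxB⟩)
    · exact h2 ⟨hxB, hxU⟩
    · exact absurd (h1 hxU) hxB
  exact measure_mono_null hsub (by simp)

lemma isAEPartition_of_pair {Q : ℤ → Set ℝ} {A : Set ℝ} {k₁ k₂ : ℤ}
    (hne : k₁ ≠ k₂)
    (hQ : ∀ k, k ≠ k₁ → k ≠ k₂ → Q k = ∅)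
    (hdisj : volume (Q k₁ ∩ Q k₂) = 0)
    (hsd : volume (A ∆ (Q k₁ ∪ Q k₂)) = 0) :
    IsAEPartition Q A := by
  have hU : (⋃ k, Q k) = Q k₁ ∪ Q k₂ := by
    apply Set.Subset.antisymm
    · refine Set.iUnion_subset fun k => ?_
      by_cases h1 : k = k₁
      · subst h1; exact Set.subset_union_left
      · by_cases h2 : k = k₂
        · subst h2; exact Set.subset_union_right
        · rw [hQ k h1 h2]; exact Set.empty_subset _
    · exact Set.union_subset (Set.subset_iUnion Q k₁) (Set.subset_iUnion Q k₂)
  refine ⟨by rw [hU]; exact hsd, ?_⟩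
  intro i j hij
  by_cases hi1 : i = k₁
  · subst hi1
    by_cases hj2 : j = k₂
    · subst hj2; exact hdisj
    · rw [hQ j (Ne.symm hij) hj2, Set.inter_empty]; exact measure_empty
  · by_cases hi2 : i = k₂
    · subst hi2
      by_cases hj1 : j = k₁
      · subst hj1; rw [Set.inter_comm]; exact hdisj
      · rw [hQ j hj1 (Ne.symm hij), Set.inter_empty]; exact measure_empty
    · rw [hQ i hi1 hi2, Set.empty_inter]; exact measure_empty

lemma tile_trans (u x : ℝ) : ∃! j : ℤ, x + 2 * π * j ∈ Ico u (u + 2 * π) := by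
  obtain ⟨j, hj, hu⟩ := existsUnique_add_zsmul_mem_Ico Real.two_pi_pos x u
  have key : ∀ i : ℤ, x + 2 * π * i = x + i • (2 * π) := by
    intro i; rw [zsmul_eq_mul]; ring
  refine ⟨j, ?_, fun i hi => hu i ?_⟩
  · show x + 2 * π * (j:ℝ) ∈ Ico u (u + 2*π)
    rw [key]; exact hj
  · show x + i • (2*π) ∈ Ico u (u + 2*π)
    rw [← key]; exact hi

lemma tile_Ico_pos {d x : ℝ} (hd : 0 < d) (hx : 0 < x) :
    ∃! k : ℤ, (2:ℝ)^k * x ∈ Ico d (2*d) := by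
  have h2 : (0:ℝ) < Real.log 2 := Real.log_pos one_lt_two
  obtain ⟨k, hk, hu⟩ := existsUnique_add_zsmul_mem_Ico h2 (Real.log x) (Real.log d)
  have key : ∀ j : ℤ, ((2:ℝ)^j * x ∈ Ico d (2*d)) ↔
      Real.log x + j • Real.log 2 ∈ Ico (Real.log d) (Real.log d + Real.log 2) := by
    intro j
    have hpow : (0:ℝ) < (2:ℝ)^j := zpow_pos (by norm_num) j
    have hxj : 0 < (2:ℝ)^j * x := mul_pos hpow hx
    have hlog : Real.log ((2:ℝ)^j * x) = Real.log x + j • Real.log 2 := by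
      rw [Real.log_mul (ne_of_gt hpow) (ne_of_gt hx), Real.log_zpow, zsmul_eq_mul]; ring
    have h2d : Real.log (2*d) = Real.log d + Real.log 2 := by
      rw [Real.log_mul two_ne_zero (ne_of_gt hd)]; ring
    constructor
    · rintro ⟨ha, hb⟩
      rw [← hlog]
      constructor
      · exact (Real.log_le_log_iff hd hxj).mpr ha
      · rw [← h2d]; exact (Real.log_lt_log_iff hxj (by linarith)).mpr hb
    · rintro ⟨ha, hb⟩
      rw [← hlog] at ha hb
      rw [← h2d] at hb
      exact ⟨(Real.log_le_log_iff hd hxj).mp ha, (Real.log_lt_log_iff hxj (by linarith)).mp hb⟩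
  exact ⟨k, (key k).mpr hk, fun j hj => hu j ((key j).mp hj)⟩

lemma tile_Ioc_pos {d x : ℝ} (hd : 0 < d) (hx : 0 < x) :
    ∃! k : ℤ, (2:ℝ)^k * x ∈ Ioc d (2*d) := by
  have hd' : (0:ℝ) < (2*d)⁻¹ := by positivity
  have hx' : (0:ℝ) < x⁻¹ := by positivity
  obtain ⟨k, hk, hu⟩ := tile_Ico_pos hd' hx'
  have key : ∀ j : ℤ, ((2:ℝ)^j * x ∈ Ioc d (2*d)) ↔
      (2:ℝ)^(-j) * x⁻¹ ∈ Ico (2*d)⁻¹ (2*(2*d)⁻¹) := by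
    intro j
    have hpow : (0:ℝ) < (2:ℝ)^j := zpow_pos (by norm_num) j
    have hxj : 0 < (2:ℝ)^j * x := mul_pos hpow hx
    have hinv : (2:ℝ)^(-j) * x⁻¹ = ((2:ℝ)^j * x)⁻¹ := by
      rw [zpow_neg, mul_inv]
    have h2 : 2*(2*d)⁻¹ = d⁻¹ := by field_simp
    rw [hinv, h2]
    constructor
    · rintro ⟨ha, hb⟩
      exact ⟨by rw [inv_le_inv₀ (by positivity) hxj] at *; exact hb,
             by rw [inv_lt_inv₀ hxj hd] at *; exact ha⟩
    · rintro ⟨ha, hb⟩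
      constructor
      · rw [inv_lt_inv₀ hxj hd] at hb; exact hb
      · rw [inv_le_inv₀ (by positivity) hxj] at ha; exact ha
  refine ⟨-k, (key (-k)).mpr (by rw [neg_neg]; exact hk), fun j hj => ?_⟩
  have := hu (-j) ((key j).mp hj)
  omega

lemma tile_Ico_neg {d x : ℝ} (hd : d < 0) (hx : x < 0) :
    ∃! k : ℤ, (2:ℝ)^k * x ∈ Ico (2*d) d := by
  have he : (0:ℝ) < -d := by linarith
  have hy : (0:ℝ) < -x := by linarith
  obtain ⟨k, hk, hu⟩ := tile_Ioc_pos he hy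
  have key : ∀ j : ℤ, ((2:ℝ)^j * x ∈ Ico (2*d) d) ↔ (2:ℝ)^j * (-x) ∈ Ioc (-d) (2*(-d)) := by
    intro j
    have : (2:ℝ)^j * (-x) = -((2:ℝ)^j * x) := by ring
    rw [this]
    constructor
    · rintro ⟨ha, hb⟩; exact ⟨by linarith, by linarith⟩
    · rintro ⟨ha, hb⟩; exact ⟨by linarith, by linarith⟩
  exact ⟨k, (key k).mpr hk, fun j hj => hu j ((key j).mp hj)⟩

lemma cast_pow_toNat (t : ℤ) (ht : 0 ≤ t) : ((2 ^ t.toNat : ℤ) : ℝ) = (2:ℝ) ^ t := by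
  push_cast
  rw [← zpow_natCast (2:ℝ), Int.toNat_of_nonneg ht]

lemma transCongruent_of_pieces {A B S₁ S₂ T₁ T₂ : Set ℝ} {k₁ k₂ : ℤ} (hne : k₁ ≠ k₂)
    (hm₁ : MeasurableSet S₁) (hm₂ : MeasurableSet S₂)
    (h₁ : (fun x => x + 2 * Real.pi * (k₁ : ℝ)) '' S₁ = T₁)
    (h₂ : (fun x => x + 2 * Real.pi * (k₂ : ℝ)) '' S₂ = T₂)
    (hdS : volume (S₁ ∩ S₂) = 0) (hdT : volume (T₁ ∩ T₂) = 0)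
    (hA : volume (A ∆ (S₁ ∪ S₂)) = 0) (hB : volume (B ∆ (T₁ ∪ T₂)) = 0) :
    TransCongruent A B := by
  refine ⟨fun k => if k = k₁ then S₁ else if k = k₂ then S₂ else ∅, ?_, ?_, ?_⟩
  · intro k
    by_cases h1 : k = k₁
    · simp only [h1, if_pos rfl]; exact hm₁
    · by_cases h2 : k = k₂
      · simp only [h1, h2, if_neg (Ne.symm hne), if_false, if_pos rfl]; exact hm₂
      · simp only [h1, h2, if_false]; exact MeasurableSet.empty
  · refine isAEPartition_of_pair hne (fun k hk1 hk2 => by simp [hk1, hk2]) ?_ ?_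
    · simpa [hne, if_pos rfl, Ne.symm hne] using hdS
    · simpa [hne, if_pos rfl, Ne.symm hne] using hA
  · refine isAEPartition_of_pair hne (fun k hk1 hk2 => by simp [hk1, hk2]) ?_ ?_
    · simpa [hne, Ne.symm hne, h₁, h₂] using hdT
    · simpa [hne, Ne.symm hne, h₁, h₂] using hB

lemma dilCongruent_of_pieces {A B S₁ S₂ T₁ T₂ : Set ℝ} {k₁ k₂ : ℤ} (hne : k₁ ≠ k₂)
    (hm₁ : MeasurableSet S₁) (hm₂ : MeasurableSet S₂)
    (h₁ : (fun x => (2:ℝ)^k₁ * x) '' S₁ = T₁)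
    (h₂ : (fun x => (2:ℝ)^k₂ * x) '' S₂ = T₂)
    (hdS : volume (S₁ ∩ S₂) = 0) (hdT : volume (T₁ ∩ T₂) = 0)
    (hA : volume (A ∆ (S₁ ∪ S₂)) = 0) (hB : volume (B ∆ (T₁ ∪ T₂)) = 0) :
    DilCongruent A B := by
  refine ⟨fun k => if k = k₁ then S₁ else if k = k₂ then S₂ else ∅, ?_, ?_, ?_⟩
  · intro k
    by_cases h1 : k = k₁
    · simp only [h1, if_pos rfl]; exact hm₁
    · by_cases h2 : k = k₂
      · simp only [h1, h2, if_neg (Ne.symm hne), if_false, if_pos rfl]; exact hm₂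
      · simp only [h1, h2, if_false]; exact MeasurableSet.empty
  · refine isAEPartition_of_pair hne (fun k hk1 hk2 => by simp [hk1, hk2]) ?_ ?_
    · simpa [hne, if_pos rfl, Ne.symm hne] using hdS
    · simpa [hne, if_pos rfl, Ne.symm hne] using hA
  · refine isAEPartition_of_pair hne (fun k hk1 hk2 => by simp [hk1, hk2]) ?_ ?_
    · simpa [hne, Ne.symm hne, h₁, h₂] using hdT
    · simpa [hne, Ne.symm hne, h₁, h₂] using hB


set_option maxHeartbeats 4000000 in
/-- Example 10 of the paper.  For integers `l, m, n ≥ 1`, the set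
`G₊(l, m)` is `2π`-translation congruent to `[0, 2^{1−m}π)` and `2`-dilation congruent
to `[π, 2π)`; the set `G₋(m, n)` is `2π`-translation congruent to `[−2π + 2^{1−m}π, 0)`
and `2`-dilation congruent to `[−2π + 2^{1−m}π, −π + 2^{−m}π)`; and consequently
`G₋(m, n) ∪ G₊(l, m)` is a dyadic wavelet set (the Fang–Wang sets `K_{l,m,n}`). -/
theorem stmt_16 (l m n : ℤ) (hl : 1 ≤ l) (hm : 1 ≤ m) (hn : 1 ≤ n) :
    TransCongruent (Gplus l m) (Ico 0 ((2 : ℝ) ^ (1 - m) * π)) ∧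
    DilCongruent (Gplus l m) (Ico π (2 * π)) ∧
    TransCongruent (Gminus m n) (Ico (-(2 * π) + (2 : ℝ) ^ (1 - m) * π) 0) ∧
    DilCongruent (Gminus m n)
      (Ico (-(2 * π) + (2 : ℝ) ^ (1 - m) * π) (-π + (2 : ℝ) ^ (-m) * π)) ∧
    IsDyadicWaveletSet (Gminus m n ∪ Gplus l m) := by
  have h2 : (2:ℝ) ≠ 0 := two_ne_zero
  have e1 : (2:ℝ)^(l+m) = (2:ℝ)^l * (2:ℝ)^m := zpow_add₀ h2 l m
  have e2 : (2:ℝ)^(1-m) = 2 / (2:ℝ)^m := by rw [zpow_sub₀ h2, zpow_one]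
  have e3 : (2:ℝ)^(m+n) = (2:ℝ)^m * (2:ℝ)^n := zpow_add₀ h2 m n
  have e4 : (2:ℝ)^(-m) = 1 / (2:ℝ)^m := by rw [zpow_neg, one_div]
  simp only [Gplus, Gminus, IsDyadicWaveletSet]
  rw [e1, e2, e3, e4]
  have hπ : (0:ℝ) < π := Real.pi_pos
  have hL : (2:ℝ) ≤ (2:ℝ)^l := by
    calc (2:ℝ) = 2^(1:ℤ) := (zpow_one 2).symm
    _ ≤ 2^l := zpow_le_zpow_right₀ one_le_two hl
  have hM : (2:ℝ) ≤ (2:ℝ)^m := by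
    calc (2:ℝ) = 2^(1:ℤ) := (zpow_one 2).symm
    _ ≤ 2^m := zpow_le_zpow_right₀ one_le_two hm
  have hN : (2:ℝ) ≤ (2:ℝ)^n := by
    calc (2:ℝ) = 2^(1:ℤ) := (zpow_one 2).symm
    _ ≤ 2^n := zpow_le_zpow_right₀ one_le_two hn
  set L := (2:ℝ)^l with hLdef
  set M := (2:ℝ)^m with hMdef
  set N := (2:ℝ)^n with hNdef
  have hL0 : (0:ℝ) < L := by linarith
  have hM0 : (0:ℝ) < M := by linarith
  have hN0 : (0:ℝ) < N := by linarith
  have hLM1 : (3:ℝ) ≤ L*M - 1 := by nlinarith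
  have hMN1 : (3:ℝ) ≤ M*N - 1 := by nlinarith
  set A := L / (L*M - 1) * π with hAdef
  set B := (M*N - N) / (M*N - 1) * π with hBdef
  have hApos : 0 < A := by
    rw [hAdef]; positivity
  have hAlt : A < 2/M*π := by
    rw [hAdef]
    have h1 : L/(L*M-1) < 2/M := by
      rw [div_lt_div_iff₀ (by linarith) hM0]; nlinarith
    exact mul_lt_mul_of_pos_right h1 hπ
  have h2Mπ : 0 < 2/M*π := by positivity
  have h2Mle : 2/M*π ≤ π := by
    have : 2/M ≤ 1 := by rw [div_le_one hM0]; linarith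
    nlinarith
  have hBpos : 0 < B := by
    rw [hBdef]
    have h1 : 0 < M*N - N := by nlinarith
    positivity
  have hBlt : B < π := by
    rw [hBdef]
    have h1 : (M*N - N)/(M*N - 1) < 1 := by
      rw [div_lt_one (by linarith)]; linarith
    nlinarith
  have hBle : B ≤ 2*π - 2/M*π := by linarith
  have hBd : π - 1/M*π ≤ B := by
    rw [hBdef]
    have h1 : (M-1)/M ≤ (M*N - N)/(M*N-1) := by
      rw [div_le_div_iff₀ hM0 (by linarith)]; nlinarith
    have h2' : π - 1/M*π = (M-1)/M * π := by field_simp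
    rw [h2']
    exact mul_le_mul_of_nonneg_right h1 (le_of_lt hπ)
  have hdneg : -π + 1/M*π < 0 := by
    have : 1/M ≤ 1/2 := by
      rw [div_le_div_iff₀ hM0 (by norm_num)]; linarith
    nlinarith
  have hMA : π < M*A := by
    have h1 : 1 < M*L/(L*M-1) := by rw [one_lt_div (by linarith)]; linarith
    have h2' := mul_lt_mul_of_pos_right h1 hπ
    have h3 : M*(L/(L*M-1)*π) = M*L/(L*M-1)*π := by ring
    rw [hAdef]; linarith
  have hMA2 : M*A < 2*π := by
    have h1 : M*L/(L*M-1) < 2 := by rw [div_lt_iff₀ (by linarith)]; linarith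
    have h2' := mul_lt_mul_of_pos_right h1 hπ
    have h3 : M*(L/(L*M-1)*π) = M*L/(L*M-1)*π := by ring
    rw [hAdef]; linarith
  have hLne : L ≠ 0 := ne_of_gt hL0
  have hMne : M ≠ 0 := ne_of_gt hM0
  have hNne : N ≠ 0 := ne_of_gt hN0
  have hI1hi : -(M*N)*π + N*π ≤ -(2*π) := by nlinarith
  have keyA : A*(L*M-1) = L*π := by rw [hAdef]; field_simp
  have keyB : B*(M*N-1) = (M*N-N)*π := by rw [hBdef]; field_simp
  have hcast4 : 2*π*(((2^((l-1).toNat) : ℤ)):ℝ) = L*π := by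
    push_cast
    rw [← zpow_natCast (2:ℝ), Int.toNat_of_nonneg (by omega : (0:ℤ) ≤ l-1)]
    have h4 : (2:ℝ)^(l-1) * 2 = L := by
      rw [← zpow_add_one₀ h2, show l-1+1 = l by ring, hLdef]
    linear_combination π*h4
  have hcast1 : 2*π*(((2^((m+n-1).toNat) - 2^((n-1).toNat) : ℤ)):ℝ) = M*N*π - N*π := by
    push_cast
    rw [← zpow_natCast (2:ℝ) ((m+n-1).toNat), ← zpow_natCast (2:ℝ) ((n-1).toNat),
      Int.toNat_of_nonneg (by omega : (0:ℤ) ≤ m+n-1), Int.toNat_of_nonneg (by omega : (0:ℤ) ≤ n-1)]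
    have h4 : (2:ℝ)^(m+n-1) * 2 = M*N := by
      rw [← zpow_add_one₀ h2, show m+n-1+1 = m+n by ring, e3]
    have h5 : (2:ℝ)^(n-1) * 2 = N := by
      rw [← zpow_add_one₀ h2, show n-1+1 = n by ring, hNdef]
    linear_combination π*h4 - π*h5
  have hδ4pos : (0:ℤ) < 2^((l-1).toNat) := pow_pos (by norm_num) _
  have hδ1pos : (0:ℤ) < 2^((m+n-1).toNat) - 2^((n-1).toNat) := by
    have h4 : (n-1).toNat < (m+n-1).toNat := by omega
    have := pow_lt_pow_right₀ (show (1:ℤ) < 2 by norm_num) h4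
    omega
  have hF5 : L⁻¹*(L*π+A) = M*A := by
    field_simp
    linear_combination -keyA
  refine ⟨?_, ?_, ?_, ?_, ?_⟩
  · -- TransCongruent (Gplus) (Ico 0 (2/M*π))
    refine transCongruent_of_pieces (k₁ := 0) (k₂ := -(2^((l-1).toNat)))
      (S₁ := Ioo A (2/M*π)) (S₂ := Ico (L*π) (L*π+A))
      (T₁ := Ioo A (2/M*π)) (T₂ := Ico 0 A)
      (by omega) measurableSet_Ioo measurableSet_Ico ?_ ?_ ?_ ?_ ?_ ?_
    · simp
    · rw [Set.image_add_const_Ico]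
      have hc : 2*π*((-(2^((l-1).toNat)) : ℤ):ℝ) = -(L*π) := by
        rw [Int.cast_neg]; linarith [hcast4]
      rw [hc]
      congr 1 <;> ring
    · have he : Ioo A (2/M*π) ∩ Ico (L*π) (L*π+A) = ∅ := by
        rw [Set.eq_empty_iff_forall_notMem]
        rintro x ⟨⟨_, h1'⟩, h2', _⟩
        nlinarith
      rw [he]; exact measure_empty
    · have he : Ioo A (2/M*π) ∩ Ico 0 A = ∅ := by
        rw [Set.eq_empty_iff_forall_notMem]
        rintro x ⟨⟨h1', _⟩, _, h2'⟩
        linarith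
      rw [he]; exact measure_empty
    · rw [symmDiff_self]; simp
    · refine symmdiff_null_of A ?_ ?_
      · rintro x (⟨h1', h2'⟩ | ⟨h1', h2'⟩) <;> exact ⟨by linarith, by linarith⟩
      · rintro x ⟨⟨hx0, hx1⟩, hxn⟩
        have h1' : ¬(A < x ∧ x < 2/M*π) := fun h => hxn (Or.inl h)
        have h2' : ¬(0 ≤ x ∧ x < A) := fun h => hxn (Or.inr h)
        have ha1 : A ≤ x := by by_contra hcon; push_neg at hcon; exact h2' ⟨hx0, hcon⟩
        have ha2 : x ≤ A := by by_contra hcon; push_neg at hcon; exact h1' ⟨hcon, hx1⟩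
        exact Set.mem_singleton_iff.mpr (le_antisymm ha2 ha1)
  · -- DilCongruent (Gplus) (Ico π (2*π))
    refine dilCongruent_of_pieces (k₁ := m) (k₂ := -l)
      (S₁ := Ioo A (2/M*π)) (S₂ := Ico (L*π) (L*π+A))
      (T₁ := Ioo (M*A) (2*π)) (T₂ := Ico π (M*A))
      (by omega) measurableSet_Ioo measurableSet_Ico ?_ ?_ ?_ ?_ ?_ ?_
    · rw [Set.image_mul_left_Ioo (zpow_pos (by norm_num) m)]
      rw [← hMdef]
      have hc : M*(2/M*π) = 2*π := by field_simp
      rw [hc]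
    · rw [Set.image_mul_left_Ico (zpow_pos (by norm_num) (-l))]
      have hinv : (2:ℝ)^(-l) = L⁻¹ := by rw [hLdef, zpow_neg]
      rw [hinv, hF5]
      have hc : L⁻¹*(L*π) = π := by field_simp
      rw [hc]
    · have he : Ioo A (2/M*π) ∩ Ico (L*π) (L*π+A) = ∅ := by
        rw [Set.eq_empty_iff_forall_notMem]
        rintro x ⟨⟨_, h1'⟩, h2', _⟩
        nlinarith
      rw [he]; exact measure_empty
    · have he : Ioo (M*A) (2*π) ∩ Ico π (M*A) = ∅ := by
        rw [Set.eq_empty_iff_forall_notMem]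
        rintro x ⟨⟨h1', _⟩, _, h2'⟩
        linarith
      rw [he]; exact measure_empty
    · rw [symmDiff_self]; simp
    · refine symmdiff_null_of (M*A) ?_ ?_
      · rintro x (⟨h1', h2'⟩ | ⟨h1', h2'⟩) <;> exact ⟨by linarith, by linarith⟩
      · rintro x ⟨⟨hx0, hx1⟩, hxn⟩
        have h1' : ¬(M*A < x ∧ x < 2*π) := fun h => hxn (Or.inl h)
        have h2' : ¬(π ≤ x ∧ x < M*A) := fun h => hxn (Or.inr h)
        have ha1 : M*A ≤ x := by by_contra hcon; push_neg at hcon; exact h2' ⟨hx0, hcon⟩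
        have ha2 : x ≤ M*A := by by_contra hcon; push_neg at hcon; exact h1' ⟨hcon, hx1⟩
        exact Set.mem_singleton_iff.mpr (le_antisymm ha2 ha1)
  · -- TransCongruent (Gminus) (Ico (-(2π)+2/Mπ) 0)
    refine transCongruent_of_pieces (k₁ := 2^((m+n-1).toNat) - 2^((n-1).toNat)) (k₂ := 0)
      (S₁ := Ico (-(M*N)*π + N*π - B) (-(M*N)*π + N*π)) (S₂ := Ico (-(2*π) + 2/M*π) (-B))
      (T₁ := Ico (-B) 0) (T₂ := Ico (-(2*π) + 2/M*π) (-B))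
      (by omega) measurableSet_Ico measurableSet_Ico ?_ ?_ ?_ ?_ ?_ ?_
    · rw [Set.image_add_const_Ico, hcast1]
      congr 1 <;> ring
    · simp
    · have he : Ico (-(M*N)*π + N*π - B) (-(M*N)*π + N*π) ∩ Ico (-(2*π) + 2/M*π) (-B) = ∅ := by
        rw [Set.eq_empty_iff_forall_notMem]
        rintro x ⟨⟨_, h1'⟩, h2', _⟩
        linarith
      rw [he]; exact measure_empty
    · have he : Ico (-B) 0 ∩ Ico (-(2*π) + 2/M*π) (-B) = ∅ := by
        rw [Set.eq_empty_iff_forall_notMem]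
        rintro x ⟨⟨h1', _⟩, _, h2'⟩
        linarith
      rw [he]; exact measure_empty
    · rw [symmDiff_self]; simp
    · refine symmdiff_null_of 0 ?_ ?_
      · rintro x (⟨h1', h2'⟩ | ⟨h1', h2'⟩) <;> exact ⟨by linarith, by linarith⟩
      · rintro x ⟨⟨hx0, hx1⟩, hxn⟩
        exfalso
        rcases lt_or_ge x (-B) with h | h
        · exact hxn (Or.inr ⟨hx0, h⟩)
        · exact hxn (Or.inl ⟨h, hx1⟩)
  · -- DilCongruent (Gminus) (Ico (-(2π)+2/Mπ) (-π+1/Mπ))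
    refine dilCongruent_of_pieces (k₁ := -(m+n)) (k₂ := 0)
      (S₁ := Ico (-(M*N)*π + N*π - B) (-(M*N)*π + N*π)) (S₂ := Ico (-(2*π) + 2/M*π) (-B))
      (T₁ := Ico (-B) (-π + 1/M*π)) (T₂ := Ico (-(2*π) + 2/M*π) (-B))
      (by omega) measurableSet_Ico measurableSet_Ico ?_ ?_ ?_ ?_ ?_ ?_
    · rw [Set.image_mul_left_Ico (zpow_pos (by norm_num) (-(m+n)))]
      have hinv : (2:ℝ)^(-(m+n)) = (M*N)⁻¹ := by rw [zpow_neg, e3]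
      rw [hinv]
      have hc1 : (M*N)⁻¹*(-(M*N)*π + N*π - B) = -B := by
        rw [inv_mul_eq_div, div_eq_iff (by positivity)]
        linear_combination keyB
      have hc2 : (M*N)⁻¹*(-(M*N)*π + N*π) = -π + 1/M*π := by
        field_simp
      rw [hc1, hc2]
    · simp
    · have he : Ico (-(M*N)*π + N*π - B) (-(M*N)*π + N*π) ∩ Ico (-(2*π) + 2/M*π) (-B) = ∅ := by
        rw [Set.eq_empty_iff_forall_notMem]
        rintro x ⟨⟨_, h1'⟩, h2', _⟩
        linarith
      rw [he]; exact measure_empty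
    · have he : Ico (-B) (-π + 1/M*π) ∩ Ico (-(2*π) + 2/M*π) (-B) = ∅ := by
        rw [Set.eq_empty_iff_forall_notMem]
        rintro x ⟨⟨h1', _⟩, _, h2'⟩
        linarith
      rw [he]; exact measure_empty
    · rw [symmDiff_self]; simp
    · refine symmdiff_null_of 0 ?_ ?_
      · rintro x (⟨h1', h2'⟩ | ⟨h1', h2'⟩) <;> exact ⟨by linarith, by linarith⟩
      · rintro x ⟨⟨hx0, hx1⟩, hxn⟩
        exfalso
        rcases lt_or_ge x (-B) with h | h
        · exact hxn (Or.inr ⟨hx0, h⟩)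
        · exact hxn (Or.inl ⟨h, hx1⟩)
  · -- wavelet set
    refine ⟨((measurableSet_Ico.union measurableSet_Ico).union
      (measurableSet_Ioo.union measurableSet_Ico)), ?_, ?_⟩
    · -- translation tiling
      have hZ : volume (⋃ (j:ℤ), {A - 2*π*(j:ℝ)} : Set ℝ) = 0 :=
        measure_iUnion_null fun j => Real.volume_singleton
      filter_upwards [measure_eq_zero_iff_ae_notMem.mp hZ] with x hx
      simp only [Set.mem_iUnion, Set.mem_singleton_iff, not_exists] at hx
      obtain ⟨n₀, hn₀, hu₀⟩ := tile_trans (-(2*π) + 2/M*π) x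
      have hJr : -(2*π) + 2/M*π + 2*π = 2/M*π := by ring
      set δ₁ : ℤ := 2^((m+n-1).toNat) - 2^((n-1).toNat) with hd1def
      set δ₄ : ℤ := 2^((l-1).toNat) with hd4def
      set r := x + 2*π*(n₀:ℝ) with hrdef
      have hrJ1 : -(2*π) + 2/M*π ≤ r := hn₀.1
      have hrJ2 : r < 2/M*π := by have := hn₀.2; linarith
      have hrA : r ≠ A := by
        intro hcon
        exact hx n₀ (by rw [← hcon, hrdef]; ring)
      have huniq : ∀ j : ℤ, -(2*π) + 2/M*π ≤ x + 2*π*(j:ℝ) → x + 2*π*(j:ℝ) < 2/M*π → j = n₀ := by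
        intro j hj1 hj2
        exact hu₀ j ⟨hj1, by linarith⟩
      have hiff1 : ∀ j : ℤ, x + 2*π*(j:ℝ) ∈ Ico (-(M*N)*π + N*π - B) (-(M*N)*π + N*π) ↔
          (j = n₀ - δ₁ ∧ -B ≤ r ∧ r < 0) := by
        intro j
        constructor
        · rintro ⟨h1', h2'⟩
          have hjq : j + δ₁ = n₀ := by
            refine huniq (j+δ₁) ?_ ?_ <;> push_cast <;> linarith [hcast1]
          have hr2 : r = x + 2*π*(j:ℝ) + 2*π*(δ₁:ℝ) := by
            rw [hrdef, ← hjq]; push_cast; ring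
          refine ⟨by omega, by linarith [hcast1], by linarith [hcast1]⟩
        · rintro ⟨hj, h1', h2'⟩
          have hr2 : x + 2*π*(j:ℝ) = r - 2*π*(δ₁:ℝ) := by
            rw [hrdef, hj]; push_cast; ring
          exact ⟨by linarith [hcast1], by linarith [hcast1]⟩
      have hiff2 : ∀ j : ℤ, x + 2*π*(j:ℝ) ∈ Ico (-(2*π) + 2/M*π) (-B) ↔
          (j = n₀ ∧ -(2*π) + 2/M*π ≤ r ∧ r < -B) := by
        intro j
        constructor
        · rintro ⟨h1', h2'⟩
          have hjq : j = n₀ := huniq j h1' (by linarith)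
          rw [hjq] at h1' h2'
          exact ⟨hjq, h1', h2'⟩
        · rintro ⟨hj, h1', h2'⟩
          rw [hj]; exact ⟨h1', h2'⟩
      have hiff3 : ∀ j : ℤ, x + 2*π*(j:ℝ) ∈ Ioo A (2/M*π) ↔
          (j = n₀ ∧ A < r ∧ r < 2/M*π) := by
        intro j
        constructor
        · rintro ⟨h1', h2'⟩
          have hjq : j = n₀ := huniq j (by linarith) h2'
          rw [hjq] at h1' h2'
          exact ⟨hjq, h1', h2'⟩
        · rintro ⟨hj, h1', h2'⟩
          rw [hj]; exact ⟨h1', h2'⟩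
      have hiff4 : ∀ j : ℤ, x + 2*π*(j:ℝ) ∈ Ico (L*π) (L*π + A) ↔
          (j = n₀ + δ₄ ∧ 0 ≤ r ∧ r < A) := by
        intro j
        constructor
        · rintro ⟨h1', h2'⟩
          have hjq : j - δ₄ = n₀ := by
            refine huniq (j-δ₄) ?_ ?_ <;> push_cast <;> linarith [hcast4]
          have hr2 : r = x + 2*π*(j:ℝ) - 2*π*(δ₄:ℝ) := by
            rw [hrdef, ← hjq]; push_cast; ring
          refine ⟨by omega, by linarith [hcast4], by linarith [hcast4]⟩
        · rintro ⟨hj, h1', h2'⟩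
          have hr2 : x + 2*π*(j:ℝ) = r + 2*π*(δ₄:ℝ) := by
            rw [hrdef, hj]; push_cast; ring
          exact ⟨by linarith [hcast4], by linarith [hcast4]⟩
      have memE : ∀ j : ℤ, ∀ (S1 S2 S3 S4 : Set ℝ),
          (x + 2*π*(j:ℝ) ∈ (S1 ∪ S2) ∪ (S3 ∪ S4)) ↔
          (x + 2*π*(j:ℝ) ∈ S1 ∨ x + 2*π*(j:ℝ) ∈ S2 ∨ x + 2*π*(j:ℝ) ∈ S3 ∨ x + 2*π*(j:ℝ) ∈ S4) := by
        intro j S1 S2 S3 S4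
        simp only [Set.mem_union]
        tauto
      rcases lt_or_ge r (-B) with hc1 | hc1
      · refine ⟨n₀, ?_, ?_⟩
        · exact (memE n₀ _ _ _ _).mpr (Or.inr (Or.inl ((hiff2 n₀).mpr ⟨rfl, hrJ1, hc1⟩)))
        · intro j hj
          rcases (memE j _ _ _ _).mp hj with h | h | h | h
          · obtain ⟨_, h1', _⟩ := (hiff1 j).mp h; linarith
          · exact ((hiff2 j).mp h).1
          · obtain ⟨_, h1', _⟩ := (hiff3 j).mp h; linarith
          · obtain ⟨_, h1', _⟩ := (hiff4 j).mp h; linarith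
      · rcases lt_or_ge r 0 with hc2 | hc2
        · refine ⟨n₀ - δ₁, ?_, ?_⟩
          · exact (memE _ _ _ _ _).mpr (Or.inl ((hiff1 _).mpr ⟨rfl, hc1, hc2⟩))
          · intro j hj
            rcases (memE j _ _ _ _).mp hj with h | h | h | h
            · exact ((hiff1 j).mp h).1
            · obtain ⟨_, _, h2'⟩ := (hiff2 j).mp h; linarith
            · obtain ⟨_, h1', _⟩ := (hiff3 j).mp h; linarith
            · obtain ⟨_, h1', _⟩ := (hiff4 j).mp h; linarith
        · rcases lt_or_ge r A with hc3 | hc3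
          · refine ⟨n₀ + δ₄, ?_, ?_⟩
            · exact (memE _ _ _ _ _).mpr (Or.inr (Or.inr (Or.inr ((hiff4 _).mpr ⟨rfl, hc2, hc3⟩))))
            · intro j hj
              rcases (memE j _ _ _ _).mp hj with h | h | h | h
              · obtain ⟨_, _, h2'⟩ := (hiff1 j).mp h; linarith
              · obtain ⟨_, _, h2'⟩ := (hiff2 j).mp h; linarith
              · obtain ⟨_, h1', _⟩ := (hiff3 j).mp h; linarith
              · exact ((hiff4 j).mp h).1
          · have hc4 : A < r := lt_of_le_of_ne hc3 (Ne.symm hrA)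
            refine ⟨n₀, ?_, ?_⟩
            · exact (memE _ _ _ _ _).mpr (Or.inr (Or.inr (Or.inl ((hiff3 _).mpr ⟨rfl, hc4, hrJ2⟩))))
            · intro j hj
              rcases (memE j _ _ _ _).mp hj with h | h | h | h
              · obtain ⟨_, _, h2'⟩ := (hiff1 j).mp h; linarith
              · obtain ⟨_, _, h2'⟩ := (hiff2 j).mp h; linarith
              · exact ((hiff3 j).mp h).1
              · obtain ⟨_, h1', _⟩ := (hiff4 j).mp h; linarith
    · -- dilation tiling
      have hZ : volume (({(0:ℝ)} : Set ℝ) ∪ ⋃ (j:ℤ), {(2:ℝ)^j * (M*A)}) = 0 :=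
        measure_union_null (by simp) (measure_iUnion_null fun j => Real.volume_singleton)
      filter_upwards [measure_eq_zero_iff_ae_notMem.mp hZ] with x hx
      simp only [Set.mem_union, Set.mem_iUnion, Set.mem_singleton_iff, not_or, not_exists] at hx
      obtain ⟨hx0, hxMA⟩ := hx
      have hzp : ∀ k t : ℤ, (2:ℝ)^(k+t) * x = (2:ℝ)^t * ((2:ℝ)^k * x) := by
        intro k t; rw [zpow_add₀ h2]; ring
      have hxMA' : ∀ k : ℤ, (2:ℝ)^k * x ≠ M*A := by
        intro k hcon
        apply hxMA (-k)
        have hinv : (2:ℝ)^(-k) * ((2:ℝ)^k * x) = x := by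
          rw [zpow_neg, ← mul_assoc, inv_mul_cancel₀ (ne_of_gt (zpow_pos (by norm_num) k)), one_mul]
        rw [← hcon]
        exact hinv.symm
      have memE : ∀ k : ℤ, ∀ (S1 S2 S3 S4 : Set ℝ),
          ((2:ℝ)^k * x ∈ (S1 ∪ S2) ∪ (S3 ∪ S4)) ↔
          ((2:ℝ)^k * x ∈ S1 ∨ (2:ℝ)^k * x ∈ S2 ∨ (2:ℝ)^k * x ∈ S3 ∨ (2:ℝ)^k * x ∈ S4) := by
        intro k S1 S2 S3 S4; simp only [Set.mem_union]; tauto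
      rcases lt_trichotomy x 0 with hneg | hzero | hpos
      · -- x < 0
        obtain ⟨k₀, hk₀, hu₀⟩ := tile_Ico_neg hdneg hneg
        set s := (2:ℝ)^k₀ * x with hsdef
        have hsmem : 2*(-π + 1/M*π) ≤ s ∧ s < -π + 1/M*π := ⟨hk₀.1, hk₀.2⟩
        have huniq : ∀ k : ℤ, 2*(-π + 1/M*π) ≤ (2:ℝ)^k * x → (2:ℝ)^k * x < -π + 1/M*π → k = k₀ :=
          fun k h1' h2' => hu₀ k ⟨h1', h2'⟩
        have hMN0 : (0:ℝ) < M*N := by positivity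
        have hg1 : (2:ℝ)^(-(m+n)) * (-(M*N)*π + N*π) = -π + 1/M*π := by
          rw [zpow_neg, e3]
          field_simp [hMne, hNne]
        have hg2 : (2:ℝ)^(-(m+n)) * (-(M*N)*π + N*π - B) = -B := by
          rw [zpow_neg, e3, inv_mul_eq_div, div_eq_iff (ne_of_gt hMN0)]
          linear_combination keyB
        have hpos' : (0:ℝ) < (2:ℝ)^(-(m+n)) := zpow_pos (by norm_num) _
        have hiff1 : ∀ k : ℤ, (2:ℝ)^k * x ∈ Ico (-(M*N)*π + N*π - B) (-(M*N)*π + N*π) ↔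
            (k = k₀ + (m+n) ∧ -B ≤ s ∧ s < -π + 1/M*π) := by
          intro k
          constructor
          · rintro ⟨h1', h2'⟩
            have hb1 : -B ≤ (2:ℝ)^(k + -(m+n)) * x := by
              rw [hzp k (-(m+n)), ← hg2]
              exact mul_le_mul_of_nonneg_left h1' (le_of_lt hpos')
            have hb2 : (2:ℝ)^(k + -(m+n)) * x < -π + 1/M*π := by
              rw [hzp k (-(m+n)), ← hg1]
              exact mul_lt_mul_of_pos_left h2' hpos'
            have h2d' : 2*(-π + 1/M*π) = -(2*π) + 2/M*π := by ring
            have hkq : k + -(m+n) = k₀ := huniq _ (by linarith) hb2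
            have hs' : s = (2:ℝ)^(k + -(m+n)) * x := by rw [hsdef, hkq]
            refine ⟨by omega, by linarith, by linarith⟩
          · rintro ⟨hk, hb1, hb2⟩
            have hMNd : M*N*(-π + 1/M*π) = -(M*N)*π + N*π := by
              field_simp [hMne]
            have hMNb : M*N*(-B) = -(M*N)*π + N*π - B := by linear_combination -keyB
            have hv : (2:ℝ)^k * x = M*N*s := by
              rw [hk, hzp k₀ (m+n), e3, hsdef]
            constructor
            · rw [hv, ← hMNb]
              exact mul_le_mul_of_nonneg_left hb1 (le_of_lt hMN0)
            · rw [hv, ← hMNd]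
              exact mul_lt_mul_of_pos_left hb2 hMN0
        have hiff2 : ∀ k : ℤ, (2:ℝ)^k * x ∈ Ico (-(2*π) + 2/M*π) (-B) ↔
            (k = k₀ ∧ 2*(-π + 1/M*π) ≤ s ∧ s < -B) := by
          intro k
          have h2d : 2*(-π + 1/M*π) = -(2*π) + 2/M*π := by ring
          constructor
          · rintro ⟨h1', h2'⟩
            have hkq : k = k₀ := huniq k (by linarith) (by linarith [hBd])
            rw [hkq] at h1' h2'
            exact ⟨hkq, by linarith, by linarith⟩
          · rintro ⟨hk, h1', h2'⟩
            rw [hk]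
            exact ⟨by linarith, by linarith⟩
        have hneg4 : ∀ k : ℤ, (2:ℝ)^k * x < 0 :=
          fun k => mul_neg_of_pos_of_neg (zpow_pos (by norm_num) k) hneg
        have hiff3 : ∀ k : ℤ, (2:ℝ)^k * x ∉ Ioo A (2/M*π) := by
          rintro k ⟨h1', -⟩; have := hneg4 k; linarith
        have hiff4 : ∀ k : ℤ, (2:ℝ)^k * x ∉ Ico (L*π) (L*π+A) := by
          rintro k ⟨h1', -⟩; have := hneg4 k; nlinarith
        rcases lt_or_ge s (-B) with hc | hc
        · refine ⟨k₀, (memE _ _ _ _ _).mpr (Or.inr (Or.inl ?_)), ?_⟩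
          · exact (hiff2 k₀).mpr ⟨rfl, hsmem.1, hc⟩
          · intro k hk
            rcases (memE k _ _ _ _).mp hk with h | h | h | h
            · obtain ⟨-, hb1, -⟩ := (hiff1 k).mp h; linarith
            · exact ((hiff2 k).mp h).1
            · exact absurd h (hiff3 k)
            · exact absurd h (hiff4 k)
        · refine ⟨k₀ + (m+n), (memE _ _ _ _ _).mpr (Or.inl ?_), ?_⟩
          · exact (hiff1 _).mpr ⟨rfl, hc, hsmem.2⟩
          · intro k hk
            rcases (memE k _ _ _ _).mp hk with h | h | h | h
            · exact ((hiff1 k).mp h).1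
            · obtain ⟨-, -, hb2⟩ := (hiff2 k).mp h; linarith
            · exact absurd h (hiff3 k)
            · exact absurd h (hiff4 k)
      · exact absurd hzero hx0
      · -- x > 0
        obtain ⟨k₀, hk₀, hu₀⟩ := tile_Ico_pos hπ hpos
        set s := (2:ℝ)^k₀ * x with hsdef
        have hsmem : π ≤ s ∧ s < 2*π := ⟨hk₀.1, hk₀.2⟩
        have huniq : ∀ k : ℤ, π ≤ (2:ℝ)^k * x → (2:ℝ)^k * x < 2*π → k = k₀ :=
          fun k h1' h2' => hu₀ k ⟨h1', h2'⟩
        have hsne : s ≠ M*A := hxMA' k₀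
        have hMinv : (0:ℝ) < M⁻¹ := by positivity
        have hLinv : (0:ℝ) < L⁻¹ := by positivity
        have hiff3 : ∀ k : ℤ, (2:ℝ)^k * x ∈ Ioo A (2/M*π) ↔ (k = k₀ - m ∧ M*A < s ∧ s < 2*π) := by
          intro k
          have hMc : M*(2/M*π) = 2*π := by field_simp
          constructor
          · rintro ⟨h1', h2'⟩
            have hb1 : M*A < (2:ℝ)^(k+m) * x := by
              rw [hzp k m, ← hMdef]
              exact mul_lt_mul_of_pos_left h1' hM0
            have hb2 : (2:ℝ)^(k+m) * x < 2*π := by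
              rw [hzp k m, ← hMdef, ← hMc]
              exact mul_lt_mul_of_pos_left h2' hM0
            have hkq : k + m = k₀ := huniq _ (by linarith) hb2
            have hs' : s = (2:ℝ)^(k+m) * x := by rw [hsdef, hkq]
            refine ⟨by omega, by linarith, by linarith⟩
          · rintro ⟨hk, hb1, hb2⟩
            have hv : (2:ℝ)^k * x = M⁻¹ * s := by
              rw [hk, show k₀ - m = k₀ + (-m) by ring, hzp k₀ (-m), hsdef, zpow_neg, ← hMdef]
            have e5 : M⁻¹*(M*A) = A := by field_simp
            have e6 : M⁻¹*(2*π) = 2/M*π := by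
              field_simp
            constructor
            · rw [hv, ← e5]; exact mul_lt_mul_of_pos_left hb1 hMinv
            · rw [hv, ← e6]; exact mul_lt_mul_of_pos_left hb2 hMinv
        have hiff4 : ∀ k : ℤ, (2:ℝ)^k * x ∈ Ico (L*π) (L*π+A) ↔ (k = k₀ + l ∧ π ≤ s ∧ s < M*A) := by
          intro k
          have hLc : L⁻¹*(L*π) = π := by field_simp
          have hinvl : (2:ℝ)^(-l) = L⁻¹ := by rw [hLdef, zpow_neg]
          constructor
          · rintro ⟨h1', h2'⟩
            have hb1 : π ≤ (2:ℝ)^(k + -l) * x := by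
              rw [hzp k (-l), hinvl, ← hLc]
              exact mul_le_mul_of_nonneg_left h1' (le_of_lt hLinv)
            have hb2 : (2:ℝ)^(k + -l) * x < M*A := by
              rw [hzp k (-l), hinvl, ← hF5]
              exact mul_lt_mul_of_pos_left h2' hLinv
            have hkq : k + -l = k₀ := huniq _ hb1 (by linarith)
            have hs' : s = (2:ℝ)^(k + -l) * x := by rw [hsdef, hkq]
            refine ⟨by omega, by linarith, by linarith⟩
          · rintro ⟨hk, hb1, hb2⟩
            have hv : (2:ℝ)^k * x = L * s := by
              rw [hk, hzp k₀ l, hsdef, ← hLdef]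
            have e5 : L*(M*A) = L*π + A := by linear_combination keyA
            constructor
            · rw [hv]; exact mul_le_mul_of_nonneg_left hb1 (le_of_lt hL0)
            · rw [hv, ← e5]; exact mul_lt_mul_of_pos_left hb2 hL0
        have hposk : ∀ k : ℤ, 0 < (2:ℝ)^k * x :=
          fun k => mul_pos (zpow_pos (by norm_num) k) hpos
        have hiff1 : ∀ k : ℤ, (2:ℝ)^k * x ∉ Ico (-(M*N)*π + N*π - B) (-(M*N)*π + N*π) := by
          rintro k ⟨-, h2'⟩; have := hposk k; linarith [hI1hi]
        have hiff2 : ∀ k : ℤ, (2:ℝ)^k * x ∉ Ico (-(2*π)+2/M*π) (-B) := by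
          rintro k ⟨-, h2'⟩; have := hposk k; linarith
        rcases lt_or_ge s (M*A) with hc | hc
        · refine ⟨k₀ + l, (memE _ _ _ _ _).mpr (Or.inr (Or.inr (Or.inr ?_))), ?_⟩
          · exact (hiff4 _).mpr ⟨rfl, hsmem.1, hc⟩
          · intro k hk
            rcases (memE k _ _ _ _).mp hk with h | h | h | h
            · exact absurd h (hiff1 k)
            · exact absurd h (hiff2 k)
            · obtain ⟨-, hb1, -⟩ := (hiff3 k).mp h; linarith
            · exact ((hiff4 k).mp h).1
        · have hc' : M*A < s := lt_of_le_of_ne hc (Ne.symm hsne)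
          refine ⟨k₀ - m, (memE _ _ _ _ _).mpr (Or.inr (Or.inr (Or.inl ?_))), ?_⟩
          · exact (hiff3 _).mpr ⟨rfl, hc', hsmem.2⟩
          · intro k hk
            rcases (memE k _ _ _ _).mp hk with h | h | h | h
            · exact absurd h (hiff1 k)
            · exact absurd h (hiff2 k)
            · exact ((hiff3 k).mp h).1
            · obtain ⟨-, -, hb2⟩ := (hiff4 k).mp h; linarith
end
end
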